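/- arXiv:0910.0905 — 3 statements merged into one kernel-verified Lean document; each statement's English description precedes it below -/
import Mathlib

section
/- Let n ≥ 1 and let π be a B_n-partition consisting of a zero-block of half-size i₀ (i₀ = 0 allowed) and k ≥ 1 block pairs of sizes i₁, i₂, …, i_k listed in any order. Then the number N^B(π) of B_n-partitions that intersect π minimally is given by the convergent series N^B(π) = ( (∏_{α=1}^k i_α!) / √e ) · Σ_{j≥0} (1/(2j)!!) ∏_{α=1}^k C(2(i₀+j)+1, i_α), where C(m, i) denotes the binomial coefficient (equal to 0 when i > m). -/
open scoped BigOperators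

/-- The ground set `[±n] = {±1, …, ±n}`. -/
noncomputable def pmSet (n : ℕ) : Finset ℤ := (Finset.Icc (-(n : ℤ)) n).erase 0

/-- The block `-B` obtained by negating all elements of `B`. -/
def negBlock (B : Finset ℤ) : Finset ℤ := B.image (fun x => -x)

/-- `π` is a set partition of `[±n]` of type `Bₙ`. -/
def IsBnPartition (n : ℕ) (π : Finset (Finset ℤ)) : Prop :=
  (∀ B ∈ π, B ≠ ∅) ∧ (∀ B ∈ π, B ⊆ pmSet n) ∧
  (∀ x ∈ pmSet n, ∃! B, B ∈ π ∧ x ∈ B) ∧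
  (∀ B ∈ π, negBlock B ∈ π) ∧
  (π.filter (fun B => negBlock B = B)).card ≤ 1

/-- The minimal `Bₙ`-partition `0̂ᴮ`, whose blocks are singletons. -/
noncomputable def botB (n : ℕ) : Finset (Finset ℤ) := (pmSet n).image (fun x => ({x} : Finset ℤ))

/-- Common refinement (meet) of two partitions: all nonempty pairwise intersections. -/
def meetB (π π' : Finset (Finset ℤ)) : Finset (Finset ℤ) :=
  ((π ×ˢ π').image (fun p => p.1 ∩ p.2)).filter (fun B => B ≠ ∅)

/-- `π` and `π'` intersect minimally. -/
def MinInt (n : ℕ) (π π' : Finset (Finset ℤ)) : Prop := meetB π π' = botB n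

/-- Common refinement of a family of partitions of `[±n]`. -/
noncomputable def meetFamily (n : ℕ) {r : ℕ} (πs : Fin r → Finset (Finset ℤ)) : Finset (Finset ℤ) :=
  (List.ofFn πs).foldl meetB {pmSet n}

/-- The family `πs` is minimally intersecting. -/
def MinIntFam (n : ℕ) {r : ℕ} (πs : Fin r → Finset (Finset ℤ)) : Prop :=
  meetFamily n πs = botB n

/-- `π` has a zero-block of half-size `i₀` (with `i₀ = 0` meaning no zero-block). -/
def zeroBlockHalfSize (π : Finset (Finset ℤ)) (i₀ : ℕ) : Prop :=
  ((π.filter (fun B => negBlock B = B)).sum Finset.card) = 2 * i₀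

/-- The block pairs of `π` have sizes `i 0, …, i (k-1)`, listed in any order:
the multiset of sizes of non-zero-blocks is the double of the multiset of the `i α`. -/
def blockPairSizes (π : Finset (Finset ℤ)) {k : ℕ} (i : Fin k → ℕ) : Prop :=
  ((π.filter (fun B => negBlock B ≠ B)).val.map Finset.card)
    = ((List.ofFn i : List ℕ) : Multiset ℕ) + ((List.ofFn i : List ℕ) : Multiset ℕ)

/-- `π` has exactly `l` block pairs. -/
def numBlockPairs (π : Finset (Finset ℤ)) (l : ℕ) : Prop :=
  (π.filter (fun B => negBlock B ≠ B)).card = 2 * l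

/-- `π` has no zero-block. -/
def NoZeroBlock (π : Finset (Finset ℤ)) : Prop := ∀ B ∈ π, negBlock B ≠ B

/-- Falling factorial `(x)ₙ = x (x-1) ⋯ (x-n+1)` of a real number. -/
noncomputable def ffall (x : ℝ) (n : ℕ) : ℝ := ∏ i ∈ Finset.range n, (x - i)



namespace BnAux
open Finset

lemma mem_negBlock {B : Finset ℤ} {x : ℤ} : x ∈ negBlock B ↔ -x ∈ B := by
  unfold negBlock
  simp only [Finset.mem_image]
  constructor
  · rintro ⟨a, ha, rfl⟩; simpa using ha
  · intro h; exact ⟨-x, h, neg_neg x⟩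

lemma negBlock_negBlock (B : Finset ℤ) : negBlock (negBlock B) = B := by
  ext x; simp [mem_negBlock]

lemma negBlock_inj : Function.Injective negBlock := fun B C h => by
  rw [← negBlock_negBlock B, h, negBlock_negBlock]

lemma card_negBlock (B : Finset ℤ) : (negBlock B).card = B.card :=
  Finset.card_image_of_injective _ neg_injective

lemma mem_pmSet {n : ℕ} {x : ℤ} : x ∈ pmSet n ↔ x ≠ 0 ∧ -(n:ℤ) ≤ x ∧ x ≤ n := by
  simp [pmSet, Finset.mem_erase, Finset.mem_Icc, and_assoc]

lemma pmSet_neg_mem {n : ℕ} {x : ℤ} (h : x ∈ pmSet n) : -x ∈ pmSet n := by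
  rw [mem_pmSet] at h ⊢; omega

lemma card_pmSet (n : ℕ) : (pmSet n).card = 2*n := by
  unfold pmSet
  rw [Finset.card_erase_of_mem (by simp [Finset.mem_Icc]), Int.card_Icc]
  omega

lemma sym_card {W : Finset ℤ} (hsym : ∀ x ∈ W, -x ∈ W) (h0 : (0:ℤ) ∉ W) :
    W.card = 2 * (W.filter (fun x => 0 < x)).card := by
  classical
  have h1 : W.filter (fun x => ¬ 0 < x) = (W.filter (fun x => 0 < x)).image (fun x => -x) := by
    ext x
    simp only [mem_filter, mem_image]
    constructor
    · rintro ⟨hxW, hx⟩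
      refine ⟨-x, ⟨hsym x hxW, ?_⟩, neg_neg x⟩
      have : x ≠ 0 := fun h => h0 (h ▸ hxW)
      omega
    · rintro ⟨y, ⟨hyW, hy⟩, rfl⟩
      exact ⟨hsym y hyW, by omega⟩
  have h2 := Finset.card_filter_add_card_filter_not (s := W) (p := fun x => 0 < x)
  have h3 : ((W.filter (fun x => 0 < x)).image (fun x => -x)).card
      = (W.filter (fun x => 0 < x)).card := card_image_of_injective _ neg_injective
  rw [h1, h3] at h2
  omega

lemma exists_transversal : ∀ (P : Finset (Finset ℤ)), (∀ B ∈ P, negBlock B ∈ P) → (∀ B ∈ P, negBlock B ≠ B) →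
    ∃ R ⊆ P, R.image negBlock = P \ R := by
  intro P
  induction P using Finset.strongInductionOn with
  | _ P ih =>
    intro hcl hfp
    rcases P.eq_empty_or_nonempty with rfl | ⟨B₀, hB₀⟩
    · exact ⟨∅, by simp, by simp⟩
    · have hnB₀ : negBlock B₀ ∈ P := hcl B₀ hB₀
      have hne : negBlock B₀ ≠ B₀ := hfp B₀ hB₀
      set t : Finset (Finset ℤ) := {B₀, negBlock B₀} with ht
      have htP : t ⊆ P := by
        intro C hC
        simp only [ht, mem_insert, mem_singleton] at hC
        rcases hC with rfl | rfl <;> assumption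
      have hss : P \ t ⊂ P := Finset.sdiff_ssubset htP ⟨B₀, by simp [ht]⟩
      have hcl' : ∀ B ∈ P \ t, negBlock B ∈ P \ t := by
        intro B hB
        rw [mem_sdiff] at hB ⊢
        refine ⟨hcl B hB.1, ?_⟩
        simp only [ht, mem_insert, mem_singleton] at hB ⊢
        push_neg at hB ⊢
        constructor
        · intro h; exact hB.2.2 (by rw [← negBlock_negBlock B, h])
        · intro h; exact hB.2.1 (negBlock_inj h)
      have hfp' : ∀ B ∈ P \ t, negBlock B ≠ B := fun B hB => hfp B (mem_sdiff.1 hB).1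
      obtain ⟨R', hR'P, hR'img⟩ := ih (P \ t) hss hcl' hfp'
      refine ⟨insert B₀ R', ?_, ?_⟩
      · intro C hC
        rcases mem_insert.1 hC with rfl | hC
        · exact hB₀
        · exact (mem_sdiff.1 (hR'P hC)).1
      · have hB₀R' : B₀ ∉ R' := fun h => by
          have := mem_sdiff.1 (hR'P h)
          simp [ht] at this
        have hnB₀R' : negBlock B₀ ∉ R' := fun h => by
          have := mem_sdiff.1 (hR'P h)
          simp [ht] at this
        have hnB₀img : negBlock B₀ ∉ R'.image negBlock := by
          rw [hR'img]
          intro h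
          have := mem_sdiff.1 h
          simp [ht] at this
        rw [Finset.image_insert]
        ext C
        constructor
        · intro hC
          rcases mem_insert.1 hC with rfl | hC
          · rw [mem_sdiff]
            refine ⟨hnB₀, ?_⟩
            intro h
            rcases mem_insert.1 h with h | h
            · exact hne h
            · exact hnB₀R' h
          · have h2 : C ∈ (P \ t) \ R' := by rw [← hR'img]; exact hC
            rw [mem_sdiff, mem_sdiff] at h2
            rw [mem_sdiff]
            refine ⟨h2.1.1, ?_⟩
            intro h
            rcases mem_insert.1 h with rfl | h
            · have := h2.1.2
              simp [ht] at this
            · exact h2.2 h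
        · intro hC
          rw [mem_sdiff] at hC
          obtain ⟨hCP, hCni⟩ := hC
          have hCB₀ : C ≠ B₀ := fun h => hCni (h ▸ mem_insert_self _ _)
          have hCR' : C ∉ R' := fun h => hCni (mem_insert_of_mem h)
          by_cases hCn : C = negBlock B₀
          · exact hCn ▸ mem_insert_self _ _
          · have h2 : C ∈ (P \ t) \ R' := by
              rw [mem_sdiff, mem_sdiff]
              refine ⟨⟨hCP, ?_⟩, hCR'⟩
              simp [ht, hCB₀, hCn]
            rw [← hR'img] at h2
            exact mem_insert_of_mem h2


open Finset

lemma block_eq_of_mem {n : ℕ} {π : Finset (Finset ℤ)} (hπ : IsBnPartition n π)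
    {B B' : Finset ℤ} {x : ℤ} (hB : B ∈ π) (hB' : B' ∈ π) (hx : x ∈ B) (hx' : x ∈ B') :
    B = B' := by
  have hxG : x ∈ pmSet n := hπ.2.1 B hB hx
  obtain ⟨C, _, hu⟩ := hπ.2.2.1 x hxG
  exact (hu B ⟨hB, hx⟩).trans (hu B' ⟨hB', hx'⟩).symm

lemma exists_block {n : ℕ} {π : Finset (Finset ℤ)} (hπ : IsBnPartition n π)
    {x : ℤ} (hx : x ∈ pmSet n) : ∃ B ∈ π, x ∈ B := by
  obtain ⟨B, hB, _⟩ := hπ.2.2.1 x hx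
  exact ⟨B, hB.1, hB.2⟩

lemma mem_botB {n : ℕ} {C : Finset ℤ} : C ∈ botB n ↔ ∃ x ∈ pmSet n, C = {x} := by
  simp [botB, eq_comm]

lemma minInt_iff {n : ℕ} {π π' : Finset (Finset ℤ)} (hπ : IsBnPartition n π)
    (hπ' : IsBnPartition n π') :
    MinInt n π π' ↔ ∀ B ∈ π, ∀ B' ∈ π', (B ∩ B').card ≤ 1 := by
  constructor
  · intro h B hB B' hB'
    by_cases hne : B ∩ B' = ∅
    · simp [hne]
    · have hmem : B ∩ B' ∈ meetB π π' := by
        unfold meetB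
        rw [Finset.mem_filter]
        exact ⟨Finset.mem_image.2 ⟨(B, B'), Finset.mem_product.2 ⟨hB, hB'⟩, rfl⟩, hne⟩
      unfold MinInt at h
      rw [h, mem_botB] at hmem
      obtain ⟨x, _, hx⟩ := hmem
      simp [hx]
  · intro h
    unfold MinInt
    ext C
    rw [mem_botB]
    unfold meetB
    rw [Finset.mem_filter, Finset.mem_image]
    constructor
    · rintro ⟨⟨⟨B, B'⟩, hBB', rfl⟩, hne⟩
      rw [Finset.mem_product] at hBB'
      have hle := h _ hBB'.1 _ hBB'.2
      have h1 : (B ∩ B').card = 1 :=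
        le_antisymm hle (Finset.card_pos.2 (Finset.nonempty_iff_ne_empty.2 hne))
      obtain ⟨x, hx⟩ := Finset.card_eq_one.1 h1
      refine ⟨x, ?_, hx⟩
      have hxB : x ∈ B := (Finset.mem_inter.1 (hx ▸ Finset.mem_singleton_self x)).1
      exact hπ.2.1 _ hBB'.1 hxB
    · rintro ⟨x, hx, rfl⟩
      obtain ⟨B, hB, hxB⟩ := exists_block hπ hx
      obtain ⟨B', hB', hxB'⟩ := exists_block hπ' hx
      have hle := h _ hB _ hB'
      have hxm : x ∈ B ∩ B' := Finset.mem_inter.2 ⟨hxB, hxB'⟩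
      have heq : B ∩ B' = {x} := by
        apply Finset.eq_singleton_iff_unique_mem.2 ⟨hxm, ?_⟩
        intro y hy
        exact Finset.card_le_one.1 hle y hy x hxm
      refine ⟨⟨(B, B'), Finset.mem_product.2 ⟨hB, hB'⟩, heq⟩, by simp⟩

lemma inter_selfneg_empty {B C : Finset ℤ} (hB : negBlock B = B) (hC : negBlock C = C)
    (h0 : (0:ℤ) ∉ B) (hcard : (B ∩ C).card ≤ 1) : B ∩ C = ∅ := by
  by_contra h
  obtain ⟨z, hz⟩ := Finset.nonempty_iff_ne_empty.2 h
  rw [Finset.mem_inter] at hz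
  have hzB : -z ∈ B := by rw [← hB, mem_negBlock, neg_neg]; exact hz.1
  have hzC : -z ∈ C := by rw [← hC, mem_negBlock, neg_neg]; exact hz.2
  have hz0 : z ≠ 0 := fun hzz => h0 (hzz ▸ hz.1)
  have hlt : 1 < (B ∩ C).card := Finset.one_lt_card.2
    ⟨z, Finset.mem_inter.2 hz, -z, Finset.mem_inter.2 ⟨hzB, hzC⟩, by omega⟩
  omega

lemma zero_block_spec {n i₀ : ℕ} {π : Finset (Finset ℤ)} (hπ : IsBnPartition n π)
    (hz : zeroBlockHalfSize π i₀) :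
    ∃ Z : Finset ℤ, Z ⊆ pmSet n ∧ Z.card = 2*i₀ ∧ negBlock Z = Z ∧
      (∀ B ∈ π, negBlock B = B → B = Z) ∧ (∀ B ∈ π, negBlock B ≠ B → B ∩ Z = ∅) ∧
      (∀ x ∈ pmSet n, x ∉ Z → ∃ B ∈ π, negBlock B ≠ B ∧ x ∈ B) ∧ (Z = ∅ ∨ Z ∈ π) := by
  classical
  obtain ⟨Z₀, hsub⟩ := Finset.card_le_one_iff_subset_singleton.1 hπ.2.2.2.2
  rcases Finset.subset_singleton_iff.1 hsub with hemp | hsing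
  · refine ⟨∅, by simp, ?_, by simp [negBlock], ?_, by simp, ?_, Or.inl rfl⟩
    · unfold zeroBlockHalfSize at hz
      rw [hemp] at hz
      simp at hz
      simp [hz]
    · intro B hB hBneg
      have : B ∈ π.filter (fun B => negBlock B = B) := Finset.mem_filter.2 ⟨hB, hBneg⟩
      rw [hemp] at this
      simp at this
    · intro x hx _
      obtain ⟨B, hB, hxB⟩ := exists_block hπ hx
      refine ⟨B, hB, ?_, hxB⟩
      intro hBneg
      have : B ∈ π.filter (fun B => negBlock B = B) := Finset.mem_filter.2 ⟨hB, hBneg⟩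
      rw [hemp] at this
      simp at this
  · have hZ₀mem : Z₀ ∈ π.filter (fun B => negBlock B = B) := by rw [hsing]; simp
    rw [Finset.mem_filter] at hZ₀mem
    have hselfneg : ∀ B ∈ π, negBlock B = B → B = Z₀ := by
      intro B hB hBneg
      have : B ∈ π.filter (fun B => negBlock B = B) := Finset.mem_filter.2 ⟨hB, hBneg⟩
      rw [hsing] at this
      simpa using this
    refine ⟨Z₀, hπ.2.1 _ hZ₀mem.1, ?_, hZ₀mem.2, hselfneg, ?_, ?_, Or.inr hZ₀mem.1⟩
    · unfold zeroBlockHalfSize at hz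
      rw [hsing] at hz
      simpa using hz
    · intro B hB hBneg
      rw [Finset.eq_empty_iff_forall_notMem]
      intro x hx
      rw [Finset.mem_inter] at hx
      have hBZ : B = Z₀ := block_eq_of_mem hπ hB hZ₀mem.1 hx.1 hx.2
      exact hBneg (by rw [hBZ]; exact hZ₀mem.2)
    · intro x hx hxZ
      obtain ⟨B, hB, hxB⟩ := exists_block hπ hx
      refine ⟨B, hB, ?_, hxB⟩
      intro hBneg
      exact hxZ ((hselfneg B hB hBneg) ▸ hxB)

lemma prod_transfer {k : ℕ} {i : Fin k → ℕ} {P R : Finset (Finset ℤ)} (hR : R ⊆ P)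
    (himg : R.image negBlock = P \ R)
    (hbp : P.val.map Finset.card
      = ((List.ofFn i : List ℕ) : Multiset ℕ) + ((List.ofFn i : List ℕ) : Multiset ℕ))
    (F : ℕ → ℕ) :
    ∏ B ∈ R, F B.card = ∏ α : Fin k, F (i α) := by
  have hle : R.val ≤ P.val := Finset.val_le_iff.2 hR
  have hPval : P.val = R.val + (P \ R).val := by
    rw [Finset.sdiff_val]
    exact (add_tsub_cancel_of_le hle).symm
  have himgval : (P \ R).val.map Finset.card = R.val.map Finset.card := by
    rw [← himg, Finset.image_val_of_injOn (Set.injOn_of_injective negBlock_inj)]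
    rw [Multiset.map_map]
    exact Multiset.map_congr rfl (fun B _ => card_negBlock B)
  have hval : R.val.map Finset.card = ((List.ofFn i : List ℕ) : Multiset ℕ) := by
    have h2 : R.val.map Finset.card + R.val.map Finset.card
        = ((List.ofFn i : List ℕ) : Multiset ℕ) + ((List.ofFn i : List ℕ) : Multiset ℕ) := by
      calc R.val.map Finset.card + R.val.map Finset.card
          = R.val.map Finset.card + (P \ R).val.map Finset.card := by rw [himgval]
        _ = (R.val + (P \ R).val).map Finset.card := (Multiset.map_add _ _ _).symm
        _ = P.val.map Finset.card := by rw [← hPval]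
        _ = _ := hbp
    ext x
    have := congrArg (Multiset.count x) h2
    simp only [Multiset.count_add] at this
    omega
  calc ∏ B ∈ R, F B.card = ((R.val.map Finset.card).map F).prod := by
        rw [Multiset.map_map]; rfl
    _ = (((List.ofFn i : List ℕ) : Multiset ℕ).map F).prod := by rw [hval]
    _ = ∏ α : Fin k, F (i α) := by
        rw [Multiset.map_coe, Multiset.prod_coe, List.map_ofFn, List.prod_ofFn]
        rfl

end BnAux

def OddInjSet (T : Finset (Finset ℤ)) (W : Finset ℤ) : Set (Finset ℤ → ℤ) :=
  {g | (∀ B, B ∉ T → g B = 0) ∧ (∀ B ∈ T, g B ∈ W) ∧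
       (∀ B ∈ T, g (negBlock B) = - g B) ∧ Set.InjOn g ↑T}

namespace BnAux2
open Finset BnAux

lemma oddInj_card (T : Finset (Finset ℤ)) (W : Finset ℤ)
    (hcl : ∀ B ∈ T, negBlock B ∈ T) (hfp : ∀ B ∈ T, negBlock B ≠ B)
    (hWsym : ∀ x ∈ W, -x ∈ W) (hW0 : (0:ℤ) ∉ W) :
    ∃ p, T.card = 2*p ∧
      Nat.card (OddInjSet T W)
        = 2^p * Nat.descFactorial ((W.filter (fun x => 0 < x)).card) p ∧
      Finite (OddInjSet T W) := by
  classical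
  obtain ⟨RT, hRT, himg⟩ := exists_transversal T hcl hfp
  set Wp := W.filter (fun x => 0 < x) with hWp
  have hWpmem : ∀ y : ℤ, y ∈ Wp → 0 < y ∧ y ∈ W := by
    intro y hy; rw [hWp, Finset.mem_filter] at hy; exact ⟨hy.2, hy.1⟩
  have fact1 : ∀ B ∈ RT, negBlock B ∉ RT := by
    intro B hB
    have : negBlock B ∈ T \ RT := himg ▸ Finset.mem_image_of_mem _ hB
    exact (Finset.mem_sdiff.1 this).2
  have fact2 : ∀ B ∈ T, B ∉ RT → negBlock B ∈ RT := by
    intro B hB hBR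
    have : B ∈ T \ RT := Finset.mem_sdiff.2 ⟨hB, hBR⟩
    rw [← himg] at this
    obtain ⟨B', hB', hBB'⟩ := Finset.mem_image.1 this
    rw [← hBB', negBlock_negBlock]
    exact hB'
  have fact3 : T.card = 2 * RT.card := by
    have h1 : (T \ RT).card + RT.card = T.card := Finset.card_sdiff_add_card_eq_card hRT
    have h2 : (T \ RT).card = RT.card := by
      rw [← himg, Finset.card_image_of_injective _ negBlock_inj]
    omega
  -- abbreviations
  have hposWp : ∀ y : ↥Wp, 0 < (y : ℤ) := fun y => (hWpmem _ y.2).1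
  have hmemWp : ∀ y : ↥Wp, (y : ℤ) ∈ W := fun y => (hWpmem _ y.2).2
  set uVal : ((↥RT ↪ ↥Wp) × (↥RT → Bool)) → ↥RT → ℤ :=
    fun p C => if p.2 C then ((p.1 C : ℤ)) else -(p.1 C : ℤ) with huVal
  set bk : ((↥RT ↪ ↥Wp) × (↥RT → Bool)) → Finset ℤ → ℤ :=
    fun p B => if h : B ∈ RT then uVal p ⟨B, h⟩
      else if h : negBlock B ∈ RT then -(uVal p ⟨negBlock B, h⟩) else 0 with hbk
  have hbk1 : ∀ p B (h : B ∈ RT), bk p B = uVal p ⟨B, h⟩ := by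
    intro p B h; simp only [hbk]; rw [dif_pos h]
  have hbk2 : ∀ p B (hn : B ∉ RT) (h : negBlock B ∈ RT),
      bk p B = -(uVal p ⟨negBlock B, h⟩) := by
    intro p B hn h; simp only [hbk]; rw [dif_neg hn, dif_pos h]
  have hbk3 : ∀ p B, B ∉ RT → negBlock B ∉ RT → bk p B = 0 := by
    intro p B h1 h2; simp only [hbk]; rw [dif_neg h1, dif_neg h2]
  have huW : ∀ p C, uVal p C ∈ W := by
    intro p C; simp only [huVal]
    by_cases hc : p.2 C = true
    · rw [if_pos hc]; exact hmemWp _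
    · rw [if_neg hc]; exact hWsym _ (hmemWp _)
  have huabs : ∀ p C, |uVal p C| = (p.1 C : ℤ) := by
    intro p C; simp only [huVal]
    by_cases hc : p.2 C = true
    · rw [if_pos hc]; exact abs_of_pos (hposWp _)
    · rw [if_neg hc]; rw [abs_neg]; exact abs_of_pos (hposWp _)
  have hune : ∀ p C, uVal p C ≠ 0 := by
    intro p C h
    have h1 := huabs p C
    have h2 := hposWp (p.1 C)
    rw [h] at h1
    simp at h1
    omega
  have huinj : ∀ p C C', uVal p C = uVal p C' → C = C' := by
    intro p C C' h
    have h1 : (p.1 C : ℤ) = (p.1 C' : ℤ) := by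
      rw [← huabs p C, ← huabs p C', h]
    exact p.1.injective (Subtype.coe_injective h1)
  have hunegne : ∀ p C C', uVal p C ≠ -uVal p C' := by
    intro p C C' h
    have h1 : (p.1 C : ℤ) = (p.1 C' : ℤ) := by
      rw [← huabs p C, ← huabs p C', h, abs_neg]
    have hCC' : C = C' := p.1.injective (Subtype.coe_injective h1)
    subst hCC'
    have := hune p C
    omega
  have hbkmem : ∀ p, bk p ∈ OddInjSet T W := by
    intro p
    refine ⟨?_, ?_, ?_, ?_⟩
    · intro B hBT
      have h1 : B ∉ RT := fun h => hBT (hRT h)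
      have h2 : negBlock B ∉ RT := by
        intro h
        exact hBT (by rw [← negBlock_negBlock B]; exact hcl _ (hRT h))
      exact hbk3 p B h1 h2
    · intro B hBT
      by_cases h1 : B ∈ RT
      · rw [hbk1 p B h1]; exact huW _ _
      · rw [hbk2 p B h1 (fact2 B hBT h1)]; exact hWsym _ (huW _ _)
    · intro B hBT
      by_cases h1 : B ∈ RT
      · have h2 : negBlock B ∉ RT := fact1 B h1
        have h3 : negBlock (negBlock B) ∈ RT := by rw [negBlock_negBlock]; exact h1
        rw [hbk2 p (negBlock B) h2 h3, hbk1 p B h1]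
        have : (⟨negBlock (negBlock B), h3⟩ : ↥RT) = ⟨B, h1⟩ :=
          Subtype.ext (negBlock_negBlock B)
        rw [this]
      · have h2 := fact2 B hBT h1
        rw [hbk1 p (negBlock B) h2, hbk2 p B h1 h2, neg_neg]
    · intro B hB B' hB' h
      rw [Finset.mem_coe] at hB hB'
      by_cases h1 : B ∈ RT <;> by_cases h1' : B' ∈ RT
      · rw [hbk1 p B h1, hbk1 p B' h1'] at h
        exact congrArg Subtype.val (huinj p _ _ h)
      · rw [hbk1 p B h1, hbk2 p B' h1' (fact2 B' hB' h1')] at h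
        exact absurd h (hunegne p _ _)
      · rw [hbk2 p B h1 (fact2 B hB h1), hbk1 p B' h1'] at h
        exact absurd h.symm (hunegne p _ _)
      · rw [hbk2 p B h1 (fact2 B hB h1), hbk2 p B' h1' (fact2 B' hB' h1')] at h
        rw [neg_inj] at h
        have := congrArg Subtype.val (huinj p _ _ h)
        exact negBlock_inj this
  -- the equivalence
  have equiv : Nonempty ((OddInjSet T W) ≃ ((↥RT ↪ ↥Wp) × (↥RT → Bool))) := by
    constructor
    refine
      { toFun := fun g => ⟨⟨fun B => ⟨|g.1 B.1|, ?_⟩, ?_⟩, fun B => decide (0 < g.1 B.1)⟩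
        invFun := fun p => ⟨bk p, hbkmem p⟩
        left_inv := ?_
        right_inv := ?_ }
    · -- |g B| ∈ Wp
      obtain ⟨g, hsupp, hmapsto, hodd, hinj⟩ := g
      obtain ⟨B, hB⟩ := B
      have hBT : B ∈ T := hRT hB
      have hgW : g B ∈ W := hmapsto B hBT
      have hg0 : g B ≠ 0 := fun h => hW0 (h ▸ hgW)
      rw [hWp, Finset.mem_filter]
      rcases lt_or_gt_of_ne hg0 with h | h
      · rw [abs_of_neg h]; exact ⟨hWsym _ hgW, by omega⟩
      · rw [abs_of_pos h]; exact ⟨hgW, h⟩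
    · -- injectivity of B ↦ |g B|
      obtain ⟨g, hsupp, hmapsto, hodd, hinj⟩ := g
      rintro ⟨B, hB⟩ ⟨B', hB'⟩ hBB'
      simp only [Subtype.mk.injEq] at hBB' ⊢
      have h1 : g B = g B' ∨ g B = - g B' := by
        rcases abs_eq_abs.1 hBB' with h | h
        · exact Or.inl (by omega)
        · exact Or.inr (by omega)
      rcases h1 with h | h
      · exact hinj (hRT hB) (hRT hB') h
      · rw [← hodd B' (hRT hB')] at h
        have hBn : B = negBlock B' := hinj (hRT hB) (hcl B' (hRT hB')) h
        exact absurd (hBn ▸ hB) (fact1 B' hB')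
    · -- left inverse
      rintro ⟨g, hsupp, hmapsto, hodd, hinj⟩
      apply Subtype.ext
      funext B
      show bk _ B = g B
      by_cases h1 : B ∈ RT
      · rw [hbk1 _ B h1]
        simp only [huVal, Function.Embedding.coeFn_mk]
        have hg0 : g B ≠ 0 := fun h => hW0 (h ▸ hmapsto B (hRT h1))
        by_cases hc : 0 < g B
        · rw [if_pos (by simpa using hc)]
          exact abs_of_pos hc
        · rw [if_neg (by simpa using hc)]
          rw [abs_of_neg (by omega)]
          omega
      · by_cases h2 : negBlock B ∈ RT
        · rw [hbk2 _ B h1 h2]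
          simp only [huVal, Function.Embedding.coeFn_mk]
          have hBT : negBlock B ∈ T := hRT h2
          have hoddB := hodd (negBlock B) hBT
          rw [negBlock_negBlock] at hoddB
          have hg0 : g (negBlock B) ≠ 0 := fun h => hW0 (h ▸ hmapsto _ hBT)
          by_cases hc : 0 < g (negBlock B)
          · rw [if_pos (by simpa using hc)]
            rw [abs_of_pos hc]
            omega
          · rw [if_neg (by simpa using hc)]
            rw [abs_of_neg (by omega)]
            omega
        · rw [hbk3 _ B h1 h2]
          have hBT : B ∉ T := fun hB => h2 (fact2 B hB h1)
          rw [hsupp B hBT]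
    · -- right inverse
      intro p
      have hfst : ∀ C : ↥RT, bk p C.1 = uVal p C := by
        intro C
        rw [hbk1 p C.1 C.2]
      apply Prod.ext
      · apply DFunLike.ext
        intro C
        apply Subtype.ext
        show |bk p C.1| = (p.1 C : ℤ)
        rw [hfst C, huabs]
      · funext C
        show decide (0 < bk p C.1) = p.2 C
        rw [hfst C]
        have hp := hposWp (p.1 C)
        by_cases hc : p.2 C = true
        · have hu : uVal p C = (p.1 C : ℤ) := by simp only [huVal]; rw [if_pos hc]
          rw [hu, hc]
          simpa using hp
        · rw [Bool.not_eq_true] at hc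
          have hu : uVal p C = -(p.1 C : ℤ) := by
            simp only [huVal]; rw [if_neg (by simp [hc])]
          rw [hu, hc]
          simp only [decide_eq_false_iff_not, not_lt]
          omega
  obtain ⟨e⟩ := equiv
  have hfin : Finite (OddInjSet T W) := Finite.of_equiv _ e.symm
  refine ⟨RT.card, fact3, ?_, hfin⟩
  rw [Nat.card_congr e, Nat.card_eq_fintype_card]
  rw [Fintype.card_prod, Fintype.card_embedding_eq, Fintype.card_fun]
  simp [Fintype.card_coe, mul_comm]
end BnAux2

def Ffun (n : ℕ) (π : Finset (Finset ℤ)) (Z : Finset ℤ) (φ₀ : ℤ → ℤ) (M : ℕ) : Set (ℤ → ℤ) :=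
  {f | (∀ x, x ∉ pmSet n → f x = 0) ∧ (∀ x, f (-x) = - f x) ∧
       (∀ x ∈ pmSet n, f x ∈ Finset.Icc (-(M:ℤ)) M) ∧ (∀ x ∈ Z, f x = φ₀ x) ∧
       (∀ B ∈ π, Set.InjOn f ↑B)}

namespace BnAux3
open Finset BnAux

lemma prod_side (n : ℕ) (π : Finset (Finset ℤ)) (hπ : IsBnPartition n π)
    (Z : Finset ℤ) (hZsub : Z ⊆ pmSet n) (hZneg : negBlock Z = Z)
    (hZself : ∀ B ∈ π, negBlock B = B → B = Z)
    (hZdisj : ∀ B ∈ π, negBlock B ≠ B → B ∩ Z = ∅)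
    (hZcov : ∀ x ∈ pmSet n, x ∉ Z → ∃ B ∈ π, negBlock B ≠ B ∧ x ∈ B)
    (i₀ M : ℕ) (hM : i₀ ≤ M)
    (φ₀ : ℤ → ℤ) (hφsupp : ∀ x, x ∉ Z → φ₀ x = 0) (hφodd : ∀ x, φ₀ (-x) = - φ₀ x)
    (hφval : ∀ x ∈ Z, φ₀ x ∈ pmSet i₀) (hφinj : Set.InjOn φ₀ ↑Z)
    (R : Finset (Finset ℤ))
    (hRP : R ⊆ π.filter (fun B => negBlock B ≠ B))
    (hRimg : R.image negBlock = π.filter (fun B => negBlock B ≠ B) \ R) :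
    Nat.card (Ffun n π Z φ₀ M) = ∏ B ∈ R, Nat.descFactorial (2*M+1) B.card
      ∧ Finite (Ffun n π Z φ₀ M) := by
  classical
  set V : Finset ℤ := Finset.Icc (-(M:ℤ)) M with hV
  have hVmem : ∀ x : ℤ, x ∈ V ↔ -(M:ℤ) ≤ x ∧ x ≤ M := by
    intro x; rw [hV, Finset.mem_Icc]
  have hVcard : V.card = 2*M+1 := by
    rw [hV, Int.card_Icc]; push_cast; omega
  have d1 : ∀ B ∈ R, B ∈ π ∧ negBlock B ≠ B := by
    intro B hB
    have := hRP hB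
    rw [Finset.mem_filter] at this
    exact this
  have e1 : ∀ B ∈ R, ∀ x, x ∈ B → x ∉ Z := by
    intro B hB x hx hxZ
    have hd := hZdisj B (d1 B hB).1 (d1 B hB).2
    have : x ∈ B ∩ Z := Finset.mem_inter.2 ⟨hx, hxZ⟩
    rw [hd] at this
    exact absurd this (Finset.notMem_empty x)
  have e2 : ∀ B ∈ R, ∀ B' ∈ R, ∀ x, x ∈ B → x ∈ B' → B = B' := by
    intro B hB B' hB' x hx hx'
    exact block_eq_of_mem hπ (d1 B hB).1 (d1 B' hB').1 hx hx'
  have e3 : ∀ B ∈ R, ∀ B' ∈ R, ∀ x, x ∈ B → -x ∈ B' → False := by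
    intro B hB B' hB' x hx hx'
    have hxn : x ∈ negBlock B' := mem_negBlock.2 hx'
    have hnB' : negBlock B' ∈ π := hπ.2.2.2.1 B' (d1 B' hB').1
    have heq : B = negBlock B' := block_eq_of_mem hπ (d1 B hB).1 hnB' hx hxn
    have : negBlock B' ∈ π.filter (fun B => negBlock B ≠ B) \ R := by
      rw [← hRimg]; exact Finset.mem_image_of_mem _ hB'
    rw [← heq] at this
    exact (Finset.mem_sdiff.1 this).2 hB
  have hZsym : ∀ x, x ∈ Z → -x ∈ Z := by
    intro x hx
    rw [← hZneg, mem_negBlock, neg_neg]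
    exact hx
  have e5 : ∀ x ∈ pmSet n, x ∉ Z → (∃ B ∈ R, x ∈ B) ∨ (∃ B ∈ R, -x ∈ B) := by
    intro x hx hxZ
    obtain ⟨C, hC, hCneg, hxC⟩ := hZcov x hx hxZ
    have hCP : C ∈ π.filter (fun B => negBlock B ≠ B) := Finset.mem_filter.2 ⟨hC, hCneg⟩
    by_cases hCR : C ∈ R
    · exact Or.inl ⟨C, hCR, hxC⟩
    · have : C ∈ π.filter (fun B => negBlock B ≠ B) \ R := Finset.mem_sdiff.2 ⟨hCP, hCR⟩
      rw [← hRimg] at this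
      obtain ⟨B, hB, hBC⟩ := Finset.mem_image.1 this
      refine Or.inr ⟨B, hB, ?_⟩
      rw [← hBC, mem_negBlock] at hxC
      simpa using hxC
  -- backward function
  set bkf : (∀ B : ↥R, (↥(B.1) ↪ ↥V)) → ℤ → ℤ := fun g x =>
    φ₀ x + ∑ B ∈ R.attach,
      ((if h : x ∈ B.1 then ((g B ⟨x, h⟩ : ℤ)) else 0)
        - (if h : -x ∈ B.1 then ((g B ⟨-x, h⟩ : ℤ)) else 0)) with hbkf
  have ev0 : ∀ g x, x ∉ pmSet n → bkf g x = 0 := by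
    intro g x hx
    have hxZ : x ∉ Z := fun h => hx (hZsub h)
    have hnxG : -x ∉ pmSet n := fun h => hx (by simpa using pmSet_neg_mem h)
    simp only [hbkf]
    rw [hφsupp x hxZ, zero_add]
    apply Finset.sum_eq_zero
    intro B _
    have h1 : x ∉ B.1 := fun h => hx (hπ.2.1 B.1 (d1 B.1 B.2).1 h)
    have h2 : -x ∉ B.1 := fun h => hnxG (hπ.2.1 B.1 (d1 B.1 B.2).1 h)
    rw [dif_neg h1, dif_neg h2, sub_zero]
  have evZ : ∀ g x, x ∈ Z → bkf g x = φ₀ x := by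
    intro g x hx
    simp only [hbkf]
    rw [add_eq_left]
    apply Finset.sum_eq_zero
    intro B _
    have h1 : x ∉ B.1 := fun h => e1 B.1 B.2 x h hx
    have h2 : -x ∉ B.1 := fun h => e1 B.1 B.2 (-x) h (hZsym x hx)
    rw [dif_neg h1, dif_neg h2, sub_zero]
  have evB : ∀ g (B : ↥R) (x : ℤ) (h : x ∈ B.1), bkf g x = ((g B ⟨x, h⟩ : ℤ)) := by
    intro g B x h
    have hxZ : x ∉ Z := e1 B.1 B.2 x h
    simp only [hbkf]
    rw [hφsupp x hxZ, zero_add]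
    rw [Finset.sum_eq_single_of_mem B (Finset.mem_attach R B) (fun B' _ hB' => ?_)]
    · have h2 : -x ∉ B.1 := fun h2 => e3 B.1 B.2 B.1 B.2 x h h2
      rw [dif_pos h, dif_neg h2, sub_zero]
    · have h1 : x ∉ B'.1 := fun h1 => hB' (Subtype.ext (e2 B'.1 B'.2 B.1 B.2 x h1 h))
      have h2 : -x ∉ B'.1 := fun h2 => e3 B.1 B.2 B'.1 B'.2 x h h2
      rw [dif_neg h1, dif_neg h2, sub_zero]
  have evNB : ∀ g (B : ↥R) (x : ℤ) (h : -x ∈ B.1), bkf g x = -((g B ⟨-x, h⟩ : ℤ)) := by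
    intro g B x h
    have hxZ : x ∉ Z := fun hx => e1 B.1 B.2 (-x) h (hZsym x hx)
    simp only [hbkf]
    rw [hφsupp x hxZ, zero_add]
    rw [Finset.sum_eq_single_of_mem B (Finset.mem_attach R B) (fun B' _ hB' => ?_)]
    · have h1 : x ∉ B.1 := fun h1 => e3 B.1 B.2 B.1 B.2 x h1 h
      rw [dif_neg h1, dif_pos h, zero_sub]
    · have h2 : -x ∉ B'.1 := fun h2 => hB' (Subtype.ext (e2 B'.1 B'.2 B.1 B.2 (-x) h2 h))
      have h1 : x ∉ B'.1 := fun h1 => e3 B'.1 B'.2 B.1 B.2 x h1 h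
      rw [dif_neg h1, dif_neg h2, sub_zero]
  have hbkmem : ∀ g, bkf g ∈ Ffun n π Z φ₀ M := by
    intro g
    have hval : ∀ x ∈ pmSet n, bkf g x ∈ V := by
      intro x hx
      by_cases hxZ : x ∈ Z
      · rw [evZ g x hxZ, hVmem]
        have := hφval x hxZ
        rw [mem_pmSet] at this
        omega
      · rcases e5 x hx hxZ with ⟨B, hB, hxB⟩ | ⟨B, hB, hxB⟩
        · rw [evB g ⟨B, hB⟩ x hxB]
          exact (g ⟨B, hB⟩ ⟨x, hxB⟩).2
        · rw [evNB g ⟨B, hB⟩ x hxB, hVmem]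
          have := (g ⟨B, hB⟩ ⟨-x, hxB⟩).2
          rw [hVmem] at this
          omega
    refine ⟨fun x hx => ev0 g x hx, ?_, hval, fun x hx => evZ g x hx, ?_⟩
    · -- odd
      intro x
      by_cases hxG : x ∈ pmSet n
      · by_cases hxZ : x ∈ Z
        · rw [evZ g x hxZ, evZ g (-x) (hZsym x hxZ), hφodd]
        · rcases e5 x hxG hxZ with ⟨B, hB, hxB⟩ | ⟨B, hB, hxB⟩
          · have h2 : -(-x) ∈ B := by simpa using hxB
            rw [evB g ⟨B, hB⟩ x hxB, evNB g ⟨B, hB⟩ (-x) h2]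
            congr 2
            exact Subtype.ext (by simp)
          · rw [evNB g ⟨B, hB⟩ x hxB, evB g ⟨B, hB⟩ (-x) hxB, neg_neg]
      · have hnxG : -x ∉ pmSet n := fun h => hxG (by simpa using pmSet_neg_mem h)
        rw [ev0 g x hxG, ev0 g (-x) hnxG, neg_zero]
    · -- InjOn on blocks
      intro C hC
      by_cases hCneg : negBlock C = C
      · have hCZ : C = Z := hZself C hC hCneg
        subst hCZ
        intro x hx y hy h
        rw [Finset.mem_coe] at hx hy
        rw [evZ g x hx, evZ g y hy] at h
        exact hφinj hx hy h
      · have hCP : C ∈ π.filter (fun B => negBlock B ≠ B) := Finset.mem_filter.2 ⟨hC, hCneg⟩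
        by_cases hCR : C ∈ R
        · intro x hx y hy h
          rw [Finset.mem_coe] at hx hy
          rw [evB g ⟨C, hCR⟩ x hx, evB g ⟨C, hCR⟩ y hy] at h
          have := (g ⟨C, hCR⟩).injective (Subtype.coe_injective h)
          exact congrArg Subtype.val this
        · have : C ∈ π.filter (fun B => negBlock B ≠ B) \ R := Finset.mem_sdiff.2 ⟨hCP, hCR⟩
          rw [← hRimg] at this
          obtain ⟨B, hB, hBC⟩ := Finset.mem_image.1 this
          intro x hx y hy h
          rw [Finset.mem_coe, ← hBC, mem_negBlock] at hx hy
          rw [evNB g ⟨B, hB⟩ x hx, evNB g ⟨B, hB⟩ y hy, neg_inj] at h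
          have := (g ⟨B, hB⟩).injective (Subtype.coe_injective h)
          have h2 := congrArg Subtype.val this
          simp only at h2
          omega
  -- the equivalence
  have equiv : Nonempty ((Ffun n π Z φ₀ M) ≃ (∀ B : ↥R, (↥(B.1) ↪ ↥V))) := by
    constructor
    refine
      { toFun := fun f B => ⟨fun b => ⟨f.1 b.1, ?_⟩, ?_⟩
        invFun := fun g => ⟨bkf g, hbkmem g⟩
        left_inv := ?_
        right_inv := ?_ }
    · exact f.2.2.2.1 b.1 (hπ.2.1 B.1 (d1 B.1 B.2).1 b.2)
    · intro b b' hbb'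
      simp only [Subtype.mk.injEq] at hbb'
      have := f.2.2.2.2.2 B.1 (d1 B.1 B.2).1 b.2 b'.2 hbb'
      exact Subtype.ext this
    · -- left inverse
      rintro ⟨f, hsupp, hodd, hval, hZval, hinj⟩
      apply Subtype.ext
      funext x
      show bkf _ x = f x
      by_cases hxG : x ∈ pmSet n
      · by_cases hxZ : x ∈ Z
        · rw [evZ _ x hxZ, hZval x hxZ]
        · rcases e5 x hxG hxZ with ⟨B, hB, hxB⟩ | ⟨B, hB, hxB⟩
          · rw [evB _ ⟨B, hB⟩ x hxB]
            rfl
          · rw [evNB _ ⟨B, hB⟩ x hxB]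
            show -(f (-x)) = f x
            rw [hodd x, neg_neg]
      · rw [ev0 _ x hxG, hsupp x hxG]
    · -- right inverse
      intro g
      funext B
      apply DFunLike.ext
      intro b
      apply Subtype.ext
      show bkf g b.1 = (g B b : ℤ)
      rw [evB g B b.1 b.2]
  obtain ⟨e⟩ := equiv
  have hfin : Finite (Ffun n π Z φ₀ M) := Finite.of_equiv _ e.symm
  refine ⟨?_, hfin⟩
  have hper : ∀ B : Finset ℤ, Nat.card (↥B ↪ ↥V) = Nat.descFactorial (2*M+1) B.card := by
    intro B
    rw [Nat.card_eq_fintype_card, Fintype.card_embedding_eq, Fintype.card_coe,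
      Fintype.card_coe, hVcard]
  rw [Nat.card_congr e, Nat.card_pi]
  rw [← Finset.prod_coe_sort R (fun B => Nat.descFactorial (2*M+1) B.card)]
  apply Finset.prod_congr rfl
  intro B _
  exact hper B.1

end BnAux3

noncomputable def Sfin (n : ℕ) (π : Finset (Finset ℤ)) : Finset (Finset (Finset ℤ)) :=
  @Finset.filter _ (fun π' => IsBnPartition n π' ∧ MinInt n π π') (Classical.decPred _)
    ((pmSet n).powerset.powerset)

def freeB (Z : Finset ℤ) (π' : Finset (Finset ℤ)) : Finset (Finset ℤ) :=
  π'.filter (fun B => negBlock B ≠ B ∧ B ∩ Z = ∅)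

namespace BnAux4
open Finset BnAux

lemma mem_Sfin {n : ℕ} {π π' : Finset (Finset ℤ)} :
    π' ∈ Sfin n π ↔ IsBnPartition n π' ∧ MinInt n π π' := by
  letI : DecidablePred (fun π' : Finset (Finset ℤ) => IsBnPartition n π' ∧ MinInt n π π') :=
    Classical.decPred _
  unfold Sfin
  rw [Finset.mem_filter]
  constructor
  · intro h
    exact h.2
  · intro h
    refine ⟨?_, h⟩
    rw [Finset.mem_powerset]
    intro B hB
    rw [Finset.mem_powerset]
    exact h.1.2.1 B hB

lemma mem_freeB {Z : Finset ℤ} {π' : Finset (Finset ℤ)} {B : Finset ℤ} :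
    B ∈ freeB Z π' ↔ B ∈ π' ∧ negBlock B ≠ B ∧ B ∩ Z = ∅ := by
  unfold freeB
  rw [Finset.mem_filter]

lemma sigma_side (n : ℕ) (π : Finset (Finset ℤ)) (hπ : IsBnPartition n π)
    (Z : Finset ℤ) (hZsub : Z ⊆ pmSet n) (hZneg : negBlock Z = Z)
    (hZmem : Z = ∅ ∨ Z ∈ π)
    (i₀ M : ℕ) (hM : i₀ ≤ M)
    (φ₀ : ℤ → ℤ) (hφsupp : ∀ x, x ∉ Z → φ₀ x = 0) (hφodd : ∀ x, φ₀ (-x) = - φ₀ x)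
    (hφval : ∀ x ∈ Z, φ₀ x ∈ pmSet i₀) (hφinj : Set.InjOn φ₀ ↑Z)
    (hφsurj : ∀ v ∈ pmSet i₀, ∃ z ∈ Z, φ₀ z = v) :
    Nonempty ((Ffun n π Z φ₀ M) ≃
      (Σ π' : ↥(Sfin n π), ↥(OddInjSet (freeB Z π'.1)
        ((Finset.Icc (-(M:ℤ)) M) \ (Finset.Icc (-(i₀:ℤ)) i₀))))) := by
  classical
  set W : Finset ℤ := (Finset.Icc (-(M:ℤ)) M) \ (Finset.Icc (-(i₀:ℤ)) i₀) with hW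
  have hWmem : ∀ v : ℤ, v ∈ W ↔ ((-M:ℤ) ≤ v ∧ v ≤ M) ∧ ¬((-i₀:ℤ) ≤ v ∧ v ≤ i₀) := by
    intro v; rw [hW, Finset.mem_sdiff, Finset.mem_Icc, Finset.mem_Icc]
  have hW0 : (0:ℤ) ∉ W := by rw [hWmem]; push_neg; intro; constructor <;> omega
  have hZsym : ∀ x, x ∈ Z → -x ∈ Z := by
    intro x hx; rw [← hZneg, mem_negBlock, neg_neg]; exact hx
  have hZ0 : (0:ℤ) ∉ Z := fun h => by
    have := mem_pmSet.1 (hZsub h); exact this.1 rfl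
  -- the fiber partition of f
  set Phi : (ℤ → ℤ) → Finset (Finset ℤ) := fun f =>
    (pmSet n).image (fun x => (pmSet n).filter (fun y => f y = f x)) with hPhi
  -- the block-value function extracted from f
  set gfn : (ℤ → ℤ) → Finset ℤ → ℤ := fun f B =>
    if h : B.Nonempty then (if B ∈ freeB Z (Phi f) then f (B.min' h) else 0) else 0 with hgfn
  -- the function built from (π', g)
  set bkp : Finset (Finset ℤ) → (Finset ℤ → ℤ) → ℤ → ℤ := fun π' g x =>
    ∑ B ∈ π', if x ∈ B then ((B ∩ Z).sum φ₀ + g B) else 0 with hbkp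
  -- forward facts
  have hPhi_canon : ∀ f, (∀ x, f (-x) = - f x) → ∀ B ∈ Phi f, ∀ x ∈ B,
      B = (pmSet n).filter (fun y => f y = f x) := by
    intro f _ B hB x hx
    simp only [hPhi, Finset.mem_image] at hB
    obtain ⟨x₀, hx₀G, rfl⟩ := hB
    rw [Finset.mem_filter] at hx
    ext y
    rw [Finset.mem_filter, Finset.mem_filter, hx.2]
  have hblock : ∀ (f : ℤ → ℤ), ∀ x ∈ pmSet n,
      x ∈ (pmSet n).filter (fun y => f y = f x) :=
    fun f x hx => Finset.mem_filter.2 ⟨hx, rfl⟩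
  have hnegblock : ∀ (f : ℤ → ℤ), (∀ x, f (-x) = - f x) → ∀ x : ℤ,
      negBlock ((pmSet n).filter (fun y => f y = f x))
        = (pmSet n).filter (fun y => f y = f (-x)) := by
    intro f hodd x
    ext y
    rw [mem_negBlock, Finset.mem_filter, Finset.mem_filter]
    constructor
    · rintro ⟨hyG, hfy⟩
      rw [hodd y] at hfy
      refine ⟨by simpa using pmSet_neg_mem hyG, ?_⟩
      rw [hodd x]
      omega
    · rintro ⟨hyG, hfy⟩
      rw [hodd x] at hfy
      refine ⟨pmSet_neg_mem hyG, ?_⟩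
      rw [hodd y]
      omega
  have hzerofiber : ∀ (f : ℤ → ℤ), (∀ x, f (-x) = - f x) → ∀ C ∈ Phi f,
      negBlock C = C → C = (pmSet n).filter (fun y => f y = 0) := by
    intro f hodd C hC hCneg
    obtain ⟨x, hxG, rfl⟩ := Finset.mem_image.1 hC
    have hx := hblock f x hxG
    rw [← hCneg, hnegblock f hodd x, Finset.mem_filter] at hx
    have h2 : f x = f (-x) := hx.2
    rw [hodd x] at h2
    have hfx0 : f x = 0 := by omega
    ext y
    simp only [Finset.mem_filter, hfx0]
  have hPhi_isBn : ∀ f ∈ Ffun n π Z φ₀ M, IsBnPartition n (Phi f) := by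
    intro f hf
    obtain ⟨hsupp, hodd, hval, hZval, hinj⟩ := hf
    refine ⟨?_, ?_, ?_, ?_, ?_⟩
    · intro B hB
      obtain ⟨x, hxG, rfl⟩ := Finset.mem_image.1 hB
      intro h
      have := hblock f x hxG
      rw [h] at this
      simp at this
    · intro B hB
      obtain ⟨x, hxG, rfl⟩ := Finset.mem_image.1 hB
      exact Finset.filter_subset _ _
    · intro x hx
      refine ⟨(pmSet n).filter (fun y => f y = f x),
        ⟨Finset.mem_image_of_mem _ hx, hblock f x hx⟩, ?_⟩
      rintro C ⟨hC, hxC⟩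
      exact hPhi_canon f hodd C hC x hxC
    · intro B hB
      obtain ⟨x, hxG, rfl⟩ := Finset.mem_image.1 hB
      rw [hnegblock f hodd x]
      exact Finset.mem_image_of_mem _ (pmSet_neg_mem hxG)
    · rw [Finset.card_le_one]
      intro a ha b hb
      rw [Finset.mem_filter] at ha hb
      rw [hzerofiber f hodd a ha.1 ha.2, hzerofiber f hodd b hb.1 hb.2]
  have hPhi_Sfin : ∀ f ∈ Ffun n π Z φ₀ M, Phi f ∈ Sfin n π := by
    intro f hf
    obtain ⟨hsupp, hodd, hval, hZval, hinj⟩ := hf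
    refine mem_Sfin.2 ⟨hPhi_isBn f ⟨hsupp, hodd, hval, hZval, hinj⟩, ?_⟩
    rw [minInt_iff hπ (hPhi_isBn f ⟨hsupp, hodd, hval, hZval, hinj⟩)]
    intro B hB B' hB'
    rw [Finset.card_le_one]
    intro x hx y hy
    rw [Finset.mem_inter] at hx hy
    obtain ⟨x₀, hx₀G, rfl⟩ := Finset.mem_image.1 hB'
    have hfx : f x = f x₀ := (Finset.mem_filter.1 hx.2).2
    have hfy : f y = f x₀ := (Finset.mem_filter.1 hy.2).2
    exact hinj B hB (Finset.mem_coe.2 hx.1) (Finset.mem_coe.2 hy.1) (by rw [hfx, hfy])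
  have hfreePhi_cl : ∀ f ∈ Ffun n π Z φ₀ M, ∀ B ∈ freeB Z (Phi f),
      negBlock B ∈ freeB Z (Phi f) := by
    intro f hf B hB
    obtain ⟨hBP, hBne, hBZ⟩ := mem_freeB.1 hB
    refine mem_freeB.2 ⟨(hPhi_isBn f hf).2.2.2.1 B hBP, ?_, ?_⟩
    · intro h
      rw [negBlock_negBlock] at h
      exact hBne h.symm
    · rw [Finset.eq_empty_iff_forall_notMem]
      intro y hy
      rw [Finset.mem_inter, mem_negBlock] at hy
      have : -y ∈ B ∩ Z := Finset.mem_inter.2 ⟨hy.1, hZsym y hy.2⟩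
      rw [hBZ] at this
      exact absurd this (Finset.notMem_empty _)
  have hgfn_eval : ∀ f ∈ Ffun n π Z φ₀ M, ∀ B ∈ freeB Z (Phi f), ∀ x ∈ B,
      gfn f B = f x := by
    intro f hf B hB x hx
    obtain ⟨hBP, hBne, hBZ⟩ := mem_freeB.1 hB
    have hne : B.Nonempty := ⟨x, hx⟩
    simp only [hgfn]
    rw [dif_pos hne, if_pos hB]
    have hcanon := hPhi_canon f hf.2.1 B hBP x hx
    have hm2 : B.min' hne ∈ (pmSet n).filter (fun y => f y = f x) := by
      rw [← hcanon]
      exact B.min'_mem hne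
    exact (Finset.mem_filter.1 hm2).2
  have hgfn_mem : ∀ f ∈ Ffun n π Z φ₀ M, gfn f ∈ OddInjSet (freeB Z (Phi f)) W := by
    intro f hf
    obtain ⟨hsupp, hodd, hval, hZval, hinj⟩ := hf
    have hf : f ∈ Ffun n π Z φ₀ M := ⟨hsupp, hodd, hval, hZval, hinj⟩
    have hnonempty : ∀ B ∈ freeB Z (Phi f), ∃ x ∈ pmSet n, x ∈ B := by
      intro B hB
      obtain ⟨hBP, hBne, hBZ⟩ := mem_freeB.1 hB
      have h1 : B ≠ ∅ := (hPhi_isBn f hf).1 B hBP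
      obtain ⟨x, hx⟩ := Finset.nonempty_iff_ne_empty.2 h1
      exact ⟨x, (hPhi_isBn f hf).2.1 B hBP hx, hx⟩
    refine ⟨?_, ?_, ?_, ?_⟩
    · intro B hB
      simp only [hgfn]
      by_cases h : B.Nonempty
      · rw [dif_pos h, if_neg hB]
      · rw [dif_neg h]
    · intro B hB
      obtain ⟨x₀, hx₀G, hx₀B⟩ := hnonempty B hB
      obtain ⟨hBP, hBne, hBZ⟩ := mem_freeB.1 hB
      rw [hgfn_eval f hf B hB x₀ hx₀B, hWmem]
      have hb := hval x₀ hx₀G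
      rw [Finset.mem_Icc] at hb
      refine ⟨hb, ?_⟩
      intro hIcc
      by_cases hfx0 : f x₀ = 0
      · -- B would be self-negative
        apply hBne
        have hcanon := hPhi_canon f hodd B hBP x₀ hx₀B
        rw [hcanon, hnegblock f hodd x₀]
        have h1 : f (-x₀) = f x₀ := by rw [hodd x₀, hfx0]; omega
        rw [h1]
      · have hfx : f x₀ ∈ pmSet i₀ := by
          rw [mem_pmSet]
          exact ⟨hfx0, hIcc.1, hIcc.2⟩
        obtain ⟨z, hzZ, hφz⟩ := hφsurj (f x₀) hfx
        have hfz : f z = f x₀ := by rw [hZval z hzZ, hφz]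
        have hzB : z ∈ B := by
          rw [hPhi_canon f hodd B hBP x₀ hx₀B, Finset.mem_filter]
          exact ⟨hZsub hzZ, hfz⟩
        have : z ∈ B ∩ Z := Finset.mem_inter.2 ⟨hzB, hzZ⟩
        rw [hBZ] at this
        exact absurd this (Finset.notMem_empty _)
    · intro B hB
      obtain ⟨x₀, hx₀G, hx₀B⟩ := hnonempty B hB
      have hnB : negBlock B ∈ freeB Z (Phi f) := hfreePhi_cl f hf B hB
      have hx₀nB : -x₀ ∈ negBlock B := mem_negBlock.2 (by simpa using hx₀B)
      rw [hgfn_eval f hf B hB x₀ hx₀B, hgfn_eval f hf (negBlock B) hnB (-x₀) hx₀nB]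
      exact hodd x₀
    · intro B hB B' hB' h
      rw [Finset.mem_coe] at hB hB'
      obtain ⟨x₀, hx₀G, hx₀B⟩ := hnonempty B hB
      obtain ⟨x₁, hx₁G, hx₁B⟩ := hnonempty B' hB'
      rw [hgfn_eval f hf B hB x₀ hx₀B, hgfn_eval f hf B' hB' x₁ hx₁B] at h
      rw [hPhi_canon f hodd B (mem_freeB.1 hB).1 x₀ hx₀B,
        hPhi_canon f hodd B' (mem_freeB.1 hB').1 x₁ hx₁B, h]
  -- backward facts
  have hbk_mem : ∀ π', IsBnPartition n π' → MinInt n π π' →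
      ∀ g ∈ OddInjSet (freeB Z π') W,
      (bkp π' g ∈ Ffun n π Z φ₀ M) ∧
      (∀ B ∈ π', ∀ x ∈ B, (pmSet n).filter (fun y => bkp π' g y = bkp π' g x) = B) ∧
      (∀ B ∈ π', ∀ x ∈ B, bkp π' g x = (B ∩ Z).sum φ₀ + g B) := by
    intro π' hπ' hmin g hg
    obtain ⟨hgsupp, hgW, hgodd, hginj⟩ := hg
    have hc1 : ∀ B ∈ π, ∀ B' ∈ π', (B ∩ B').card ≤ 1 := (minInt_iff hπ hπ').1 hmin
    have hZc : ∀ B' ∈ π', (B' ∩ Z).card ≤ 1 := by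
      intro B' hB'
      rcases hZmem with hZe | hZπ
      · rw [hZe]; simp
      · have := hc1 Z hZπ B' hB'
        rwa [Finset.inter_comm] at this
    have hzsing : ∀ B ∈ π', ∀ z, z ∈ B ∩ Z → B ∩ Z = {z} := by
      intro B hB z hz
      exact Finset.eq_singleton_iff_unique_mem.2
        ⟨hz, fun y hy => Finset.card_le_one.1 (hZc B hB) y hy z hz⟩
    have hev : ∀ B ∈ π', ∀ x ∈ B, bkp π' g x = (B ∩ Z).sum φ₀ + g B := by
      intro B hB x hx
      simp only [hbkp]
      have hzz : ∀ B'' ∈ π', B'' ≠ B →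
          (if x ∈ B'' then (B'' ∩ Z).sum φ₀ + g B'' else 0) = 0 := by
        intro B'' hB'' hne
        rw [if_neg (fun hx'' => hne (block_eq_of_mem hπ' hB'' hB hx'' hx))]
      rw [Finset.sum_eq_single_of_mem B hB hzz, if_pos hx]
    have hev0 : ∀ x, x ∉ pmSet n → bkp π' g x = 0 := by
      intro x hx
      simp only [hbkp]
      apply Finset.sum_eq_zero
      intro B hB
      rw [if_neg (fun hxB => hx (hπ'.2.1 B hB hxB))]
    have hfcl : ∀ B ∈ freeB Z π', negBlock B ∈ freeB Z π' := by
      intro B hB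
      obtain ⟨hBP, hBne, hBZ⟩ := mem_freeB.1 hB
      refine mem_freeB.2 ⟨hπ'.2.2.2.1 B hBP, ?_, ?_⟩
      · intro h
        rw [negBlock_negBlock] at h
        exact hBne h.symm
      · rw [Finset.eq_empty_iff_forall_notMem]
        intro y hy
        rw [Finset.mem_inter, mem_negBlock] at hy
        have : -y ∈ B ∩ Z := Finset.mem_inter.2 ⟨hy.1, hZsym y hy.2⟩
        rw [hBZ] at this
        exact absurd this (Finset.notMem_empty _)
    have hselfZ : ∀ B ∈ π', negBlock B = B → B ∩ Z = ∅ := by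
      intro B hB hBneg
      refine inter_selfneg_empty hBneg hZneg ?_ (hZc B hB)
      intro h0B
      exact (mem_pmSet.1 (hπ'.2.1 B hB h0B)).1 rfl
    have hvalcases : ∀ B ∈ π',
        (negBlock B = B ∧ (B ∩ Z).sum φ₀ + g B = 0)
        ∨ (∃ z ∈ Z, z ∈ B ∧ (B ∩ Z).sum φ₀ + g B = φ₀ z)
        ∨ (B ∈ freeB Z π' ∧ (B ∩ Z).sum φ₀ + g B = g B) := by
      intro B hB
      by_cases hBneg : negBlock B = B
      · left
        have hBZ := hselfZ B hB hBneg
        have hnf : B ∉ freeB Z π' := fun h => (mem_freeB.1 h).2.1 hBneg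
        refine ⟨hBneg, ?_⟩
        rw [hBZ, hgsupp B hnf]
        simp
      · by_cases hBZ : B ∩ Z = ∅
        · right; right
          refine ⟨mem_freeB.2 ⟨hB, hBneg, hBZ⟩, ?_⟩
          rw [hBZ]
          simp
        · right; left
          obtain ⟨z, hz⟩ := Finset.nonempty_iff_ne_empty.2 hBZ
          have hsing := hzsing B hB z hz
          have hnf : B ∉ freeB Z π' := fun h => hBZ (mem_freeB.1 h).2.2
          rw [Finset.mem_inter] at hz
          refine ⟨z, hz.2, hz.1, ?_⟩
          rw [hsing, hgsupp B hnf, Finset.sum_singleton, add_zero]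
    have hφne0 : ∀ z ∈ Z, φ₀ z ≠ 0 := fun z hz => (mem_pmSet.1 (hφval z hz)).1
    have hφIcc : ∀ z ∈ Z, (-i₀:ℤ) ≤ φ₀ z ∧ φ₀ z ≤ i₀ := by
      intro z hz
      have := mem_pmSet.1 (hφval z hz)
      exact ⟨this.2.1, this.2.2⟩
    have hWnotIcc : ∀ v ∈ W, ¬((-i₀:ℤ) ≤ v ∧ v ≤ i₀) := fun v hv => ((hWmem v).1 hv).2
    have hvinj : ∀ B ∈ π', ∀ B' ∈ π',
        (B ∩ Z).sum φ₀ + g B = (B' ∩ Z).sum φ₀ + g B' → B = B' := by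
      intro B hB B' hB' h
      rcases hvalcases B hB with ⟨hn, hv⟩ | ⟨z, hzZ, hzB, hv⟩ | ⟨hfr, hv⟩ <;>
        rcases hvalcases B' hB' with ⟨hn', hv'⟩ | ⟨z', hzZ', hzB', hv'⟩ | ⟨hfr', hv'⟩ <;>
        rw [hv, hv'] at h
      · have h1 : B ∈ π'.filter (fun C => negBlock C = C) := Finset.mem_filter.2 ⟨hB, hn⟩
        have h2 : B' ∈ π'.filter (fun C => negBlock C = C) := Finset.mem_filter.2 ⟨hB', hn'⟩
        exact Finset.card_le_one.1 hπ'.2.2.2.2 _ h1 _ h2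
      · exact absurd h.symm (hφne0 z' hzZ')
      · exact absurd (h.symm ▸ hgW B' hfr') hW0
      · exact absurd h (hφne0 z hzZ)
      · have hzz : z = z' := hφinj (Finset.mem_coe.2 hzZ) (Finset.mem_coe.2 hzZ') h
        exact block_eq_of_mem hπ' hB hB' hzB (hzz ▸ hzB')
      · exact absurd (h ▸ hφIcc z hzZ) (hWnotIcc _ (hgW B' hfr'))
      · exact absurd (h ▸ hgW B hfr) hW0
      · exact absurd (h.symm ▸ hφIcc z' hzZ') (hWnotIcc _ (hgW B hfr))
      · exact hginj (Finset.mem_coe.2 hfr) (Finset.mem_coe.2 hfr') h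
    have hodd' : ∀ x, bkp π' g (-x) = - bkp π' g x := by
      intro x
      by_cases hxG : x ∈ pmSet n
      · obtain ⟨B, hB, hxB⟩ := exists_block hπ' hxG
        have hnB : negBlock B ∈ π' := hπ'.2.2.2.1 B hB
        have hxnB : -x ∈ negBlock B := mem_negBlock.2 (by simpa using hxB)
        rw [hev B hB x hxB, hev (negBlock B) hnB (-x) hxnB]
        have hsum : (negBlock B ∩ Z).sum φ₀ = -((B ∩ Z).sum φ₀) := by
          have h1 : negBlock B ∩ Z = (B ∩ Z).image (fun y => -y) := by
            ext y
            rw [Finset.mem_inter, mem_negBlock, Finset.mem_image]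
            constructor
            · rintro ⟨h1, h2⟩
              exact ⟨-y, Finset.mem_inter.2 ⟨h1, hZsym y h2⟩, neg_neg y⟩
            · rintro ⟨w, hw, rfl⟩
              rw [Finset.mem_inter] at hw
              exact ⟨by simpa using hw.1, hZsym w hw.2⟩
          rw [h1, Finset.sum_image (fun a _ b _ h => by omega)]
          rw [Finset.sum_congr rfl (fun y _ => hφodd y), Finset.sum_neg_distrib]
        have hgneg : g (negBlock B) = - g B := by
          by_cases hBf : B ∈ freeB Z π'
          · exact hgodd B hBf
          · have hnBf : negBlock B ∉ freeB Z π' := by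
              intro h
              have := hfcl _ h
              rw [negBlock_negBlock] at this
              exact hBf this
            rw [hgsupp _ hnBf, hgsupp _ hBf, neg_zero]
        rw [hsum, hgneg]
        ring
      · have hnxG : -x ∉ pmSet n := fun h => hxG (by simpa using pmSet_neg_mem h)
        rw [hev0 x hxG, hev0 (-x) hnxG, neg_zero]
    have hval' : ∀ x ∈ pmSet n, bkp π' g x ∈ Finset.Icc (-(M:ℤ)) M := by
      intro x hxG
      obtain ⟨B, hB, hxB⟩ := exists_block hπ' hxG
      rw [hev B hB x hxB, Finset.mem_Icc]
      rcases hvalcases B hB with ⟨_, hv⟩ | ⟨z, hzZ, _, hv⟩ | ⟨hfr, hv⟩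
      · rw [hv]; omega
      · rw [hv]
        have := hφIcc z hzZ
        omega
      · rw [hv]
        have := (hWmem _).1 (hgW B hfr)
        omega
    have hZval' : ∀ z ∈ Z, bkp π' g z = φ₀ z := by
      intro z hzZ
      have hzG : z ∈ pmSet n := hZsub hzZ
      obtain ⟨B, hB, hzB⟩ := exists_block hπ' hzG
      have hsing := hzsing B hB z (Finset.mem_inter.2 ⟨hzB, hzZ⟩)
      have hnf : B ∉ freeB Z π' := by
        intro h
        have h2 := (mem_freeB.1 h).2.2
        rw [h2] at hsing
        exact absurd hsing.symm (Finset.singleton_ne_empty z)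
      rw [hev B hB z hzB, hsing, Finset.sum_singleton, hgsupp B hnf, add_zero]
    have hinj' : ∀ C ∈ π, Set.InjOn (bkp π' g) ↑C := by
      intro C hC x hx y hy hxy
      rw [Finset.mem_coe] at hx hy
      have hxG : x ∈ pmSet n := hπ.2.1 C hC hx
      have hyG : y ∈ pmSet n := hπ.2.1 C hC hy
      obtain ⟨B, hB, hxB⟩ := exists_block hπ' hxG
      obtain ⟨B', hB', hyB⟩ := exists_block hπ' hyG
      rw [hev B hB x hxB, hev B' hB' y hyB] at hxy
      have hBB' := hvinj B hB B' hB' hxy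
      subst hBB'
      exact Finset.card_le_one.1 (hc1 C hC B hB) x (Finset.mem_inter.2 ⟨hx, hxB⟩)
        y (Finset.mem_inter.2 ⟨hy, hyB⟩)
    have hfiber' : ∀ B ∈ π', ∀ x ∈ B,
        (pmSet n).filter (fun y => bkp π' g y = bkp π' g x) = B := by
      intro B hB x hxB
      ext y
      rw [Finset.mem_filter]
      constructor
      · rintro ⟨hyG, hfy⟩
        obtain ⟨B', hB', hyB⟩ := exists_block hπ' hyG
        rw [hev B' hB' y hyB, hev B hB x hxB] at hfy
        rw [← hvinj B' hB' B hB hfy]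
        exact hyB
      · intro hyB
        refine ⟨hπ'.2.1 B hB hyB, ?_⟩
        rw [hev B hB y hyB, hev B hB x hxB]
    exact ⟨⟨fun x hx => hev0 x hx, hodd', hval', hZval', hinj'⟩, hfiber', hev⟩
  -- roundtrip 2
  have hrt2 : ∀ f ∈ Ffun n π Z φ₀ M, bkp (Phi f) (gfn f) = f := by
    intro f hf
    obtain ⟨hsupp, hodd, hval, hZval, hinj⟩ := hf
    have hf : f ∈ Ffun n π Z φ₀ M := ⟨hsupp, hodd, hval, hZval, hinj⟩
    obtain ⟨hπ'f, hminf⟩ := mem_Sfin.1 (hPhi_Sfin f hf)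
    obtain ⟨hbkF, hfiber, heval⟩ := hbk_mem (Phi f) hπ'f hminf (gfn f) (hgfn_mem f hf)
    funext x
    by_cases hxG : x ∈ pmSet n
    · set B := (pmSet n).filter (fun y => f y = f x) with hBdef
      have hBP : B ∈ Phi f := Finset.mem_image_of_mem _ hxG
      have hxB : x ∈ B := hblock f x hxG
      rw [heval B hBP x hxB]
      by_cases hBfree : B ∈ freeB Z (Phi f)
      · rw [(mem_freeB.1 hBfree).2.2, Finset.sum_empty, zero_add]
        exact hgfn_eval f hf B hBfree x hxB
      · by_cases hBneg : negBlock B = B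
        · have hxnB : -x ∈ B := by
            rw [← hBneg] at hxB
            exact mem_negBlock.1 hxB
          have hfx0 : f x = 0 := by
            have h1 : f (-x) = f x := (Finset.mem_filter.1 hxnB).2
            rw [hodd x] at h1
            omega
          have hBZ : B ∩ Z = ∅ := by
            rw [Finset.eq_empty_iff_forall_notMem]
            intro z hz
            rw [Finset.mem_inter] at hz
            have h1 : f z = f x := (Finset.mem_filter.1 hz.1).2
            have h2 := mem_pmSet.1 (hφval z hz.2)
            rw [hZval z hz.2] at h1
            omega
          rw [hBZ, Finset.sum_empty, zero_add, hfx0]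
          simp only [hgfn]
          by_cases hne : B.Nonempty
          · rw [dif_pos hne, if_neg hBfree]
          · rw [dif_neg hne]
        · have hBZne : B ∩ Z ≠ ∅ := fun h => hBfree (mem_freeB.2 ⟨hBP, hBneg, h⟩)
          obtain ⟨z, hz⟩ := Finset.nonempty_iff_ne_empty.2 hBZne
          rw [Finset.mem_inter] at hz
          have hZc : (B ∩ Z).card ≤ 1 := by
            rcases hZmem with hZe | hZπ
            · rw [hZe]; simp
            · have := (minInt_iff hπ hπ'f).1 hminf Z hZπ B hBP
              rwa [Finset.inter_comm] at this
          have hsing : B ∩ Z = {z} := Finset.eq_singleton_iff_unique_mem.2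
            ⟨Finset.mem_inter.2 hz, fun y hy =>
              Finset.card_le_one.1 hZc y hy _ (Finset.mem_inter.2 hz)⟩
          have hgfn0 : gfn f B = 0 := by
            simp only [hgfn]
            by_cases hne : B.Nonempty
            · rw [dif_pos hne, if_neg hBfree]
            · rw [dif_neg hne]
          rw [hsing, Finset.sum_singleton, hgfn0, add_zero]
          have h1 : f z = f x := (Finset.mem_filter.1 hz.1).2
          rw [← hZval z hz.2]
          exact h1
    · rw [hsupp x hxG]
      simp only [hbkp]
      apply Finset.sum_eq_zero
      intro B hB
      rw [if_neg (fun hxB => hxG (hπ'f.2.1 B hB hxB))]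
  constructor
  refine
    { toFun := fun f => ⟨⟨Phi f.1, hPhi_Sfin f.1 f.2⟩, ⟨gfn f.1, hgfn_mem f.1 f.2⟩⟩
      invFun := fun p => ⟨bkp p.1.1 p.2.1,
        (hbk_mem p.1.1 (mem_Sfin.1 p.1.2).1 (mem_Sfin.1 p.1.2).2 p.2.1 p.2.2).1⟩
      left_inv := ?_
      right_inv := ?_ }
  · -- left inverse
    rintro ⟨f, hf⟩
    apply Subtype.ext
    show bkp (Phi f) (gfn f) = f
    exact hrt2 f hf
  · -- right inverse
    rintro ⟨⟨π', hπ'S⟩, ⟨g, hg⟩⟩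
    obtain ⟨hπ', hmin⟩ := mem_Sfin.1 hπ'S
    obtain ⟨hbkF, hfiber, heval⟩ := hbk_mem π' hπ' hmin g hg
    set f : ℤ → ℤ := bkp π' g with hfdef
    have hΦ : Phi f = π' := by
      ext B
      constructor
      · intro hB
        simp only [hPhi, Finset.mem_image] at hB
        obtain ⟨x, hxG, rfl⟩ := hB
        obtain ⟨Bx, hBx, hxBx⟩ := exists_block hπ' hxG
        rw [hfiber Bx hBx x hxBx]
        exact hBx
      · intro hB
        have hBne : B ≠ ∅ := hπ'.1 B hB
        obtain ⟨x, hx⟩ := Finset.nonempty_iff_ne_empty.2 hBne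
        have hxG : x ∈ pmSet n := hπ'.2.1 B hB hx
        simp only [hPhi, Finset.mem_image]
        exact ⟨x, hxG, hfiber B hB x hx⟩
    have hgeq : gfn f = g := by
      funext B
      simp only [hgfn]
      have hfree_eq : freeB Z (Phi f) = freeB Z π' := by rw [hΦ]
      by_cases hBf : B ∈ freeB Z π'
      · obtain ⟨hBP, hBne, hBZ⟩ := mem_freeB.1 hBf
        have hne : B.Nonempty := Finset.nonempty_iff_ne_empty.2 (hπ'.1 B hBP)
        rw [dif_pos hne, hfree_eq, if_pos hBf]
        rw [heval B hBP _ (B.min'_mem hne), hBZ, Finset.sum_empty, zero_add]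
      · by_cases hne : B.Nonempty
        · rw [dif_pos hne, hfree_eq, if_neg hBf, hg.1 B hBf]
        · rw [dif_neg hne]
          exact (hg.1 B hBf).symm
    have h1 : (⟨Phi f, hPhi_Sfin f hbkF⟩ : ↥(Sfin n π)) = ⟨π', hπ'S⟩ := Subtype.ext hΦ
    refine Sigma.ext h1 ?_
    rw [Subtype.heq_iff_coe_eq]
    · exact hgeq
    · intro g'
      have h2 : ((⟨Phi f, hPhi_Sfin f hbkF⟩ : ↥(Sfin n π)) : Finset (Finset ℤ)) = π' := hΦ
      rw [h2]

end BnAux4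

def qB (Z : Finset ℤ) (π' : Finset (Finset ℤ)) : ℕ := (freeB Z π').card / 2

namespace BnAux5
open Finset BnAux BnAux2 BnAux3 BnAux4

lemma nat_card_sigma {ι : Type*} [Fintype ι] (β : ι → Type*) (hfin : ∀ i, Finite (β i)) :
    Nat.card (Σ i, β i) = ∑ i, Nat.card (β i) := by
  letI : ∀ i, Fintype (β i) := fun i => @Fintype.ofFinite _ (hfin i)
  simp [Nat.card_eq_fintype_card, Fintype.card_sigma]

lemma phi_exists (i₀ : ℕ) (Z : Finset ℤ) (hZ0 : (0:ℤ) ∉ Z) (hZsym : ∀ x ∈ Z, -x ∈ Z)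
    (hZcard : Z.card = 2 * i₀) :
    ∃ φ₀ : ℤ → ℤ, (∀ x, x ∉ Z → φ₀ x = 0) ∧ (∀ x, φ₀ (-x) = - φ₀ x) ∧
      (∀ x ∈ Z, φ₀ x ∈ pmSet i₀) ∧ Set.InjOn φ₀ ↑Z ∧
      (∀ v ∈ pmSet i₀, ∃ z ∈ Z, φ₀ z = v) := by
  classical
  set Zp := Z.filter (fun x => 0 < x) with hZp
  have hZpmem : ∀ x : ℤ, x ∈ Zp ↔ x ∈ Z ∧ 0 < x := by
    intro x; rw [hZp, Finset.mem_filter]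
  have hZpcard : Zp.card = i₀ := by
    have := sym_card hZsym hZ0
    rw [← hZp] at this
    omega
  have hIcard : (Finset.Icc (1:ℤ) i₀).card = i₀ := by
    rw [Int.card_Icc]; omega
  have e : ↥Zp ≃ ↥(Finset.Icc (1:ℤ) i₀) := Finset.equivOfCardEq (by rw [hZpcard, hIcard])
  have hepos : ∀ z : ↥Zp, 1 ≤ ((e z : ℤ)) ∧ ((e z : ℤ)) ≤ i₀ := by
    intro z
    have := (e z).2
    rwa [Finset.mem_Icc] at this
  set φ₀ : ℤ → ℤ := fun x =>
    if h : x ∈ Zp then (e ⟨x, h⟩ : ℤ) else if h : -x ∈ Zp then -(e ⟨-x, h⟩ : ℤ) else 0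
    with hφ₀
  have hev1 : ∀ x (h : x ∈ Zp), φ₀ x = (e ⟨x, h⟩ : ℤ) := by
    intro x h; simp only [hφ₀]; rw [dif_pos h]
  have hev2 : ∀ x (h : -x ∈ Zp), x ∉ Zp → φ₀ x = -(e ⟨-x, h⟩ : ℤ) := by
    intro x h hx; simp only [hφ₀]; rw [dif_neg hx, dif_pos h]
  have hev3 : ∀ x, x ∉ Zp → -x ∉ Zp → φ₀ x = 0 := by
    intro x h1 h2; simp only [hφ₀]; rw [dif_neg h1, dif_neg h2]
  have hcases : ∀ x ∈ Z, (x ∈ Zp ∧ -x ∉ Zp) ∨ (x ∉ Zp ∧ -x ∈ Zp) := by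
    intro x hx
    have hx0 : x ≠ 0 := fun h => hZ0 (h ▸ hx)
    rcases lt_or_gt_of_ne hx0 with h | h
    · right
      constructor
      · rw [hZpmem]; omega
      · rw [hZpmem]; exact ⟨hZsym x hx, by omega⟩
    · left
      constructor
      · rw [hZpmem]; exact ⟨hx, h⟩
      · rw [hZpmem]; omega
  refine ⟨φ₀, ?_, ?_, ?_, ?_, ?_⟩
  · intro x hx
    have h1 : x ∉ Zp := fun h => hx ((hZpmem x).1 h).1
    have h2 : -x ∉ Zp := fun h => hx (by simpa using hZsym _ ((hZpmem _).1 h).1)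
    exact hev3 x h1 h2
  · intro x
    by_cases h1 : x ∈ Zp
    · have h2 : -x ∉ Zp := by
        rw [hZpmem]
        have := ((hZpmem x).1 h1).2
        omega
      have h3 : -(-x) ∈ Zp := by rw [neg_neg]; exact h1
      rw [hev2 (-x) h3 h2, hev1 x h1]
      have h4 : (⟨-(-x), h3⟩ : ↥Zp) = ⟨x, h1⟩ := Subtype.ext (neg_neg x)
      rw [h4]
    · by_cases h2 : -x ∈ Zp
      · rw [hev1 (-x) h2, hev2 x h2 h1, neg_neg]
      · have h3 : -(-x) ∉ Zp := by rw [neg_neg]; exact h1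
        rw [hev3 x h1 h2, hev3 (-x) h2 h3, neg_zero]
  · intro x hx
    rcases hcases x hx with ⟨h1, _⟩ | ⟨h1, h2⟩
    · rw [hev1 x h1, mem_pmSet]
      have := hepos ⟨x, h1⟩
      omega
    · rw [hev2 x h2 h1, mem_pmSet]
      have := hepos ⟨-x, h2⟩
      omega
  · intro x hx y hy h
    rw [Finset.mem_coe] at hx hy
    rcases hcases x hx with ⟨h1, _⟩ | ⟨h1, h2⟩ <;> rcases hcases y hy with ⟨h1', _⟩ | ⟨h1', h2'⟩
    · rw [hev1 x h1, hev1 y h1'] at h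
      have := e.injective (Subtype.coe_injective h)
      exact congrArg Subtype.val this
    · rw [hev1 x h1, hev2 y h2' h1'] at h
      have p1 := hepos ⟨x, h1⟩
      have p2 := hepos ⟨-y, h2'⟩
      omega
    · rw [hev2 x h2 h1, hev1 y h1'] at h
      have p1 := hepos ⟨-x, h2⟩
      have p2 := hepos ⟨y, h1'⟩
      omega
    · rw [hev2 x h2 h1, hev2 y h2' h1', neg_inj] at h
      have := e.injective (Subtype.coe_injective h)
      have h2 := congrArg Subtype.val this
      simp only at h2
      omega
  · intro v hv
    rw [mem_pmSet] at hv
    rcases lt_or_gt_of_ne hv.1 with h | h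
    · have hvI : -v ∈ Finset.Icc (1:ℤ) i₀ := by rw [Finset.mem_Icc]; omega
      set zs := e.symm ⟨-v, hvI⟩ with hzs
      have hzZ : (zs : ℤ) ∈ Z := ((hZpmem _).1 zs.2).1
      refine ⟨-(zs : ℤ), hZsym _ hzZ, ?_⟩
      have h1 : -(zs:ℤ) ∉ Zp := by
        rw [hZpmem]
        have := ((hZpmem _).1 zs.2).2
        omega
      have h2 : -(-(zs:ℤ)) ∈ Zp := by rw [neg_neg]; exact zs.2
      rw [hev2 _ h2 h1]
      have h3 : (⟨-(-(zs:ℤ)), h2⟩ : ↥Zp) = zs := Subtype.ext (neg_neg _)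
      rw [h3, hzs, Equiv.apply_symm_apply]
      simp
    · have hvI : v ∈ Finset.Icc (1:ℤ) i₀ := by rw [Finset.mem_Icc]; omega
      set zs := e.symm ⟨v, hvI⟩ with hzs
      have hzZ : (zs : ℤ) ∈ Z := ((hZpmem _).1 zs.2).1
      refine ⟨(zs : ℤ), hzZ, ?_⟩
      rw [hev1 _ zs.2]
      have h3 : (⟨(zs:ℤ), zs.2⟩ : ↥Zp) = zs := Subtype.ext rfl
      rw [h3, hzs, Equiv.apply_symm_apply]

end BnAux5

namespace BnAux6
open Finset BnAux BnAux2 BnAux3 BnAux4 BnAux5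

set_option maxHeartbeats 2000000 in
lemma core_count (n : ℕ) (π : Finset (Finset ℤ)) (hπ : IsBnPartition n π)
    (Z : Finset ℤ) (hZsub : Z ⊆ pmSet n) (hZneg : negBlock Z = Z) (hZmem : Z = ∅ ∨ Z ∈ π)
    (hZself : ∀ B ∈ π, negBlock B = B → B = Z)
    (hZdisj : ∀ B ∈ π, negBlock B ≠ B → B ∩ Z = ∅)
    (hZcov : ∀ x ∈ pmSet n, x ∉ Z → ∃ B ∈ π, negBlock B ≠ B ∧ x ∈ B)
    (i₀ : ℕ) (hZcard : Z.card = 2 * i₀)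
    (R : Finset (Finset ℤ))
    (hRP : R ⊆ π.filter (fun B => negBlock B ≠ B))
    (hRimg : R.image negBlock = π.filter (fun B => negBlock B ≠ B) \ R)
    (j : ℕ) :
    ∏ B ∈ R, Nat.descFactorial (2*(i₀+j)+1) B.card
      = ∑ π' ∈ Sfin n π, 2^(qB Z π') * Nat.descFactorial j (qB Z π') := by
  classical
  have hZ0 : (0:ℤ) ∉ Z := fun h => (mem_pmSet.1 (hZsub h)).1 rfl
  have hZsym : ∀ x ∈ Z, -x ∈ Z := by
    intro x hx; rw [← hZneg, mem_negBlock, neg_neg]; exact hx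
  obtain ⟨φ₀, hφsupp, hφodd, hφval, hφinj, hφsurj⟩ := phi_exists i₀ Z hZ0 hZsym hZcard
  have hMle : i₀ ≤ i₀ + j := Nat.le_add_right _ _
  obtain ⟨hcardF, hfinF⟩ := prod_side n π hπ Z hZsub hZneg hZself hZdisj hZcov i₀ (i₀+j)
    hMle φ₀ (fun x hx => hφsupp x hx) hφodd hφval hφinj R hRP hRimg
  obtain ⟨eq⟩ := sigma_side n π hπ Z hZsub hZneg hZmem i₀ (i₀+j) hMle φ₀
    (fun x hx => hφsupp x hx) hφodd hφval hφinj hφsurj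
  set W : Finset ℤ := (Finset.Icc (-((i₀+j:ℕ):ℤ)) ((i₀+j:ℕ):ℤ)) \ (Finset.Icc (-(i₀:ℤ)) i₀)
    with hW
  have hWsym : ∀ w ∈ W, -w ∈ W := by
    intro w hw
    rw [hW, Finset.mem_sdiff, Finset.mem_Icc, Finset.mem_Icc] at hw ⊢
    push_cast at hw ⊢
    omega
  have hW0 : (0:ℤ) ∉ W := by
    rw [hW, Finset.mem_sdiff, Finset.mem_Icc, Finset.mem_Icc]
    push_neg
    intro h1
    omega
  have hWpos : (W.filter (fun x => 0 < x)).card = j := by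
    have h1 : W.filter (fun x => 0 < x) = Finset.Ioc (i₀:ℤ) ((i₀+j:ℕ):ℤ) := by
      ext v
      rw [Finset.mem_filter, hW, Finset.mem_sdiff, Finset.mem_Icc, Finset.mem_Icc,
        Finset.mem_Ioc]
      push_cast
      constructor
      · rintro ⟨⟨h1, h2⟩, h3⟩
        push_neg at h2
        omega
      · intro h
        refine ⟨⟨?_, ?_⟩, ?_⟩ <;> omega
    rw [h1, Int.card_Ioc]
    push_cast
    omega
  have hall : ∀ π' : ↥(Sfin n π), ∃ q, (freeB Z π'.1).card = 2*q ∧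
      Nat.card (OddInjSet (freeB Z π'.1) W)
        = 2^q * Nat.descFactorial ((W.filter (fun x => 0 < x)).card) q ∧
      Finite (OddInjSet (freeB Z π'.1) W) := by
    intro π'
    obtain ⟨hπ', hmin⟩ := mem_Sfin.1 π'.2
    apply oddInj_card
    · intro B hB
      obtain ⟨hBP, hBne, hBZ⟩ := mem_freeB.1 hB
      refine mem_freeB.2 ⟨hπ'.2.2.2.1 B hBP, ?_, ?_⟩
      · intro h
        rw [negBlock_negBlock] at h
        exact hBne h.symm
      · rw [Finset.eq_empty_iff_forall_notMem]
        intro y hy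
        rw [Finset.mem_inter, mem_negBlock] at hy
        have : -y ∈ B ∩ Z := Finset.mem_inter.2 ⟨hy.1, hZsym y hy.2⟩
        rw [hBZ] at this
        exact absurd this (Finset.notMem_empty _)
    · intro B hB
      exact (mem_freeB.1 hB).2.1
    · exact hWsym
    · exact hW0
  choose p hp1 hp2 hp3 using hall
  have hq : ∀ π' : ↥(Sfin n π), qB Z π'.1 = p π' := by
    intro π'
    have := hp1 π'
    unfold qB
    omega
  calc ∏ B ∈ R, Nat.descFactorial (2*(i₀+j)+1) B.card
      = Nat.card (Ffun n π Z φ₀ (i₀+j)) := hcardF.symm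
    _ = Nat.card (Σ π' : ↥(Sfin n π), ↥(OddInjSet (freeB Z π'.1) W)) := Nat.card_congr eq
    _ = ∑ π' : ↥(Sfin n π), Nat.card (↥(OddInjSet (freeB Z π'.1) W)) :=
        nat_card_sigma _ hp3
    _ = ∑ π' : ↥(Sfin n π), 2^(qB Z π'.1) * Nat.descFactorial j (qB Z π'.1) := by
        apply Finset.sum_congr rfl
        intro π' _
        rw [hp2 π', hWpos, hq π']
    _ = ∑ π' ∈ Sfin n π, 2^(qB Z π') * Nat.descFactorial j (qB Z π') :=
        Finset.sum_coe_sort (Sfin n π)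
          (fun π'' => 2^(qB Z π'') * Nat.descFactorial j (qB Z π''))

end BnAux6

namespace BnAux7
open Finset

lemma sqrt_exp_one : Real.sqrt (Real.exp 1) = Real.exp (1/2) := by
  rw [show Real.exp 1 = Real.exp (1/2) * Real.exp (1/2) by rw [← Real.exp_add]; norm_num]
  exact Real.sqrt_mul_self (le_of_lt (Real.exp_pos _))

lemma exp_half_tsum : ∑' m : ℕ, ((1:ℝ)/2)^m / m.factorial = Real.exp (1/2) := by
  rw [Real.exp_eq_exp_ℝ, NormedSpace.exp_eq_tsum_div]

lemma per_pi_sum (q : ℕ) :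
    Summable (fun j : ℕ =>
      (1 / ((2:ℝ)^j * (j.factorial : ℝ))) * ((2^q * Nat.descFactorial j q : ℕ) : ℝ)) ∧
    ∑' j : ℕ, (1 / ((2:ℝ)^j * (j.factorial : ℝ))) * ((2^q * Nat.descFactorial j q : ℕ) : ℝ)
      = Real.sqrt (Real.exp 1) := by
  set t : ℕ → ℝ := fun j =>
    (1 / ((2:ℝ)^j * (j.factorial : ℝ))) * ((2^q * Nat.descFactorial j q : ℕ) : ℝ) with ht
  have hshift : ∀ m : ℕ, t (m+q) = ((1:ℝ)/2)^m / m.factorial := by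
    intro m
    have h1 : (m+q).descFactorial q * m.factorial = (m+q).factorial := by
      rw [Nat.descFactorial_eq_factorial_mul_choose]
      have h := Nat.choose_mul_factorial_mul_factorial (Nat.le_add_left q m)
      have h2 : m + q - q = m := by omega
      rw [h2] at h
      calc Nat.factorial q * (m+q).choose q * m.factorial
          = (m+q).choose q * Nat.factorial q * m.factorial := by ring
        _ = (m+q).factorial := h
    have h3 : 2^q * ((m+q).descFactorial q) * (2^m * m.factorial)
        = 2^(m+q) * (m+q).factorial := by
      rw [pow_add]
      calc 2^q * ((m+q).descFactorial q) * (2^m * m.factorial)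
          = (2^m * 2^q) * ((m+q).descFactorial q * m.factorial) := by ring
        _ = 2^m * 2^q * (m+q).factorial := by rw [h1]
    simp only [ht]
    rw [one_div, inv_mul_eq_div, div_pow, one_pow, div_div]
    rw [div_eq_div_iff (by positivity) (by positivity)]
    push_cast
    rw [one_mul]
    exact_mod_cast h3
  have hzero : ∀ i < q, t i = 0 := by
    intro i hi
    have : Nat.descFactorial i q = 0 := Nat.descFactorial_eq_zero_iff_lt.2 hi
    simp only [ht, this]
    simp
  have hsum0 : Summable (fun m => t (m+q)) :=
    (Real.summable_pow_div_factorial (1/2)).congr (fun m => (hshift m).symm)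
  have hsumt : Summable t := (summable_nat_add_iff q).1 hsum0
  refine ⟨hsumt, ?_⟩
  have h4 := Summable.sum_add_tsum_nat_add q hsumt
  have h5 : ∑ i ∈ Finset.range q, t i = 0 := by
    apply Finset.sum_eq_zero
    intro i hi
    exact hzero i (Finset.mem_range.1 hi)
  rw [← h4, h5, zero_add, tsum_congr hshift, exp_half_tsum, sqrt_exp_one]

end BnAux7


open BnAux BnAux2 BnAux3 BnAux4 BnAux5 BnAux6 BnAux7

/-- Infinite-sum form: `N^B(π) = (𝐢!/√e) Σ_{j≥0} (1/(2j)!!) ∏_α C(2(i₀+j)+1, i_α)`. -/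
theorem stmt2 (n : ℕ) (hn : 1 ≤ n) (k : ℕ) (hk : 1 ≤ k) (i₀ : ℕ) (i : Fin k → ℕ)
    (π : Finset (Finset ℤ)) (hπ : IsBnPartition n π)
    (hz : zeroBlockHalfSize π i₀) (hbp : blockPairSizes π i) :
    Summable (fun j : ℕ =>
        (1 / ((2 : ℝ) ^ j * j.factorial)) *
          ∏ α : Fin k, ((2 * (i₀ + j) + 1).choose (i α) : ℝ)) ∧
    (Set.ncard {π' : Finset (Finset ℤ) | IsBnPartition n π' ∧ MinInt n π π'} : ℝ)
      = ((∏ α : Fin k, (i α).factorial : ℕ) : ℝ) / Real.sqrt (Real.exp 1)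
        * ∑' j : ℕ, (1 / ((2 : ℝ) ^ j * j.factorial)) *
            ∏ α : Fin k, ((2 * (i₀ + j) + 1).choose (i α) : ℝ) := by
  classical
  obtain ⟨Z, hZsub, hZcard, hZneg, hZself, hZdisj, hZcov, hZmem⟩ := zero_block_spec hπ hz
  have hcl : ∀ B ∈ π.filter (fun B => negBlock B ≠ B),
      negBlock B ∈ π.filter (fun B => negBlock B ≠ B) := by
    intro B hB
    rw [Finset.mem_filter] at hB ⊢
    refine ⟨hπ.2.2.2.1 B hB.1, ?_⟩
    rw [negBlock_negBlock]
    exact fun h => hB.2 h.symm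
  have hfp : ∀ B ∈ π.filter (fun B => negBlock B ≠ B), negBlock B ≠ B :=
    fun B hB => (Finset.mem_filter.1 hB).2
  obtain ⟨R, hRP, hRimg⟩ := exists_transversal (π.filter (fun B => negBlock B ≠ B)) hcl hfp
  have hnat : ∀ j : ℕ, (∏ α : Fin k, (i α).factorial)
        * (∏ α : Fin k, (2*(i₀+j)+1).choose (i α))
      = ∑ π' ∈ Sfin n π, 2^(qB Z π') * Nat.descFactorial j (qB Z π') := by
    intro j
    rw [← Finset.prod_mul_distrib]
    rw [Finset.prod_congr rfl
      (fun α _ => (Nat.descFactorial_eq_factorial_mul_choose (2*(i₀+j)+1) (i α)).symm)]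
    rw [← prod_transfer hRP hRimg hbp (fun m => Nat.descFactorial (2*(i₀+j)+1) m)]
    exact core_count n π hπ Z hZsub hZneg hZmem hZself hZdisj hZcov i₀ hZcard R hRP hRimg j
  set c : ℕ := ∏ α : Fin k, (i α).factorial with hc
  have hcpos : 0 < c := Finset.prod_pos (fun α _ => Nat.factorial_pos _)
  have hcR : (0:ℝ) < (c:ℝ) := by exact_mod_cast hcpos
  have hterm : ∀ j : ℕ,
      (1 / ((2:ℝ)^j * j.factorial)) * ∏ α : Fin k, ((2*(i₀+j)+1).choose (i α) : ℝ)
      = (1/(c:ℝ)) * ∑ π' ∈ Sfin n π, (1 / ((2:ℝ)^j * j.factorial))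
          * ((2^(qB Z π') * Nat.descFactorial j (qB Z π') : ℕ) : ℝ) := by
    intro j
    have h2 : (∑ π' ∈ Sfin n π, ((2^(qB Z π') * Nat.descFactorial j (qB Z π') : ℕ) : ℝ))
        = (c : ℝ) * ∏ α : Fin k, ((2*(i₀+j)+1).choose (i α) : ℝ) := by
      rw [← Nat.cast_sum, ← hnat j]
      push_cast
      ring
    rw [← Finset.mul_sum, h2]
    field_simp
  have hsummS : ∀ π' ∈ Sfin n π, Summable (fun j : ℕ =>
      (1 / ((2:ℝ)^j * j.factorial))
        * ((2^(qB Z π') * Nat.descFactorial j (qB Z π') : ℕ) : ℝ)) :=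
    fun π' _ => (per_pi_sum (qB Z π')).1
  have hsum_inner : Summable (fun j : ℕ => ∑ π' ∈ Sfin n π,
      (1 / ((2:ℝ)^j * j.factorial))
        * ((2^(qB Z π') * Nat.descFactorial j (qB Z π') : ℕ) : ℝ)) :=
    summable_sum hsummS
  have hsummable : Summable (fun j : ℕ =>
      (1 / ((2:ℝ)^j * j.factorial)) * ∏ α : Fin k, ((2*(i₀+j)+1).choose (i α) : ℝ)) :=
    (hsum_inner.mul_left (1/(c:ℝ))).congr (fun j => (hterm j).symm)
  refine ⟨hsummable, ?_⟩
  have htsum : (∑' j : ℕ, (1 / ((2:ℝ)^j * j.factorial))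
        * ∏ α : Fin k, ((2*(i₀+j)+1).choose (i α) : ℝ))
      = (1/(c:ℝ)) * ((Sfin n π).card * Real.sqrt (Real.exp 1)) := by
    rw [tsum_congr hterm, tsum_mul_left]
    congr 1
    rw [Summable.tsum_finsetSum hsummS]
    rw [Finset.sum_congr rfl (fun π' _ => (per_pi_sum (qB Z π')).2)]
    rw [Finset.sum_const, nsmul_eq_mul]
  have hset : {π' : Finset (Finset ℤ) | IsBnPartition n π' ∧ MinInt n π π'}
      = ↑(Sfin n π) := by
    ext π'
    rw [Set.mem_setOf_eq, Finset.mem_coe]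
    exact mem_Sfin.symm
  rw [hset, Set.ncard_coe_finset, htsum]
  have hsqrtpos : (0:ℝ) < Real.sqrt (Real.exp 1) := Real.sqrt_pos.2 (Real.exp_pos 1)
  field_simp
end

section
/- Let n ≥ 1 and let π be a B_n-partition without zero-block consisting of k ≥ 1 block pairs of sizes i₁, i₂, …, i_k listed in any order. Then the total number N^D(π) of B_n-partitions without zero-block that intersect π minimally equals N^D(π) = ( (∏_{α=1}^k i_α!) / √e ) · [x^i] exp( (1/2) ∏_{α=1}^k (1+x_α)² ), where the exponential is interpreted as the convergent series Σ_{j≥0} (1/(2j)!!) ∏_{α=1}^k (1+x_α)^{2j} and [x^i] denotes the coefficient of ∏_{α=1}^k x_α^{i_α}; equivalently N^D(π) = ( (∏_{α=1}^k i_α!) / √e ) · Σ_{j≥0} (1/(2j)!!) ∏_{α=1}^k C(2j, i_α), where C(m, i) is the binomial coefficient. -/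
open scoped BigOperators

namespace S7
-- (chunk1 lemmas assumed; re-add)
lemma mem_negBlock {B : Finset ℤ} {x : ℤ} : x ∈ negBlock B ↔ -x ∈ B := by
  simp only [negBlock, Finset.mem_image]
  constructor
  · rintro ⟨y, hy, rfl⟩; simpa using hy
  · intro h; exact ⟨-x, h, by ring⟩
lemma negBlock_negBlock (B : Finset ℤ) : negBlock (negBlock B) = B := by
  ext x; simp [mem_negBlock]
lemma negBlock_empty : negBlock ∅ = ∅ := rfl
lemma negBlock_eq_empty {B : Finset ℤ} : negBlock B = ∅ ↔ B = ∅ := by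
  constructor
  · intro h; rw [← negBlock_negBlock B, h]; rfl
  · rintro rfl; rfl
lemma card_negBlock (B : Finset ℤ) : (negBlock B).card = B.card := by
  apply Finset.card_image_of_injective
  intro a b h; simp only [] at h; omega
lemma neg_mem_pmSet {n : ℕ} {x : ℤ} (h : x ∈ pmSet n) : -x ∈ pmSet n := by
  simp only [pmSet, Finset.mem_erase, Finset.mem_Icc] at h ⊢; omega
lemma negBlock_subset_pmSet {n : ℕ} {B : Finset ℤ} (h : B ⊆ pmSet n) :
    negBlock B ⊆ pmSet n := by
  intro x hx
  rw [mem_negBlock] at hx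
  simpa using neg_mem_pmSet (h hx)

variable {n : ℕ} {π π' : Finset (Finset ℤ)}

lemma block_eq_of_mem (hπ : IsBnPartition n π) {B C : Finset ℤ} {x : ℤ}
    (hB : B ∈ π) (hC : C ∈ π) (hxB : x ∈ B) (hxC : x ∈ C) : B = C := by
  have hx : x ∈ pmSet n := hπ.2.1 B hB hxB
  obtain ⟨D, -, hD⟩ := hπ.2.2.1 x hx
  rw [hD B ⟨hB, hxB⟩, hD C ⟨hC, hxC⟩]

lemma inter_negBlock_eq_empty (hπ : IsBnPartition n π) (hz : NoZeroBlock π)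
    {B : Finset ℤ} (hB : B ∈ π) : B ∩ negBlock B = ∅ := by
  by_contra h
  obtain ⟨x, hx⟩ := Finset.nonempty_iff_ne_empty.2 h
  rw [Finset.mem_inter] at hx
  exact hz B hB (block_eq_of_mem hπ (hπ.2.2.2.1 B hB) hB hx.2 hx.1)

def IsPos (B : Finset ℤ) : Prop := B.min < (negBlock B).min

lemma min_ne_min_negBlock {B : Finset ℤ} (hne : B ≠ ∅) (hd : B ∩ negBlock B = ∅) :
    B.min ≠ (negBlock B).min := by
  intro h
  have hBne : B.Nonempty := Finset.nonempty_iff_ne_empty.2 hne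
  obtain ⟨a, ha⟩ := Finset.min_of_nonempty hBne
  have haB : a ∈ B := Finset.mem_of_min ha
  have haN : a ∈ negBlock B := Finset.mem_of_min (by rw [← h]; exact ha)
  have : a ∈ B ∩ negBlock B := Finset.mem_inter.2 ⟨haB, haN⟩
  rw [hd] at this
  exact absurd this (Finset.notMem_empty a)

lemma isPos_or {B : Finset ℤ} (hne : B ≠ ∅) (hd : B ∩ negBlock B = ∅) :
    IsPos B ∨ IsPos (negBlock B) := by
  rcases lt_or_gt_of_ne (min_ne_min_negBlock hne hd) with h | h
  · exact Or.inl h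
  · right; unfold IsPos; rw [negBlock_negBlock]; exact h

lemma not_isPos_both {B : Finset ℤ} (h1 : IsPos B) (h2 : IsPos (negBlock B)) : False := by
  unfold IsPos at h1 h2
  rw [negBlock_negBlock] at h2
  exact absurd h2 (not_lt.2 (le_of_lt h1))

open Classical in
noncomputable def posP (π : Finset (Finset ℤ)) : Finset (Finset ℤ) := π.filter IsPos

lemma posP_subset : posP π ⊆ π := by
  classical
  intro B hB
  unfold posP at hB
  exact Finset.mem_of_mem_filter _ hB

lemma exists_posRep (hπ : IsBnPartition n π) (hz : NoZeroBlock π) {C : Finset ℤ}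
    (hC : C ∈ π) : ∃ B ∈ posP π, C = B ∨ C = negBlock B := by
  classical
  rcases isPos_or (hπ.1 C hC) (inter_negBlock_eq_empty hπ hz hC) with h | h
  · exact ⟨C, Finset.mem_filter.2 ⟨hC, h⟩, Or.inl rfl⟩
  · exact ⟨negBlock C, Finset.mem_filter.2 ⟨hπ.2.2.2.1 C hC, h⟩,
      Or.inr (negBlock_negBlock C).symm⟩

lemma posRep_ne_neg {B B' : Finset ℤ} (hB : B ∈ posP π) (hB' : B' ∈ posP π)
    (h : B = negBlock B') : False := by
  classical
  have h1 : IsPos B' := (Finset.mem_filter.1 hB').2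
  have h2 : IsPos (negBlock B') := h ▸ (Finset.mem_filter.1 hB).2
  exact not_isPos_both h1 h2

lemma minInt_iff (hπ : IsBnPartition n π) (hπ' : IsBnPartition n π') :
    MinInt n π π' ↔ ∀ B ∈ π, ∀ C ∈ π', (B ∩ C).card ≤ 1 := by
  constructor
  · intro h B hB C hC
    by_contra hgt
    push_neg at hgt
    have hne : B ∩ C ≠ ∅ := by
      intro he; rw [he] at hgt; simp at hgt
    have hmem : B ∩ C ∈ meetB π π' := by
      refine Finset.mem_filter.2 ⟨?_, hne⟩
      exact Finset.mem_image.2 ⟨(B, C), Finset.mem_product.2 ⟨hB, hC⟩, rfl⟩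
    rw [h] at hmem
    obtain ⟨x, -, hx⟩ := Finset.mem_image.1 hmem
    rw [← hx] at hgt
    simp at hgt
  · intro h
    unfold MinInt
    ext D
    constructor
    · intro hD
      obtain ⟨hD1, hD2⟩ := Finset.mem_filter.1 hD
      obtain ⟨⟨B, C⟩, hBC, rfl⟩ := Finset.mem_image.1 hD1
      obtain ⟨hB, hC⟩ := Finset.mem_product.1 hBC
      have hcard : (B ∩ C).card = 1 := by
        have := h B hB C hC
        have hpos : 0 < (B ∩ C).card := Finset.card_pos.2 (Finset.nonempty_iff_ne_empty.2 hD2)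
        omega
      obtain ⟨x, hx⟩ := Finset.card_eq_one.1 hcard
      refine Finset.mem_image.2 ⟨x, ?_, hx.symm⟩
      have : x ∈ B ∩ C := by rw [hx]; exact Finset.mem_singleton_self x
      exact hπ.2.1 B hB (Finset.mem_inter.1 this).1
    · intro hD
      obtain ⟨x, hx, rfl⟩ := Finset.mem_image.1 hD
      obtain ⟨B, ⟨hB, hxB⟩, -⟩ := hπ.2.2.1 x hx
      obtain ⟨C, ⟨hC, hxC⟩, -⟩ := hπ'.2.2.1 x hx
      have hsub : {x} ⊆ B ∩ C := by
        intro y hy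
        rw [Finset.mem_singleton] at hy
        subst hy
        exact Finset.mem_inter.2 ⟨hxB, hxC⟩
      have heq : B ∩ C = {x} :=
        (Finset.eq_of_subset_of_card_le hsub (by simpa using h B hB C hC)).symm
      refine Finset.mem_filter.2 ⟨?_, Finset.singleton_ne_empty x⟩
      exact Finset.mem_image.2 ⟨(B, C), Finset.mem_product.2 ⟨hB, hC⟩, heq⟩


lemma posP_cards (hπ : IsBnPartition n π) (hz : NoZeroBlock π) {k : ℕ} {i : Fin k → ℕ}
    (hbp : blockPairSizes π i) :
    (posP π).val.map Finset.card = ((List.ofFn i : List ℕ) : Multiset ℕ) := by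
  classical
  have hfilter : π.filter (fun B => negBlock B ≠ B) = π :=
    Finset.filter_true_of_mem (fun B hB => hz B hB)
  have h1 : π.val.map Finset.card
      = ((List.ofFn i : List ℕ) : Multiset ℕ) + ((List.ofFn i : List ℕ) : Multiset ℕ) := by
    rw [← hfilter]; exact hbp
  have hval : π.val = (posP π).val + (π.filter (fun B => ¬ IsPos B)).val := by
    unfold posP
    rw [Finset.filter_val, Finset.filter_val]
    exact (Multiset.filter_add_not _ _).symm
  have himg : π.filter (fun B => ¬ IsPos B) = (posP π).image negBlock := by
    ext C
    simp only [Finset.mem_filter, Finset.mem_image]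
    constructor
    · rintro ⟨hC, hnp⟩
      have h2 : IsPos (negBlock C) :=
        (isPos_or (hπ.1 C hC) (inter_negBlock_eq_empty hπ hz hC)).resolve_left hnp
      refine ⟨negBlock C, ?_, negBlock_negBlock C⟩
      unfold posP
      exact Finset.mem_filter.2 ⟨hπ.2.2.2.1 C hC, h2⟩
    · rintro ⟨B, hB, rfl⟩
      have hBπ : B ∈ π := posP_subset hB
      have hBpos : IsPos B := by
        unfold posP at hB; exact (Finset.mem_filter.1 hB).2
      exact ⟨hπ.2.2.2.1 B hBπ, fun h => not_isPos_both hBpos h⟩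
  have hinj : Function.Injective negBlock := by
    intro A B h
    rw [← negBlock_negBlock A, h, negBlock_negBlock]
  have himgval : ((posP π).image negBlock).val = (posP π).val.map negBlock :=
    Finset.image_val_of_injOn (hinj.injOn)
  have h2 : π.val.map Finset.card
      = (posP π).val.map Finset.card + (posP π).val.map Finset.card := by
    rw [hval, Multiset.map_add, himg, himgval, Multiset.map_map]
    congr 1
    exact Multiset.map_congr rfl (fun B _ => card_negBlock B)
  rw [h2] at h1
  ext x
  have := congrArg (Multiset.count x) h1
  simp only [Multiset.count_add] at this
  omega

lemma prod_posP {M : Type*} [CommMonoid M] (f : ℕ → M) {k : ℕ} {i : Fin k → ℕ}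
    (hcards : (posP π).val.map Finset.card = ((List.ofFn i : List ℕ) : Multiset ℕ)) :
    ∏ B ∈ posP π, f B.card = ∏ α, f (i α) := by
  have : ∏ B ∈ posP π, f B.card = (((posP π).val.map Finset.card).map f).prod := by
    rw [Multiset.map_map]
    rfl
  rw [this, hcards, Multiset.map_coe, Multiset.prod_coe, List.map_ofFn, List.prod_ofFn]
  rfl


def sblock {j : ℕ} (v : Fin j → Finset ℤ) (p : Fin j × Bool) : Finset ℤ :=
  if p.2 then v p.1 else negBlock (v p.1)

def flipP {j : ℕ} (p : Fin j × Bool) : Fin j × Bool := (p.1, !p.2)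

lemma sblock_flipP {j : ℕ} (v : Fin j → Finset ℤ) (p : Fin j × Bool) :
    sblock v (flipP p) = negBlock (sblock v p) := by
  rcases p with ⟨s, b⟩
  cases b <;> simp [sblock, flipP, negBlock_negBlock]

lemma flipP_flipP {j : ℕ} (p : Fin j × Bool) : flipP (flipP p) = p := by
  rcases p with ⟨s, b⟩; cases b <;> rfl

lemma flipP_ne {j : ℕ} (p : Fin j × Bool) : flipP p ≠ p := by
  rcases p with ⟨s, b⟩; cases b <;> simp [flipP]

lemma flipP_inj {j : ℕ} {p q : Fin j × Bool} (h : flipP p = flipP q) : p = q := by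
  rw [← flipP_flipP p, h, flipP_flipP]

def Cond (n : ℕ) (π : Finset (Finset ℤ)) {j : ℕ} (v : Fin j → Finset ℤ) : Prop :=
  (∀ s, v s ⊆ pmSet n) ∧ (∀ x ∈ pmSet n, ∃! p : Fin j × Bool, x ∈ sblock v p) ∧
  (∀ B ∈ π, ∀ p : Fin j × Bool, (B ∩ sblock v p).card ≤ 1)

lemma sblock_subset_pmSet {j : ℕ} {v : Fin j → Finset ℤ} (h : ∀ s, v s ⊆ pmSet n)
    (p : Fin j × Bool) : sblock v p ⊆ pmSet n := by
  rcases p with ⟨s, b⟩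
  cases b
  · exact negBlock_subset_pmSet (h s)
  · exact h s

open Classical in
noncomputable def Mset (n : ℕ) (π : Finset (Finset ℤ)) (j : ℕ) : Finset (Fin j → Finset ℤ) :=
  (Fintype.piFinset fun _ => (pmSet n).powerset).filter (fun v => Cond n π v)

lemma mem_Mset {j : ℕ} {v : Fin j → Finset ℤ} : v ∈ Mset n π j ↔ Cond n π v := by
  classical
  unfold Mset
  constructor
  · intro h
    exact (Finset.mem_filter.1 h).2
  · intro h
    refine Finset.mem_filter.2 ⟨?_, h⟩
    rw [Fintype.mem_piFinset]
    exact fun s => Finset.mem_powerset.2 (h.1 s)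

open Classical in
noncomputable def indP {j : ℕ} (v : Fin j → Finset ℤ) : Finset (Finset ℤ) :=
  (Finset.univ.image (sblock v)).filter (fun B => B ≠ ∅)

lemma mem_indP {j : ℕ} {v : Fin j → Finset ℤ} {C : Finset ℤ} :
    C ∈ indP v ↔ (∃ p, sblock v p = C) ∧ C ≠ ∅ := by
  classical
  unfold indP
  simp [Finset.mem_filter]

open Classical in
noncomputable def PF (n : ℕ) (π : Finset (Finset ℤ)) : Finset (Finset (Finset ℤ)) :=
  ((pmSet n).powerset.powerset).filter
    (fun π' => IsBnPartition n π' ∧ NoZeroBlock π' ∧ MinInt n π π')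

lemma mem_PF {π'' : Finset (Finset ℤ)} :
    π'' ∈ PF n π ↔ IsBnPartition n π'' ∧ NoZeroBlock π'' ∧ MinInt n π π'' := by
  classical
  unfold PF
  constructor
  · intro h; exact (Finset.mem_filter.1 h).2
  · intro h
    refine Finset.mem_filter.2 ⟨?_, h⟩
    rw [Finset.mem_powerset]
    intro B hB
    rw [Finset.mem_powerset]
    exact h.1.2.1 B hB

lemma sblock_unique {j : ℕ} {v : Fin j → Finset ℤ} (hv : Cond n π v)
    {p q : Fin j × Bool} (hpq : sblock v p = sblock v q) (hne : sblock v p ≠ ∅) :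
    p = q := by
  obtain ⟨y, hy⟩ := Finset.nonempty_iff_ne_empty.2 hne
  have hy' : y ∈ sblock v q := hpq ▸ hy
  have hyp : y ∈ pmSet n := sblock_subset_pmSet hv.1 p hy
  obtain ⟨r, -, hr⟩ := hv.2.1 y hyp
  rw [hr p hy, hr q hy']

lemma indP_mem_PF (hπ : IsBnPartition n π) {j : ℕ} {v : Fin j → Finset ℤ}
    (hv : Cond n π v) : indP v ∈ PF n π := by
  have hsub : ∀ C ∈ indP v, C ⊆ pmSet n := by
    intro C hC
    obtain ⟨⟨p, hp⟩, -⟩ := mem_indP.1 hC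
    rw [← hp]
    exact sblock_subset_pmSet hv.1 p
  have hneg : ∀ C ∈ indP v, negBlock C ∈ indP v := by
    intro C hC
    obtain ⟨⟨p, hp⟩, hne⟩ := mem_indP.1 hC
    refine mem_indP.2 ⟨⟨flipP p, by rw [sblock_flipP, hp]⟩, ?_⟩
    rw [Ne, negBlock_eq_empty]
    exact hne
  have hexu : ∀ x ∈ pmSet n, ∃! C, C ∈ indP v ∧ x ∈ C := by
    intro x hx
    obtain ⟨p, hp, hp'⟩ := hv.2.1 x hx
    refine ⟨sblock v p, ⟨mem_indP.2 ⟨⟨p, rfl⟩, ?_⟩, hp⟩, ?_⟩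
    · intro h; rw [h] at hp; exact absurd hp (Finset.notMem_empty x)
    · rintro C ⟨hC, hxC⟩
      obtain ⟨⟨q, hq⟩, -⟩ := mem_indP.1 hC
      rw [← hq] at hxC ⊢
      rw [hp' q hxC]
  have hnz : NoZeroBlock (indP v) := by
    intro C hC hCeq
    obtain ⟨⟨p, hp⟩, hne⟩ := mem_indP.1 hC
    obtain ⟨y, hy⟩ := Finset.nonempty_iff_ne_empty.2 hne
    have hy1 : y ∈ sblock v p := hp ▸ hy
    have hy2 : y ∈ sblock v (flipP p) := by
      rw [sblock_flipP, hp, hCeq]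
      exact hy
    have hyp : y ∈ pmSet n := hsub C hC hy
    obtain ⟨r, -, hr⟩ := hv.2.1 y hyp
    exact flipP_ne p ((hr (flipP p) hy2).trans (hr p hy1).symm)
  have hBn : IsBnPartition n (indP v) := by
    refine ⟨fun C hC => (mem_indP.1 hC).2, hsub, hexu, hneg, ?_⟩
    classical
    have : (indP v).filter (fun B => negBlock B = B) = ∅ := by
      rw [Finset.filter_eq_empty_iff]
      intro C hC
      exact hnz C hC
    rw [this]
    simp
  refine mem_PF.2 ⟨hBn, hnz, ?_⟩
  rw [minInt_iff hπ hBn]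
  intro B hB C hC
  obtain ⟨⟨p, hp⟩, -⟩ := mem_indP.1 hC
  rw [← hp]
  exact hv.2.2 B hB p


/-! ### Counting `Mset` -/

noncomputable def chi {j : ℕ} (v : Fin j → Finset ℤ) (x : ℤ)
    (h : ∃ p : Fin j × Bool, x ∈ sblock v p) : Fin j × Bool := h.choose

lemma chi_spec {j : ℕ} {v : Fin j → Finset ℤ} {x : ℤ}
    (h : ∃ p : Fin j × Bool, x ∈ sblock v p) : x ∈ sblock v (chi v x h) := h.choose_spec

lemma chi_eq {j : ℕ} {v : Fin j → Finset ℤ} {x : ℤ} (hv : Cond n π v)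
    (hx : x ∈ pmSet n) {p : Fin j × Bool} (hp : x ∈ sblock v p)
    (h : ∃ p : Fin j × Bool, x ∈ sblock v p) : chi v x h = p := by
  obtain ⟨r, -, hr⟩ := hv.2.1 x hx
  rw [hr _ (chi_spec h), hr p hp]

open Classical in
noncomputable def TFam (π : Finset (Finset ℤ)) (j : ℕ) :
    Finset (∀ B : {B // B ∈ posP π}, {x // x ∈ B.1} → Fin j × Bool) :=
  Finset.univ.filter (fun g => ∀ B, Function.Injective (g B))

noncomputable def fwdM (hπ : IsBnPartition n π) {j : ℕ} (v : Fin j → Finset ℤ)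
    (hv : Cond n π v) : ∀ B : {B // B ∈ posP π}, {x // x ∈ B.1} → Fin j × Bool :=
  fun B x => chi v x.1 (hv.2.1 x.1 (hπ.2.1 B.1 (posP_subset B.2) x.2)).exists

noncomputable def bwdM {j : ℕ}
    (g : ∀ B : {B // B ∈ posP π}, {x // x ∈ B.1} → Fin j × Bool) :
    Fin j → Finset ℤ :=
  fun s => (posP π).attach.biUnion (fun B =>
    ((B.1.attach.filter (fun x => g B x = (s, true))).image Subtype.val) ∪
    ((B.1.attach.filter (fun x => g B x = (s, false))).image (fun x => -x.1)))

lemma mem_bwdM {j : ℕ}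
    {g : ∀ B : {B // B ∈ posP π}, {x // x ∈ B.1} → Fin j × Bool}
    {s : Fin j} {y : ℤ} :
    y ∈ bwdM g s ↔ ∃ B : {B // B ∈ posP π},
      (∃ hx : y ∈ B.1, g B ⟨y, hx⟩ = (s, true)) ∨
      (∃ hx : -y ∈ B.1, g B ⟨-y, hx⟩ = (s, false)) := by
  classical
  unfold bwdM
  simp only [Finset.mem_biUnion, Finset.mem_attach, true_and, Finset.mem_union,
    Finset.mem_image, Finset.mem_filter]
  constructor
  · rintro ⟨B, hB⟩
    refine ⟨B, ?_⟩
    rcases hB with ⟨x, hg, rfl⟩ | ⟨x, hg, rfl⟩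
    · exact Or.inl ⟨x.2, hg⟩
    · refine Or.inr ⟨by rw [neg_neg]; exact x.2, ?_⟩
      rw [show (⟨-(-x.1), by rw [neg_neg]; exact x.2⟩ : {z // z ∈ B.1}) = x from
        Subtype.ext (neg_neg x.1)]
      exact hg
  · rintro ⟨B, ⟨hx, hg⟩ | ⟨hx, hg⟩⟩
    · exact ⟨B, Or.inl ⟨⟨y, hx⟩, hg, rfl⟩⟩
    · exact ⟨B, Or.inr ⟨⟨-y, hx⟩, hg, neg_neg y⟩⟩

lemma mem_sblock_bwdM {j : ℕ}
    {g : ∀ B : {B // B ∈ posP π}, {x // x ∈ B.1} → Fin j × Bool}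
    {p : Fin j × Bool} {y : ℤ} :
    y ∈ sblock (bwdM g) p ↔ ∃ B : {B // B ∈ posP π},
      (∃ hx : y ∈ B.1, g B ⟨y, hx⟩ = p) ∨
      (∃ hx : -y ∈ B.1, g B ⟨-y, hx⟩ = flipP p) := by
  rcases p with ⟨s, b⟩
  cases b
  · have : y ∈ sblock (bwdM g) (s, false) ↔ -y ∈ bwdM g s := by
      simp [sblock, mem_negBlock]
    rw [this, mem_bwdM]
    constructor
    · rintro ⟨B, ⟨hx, hg⟩ | ⟨hx, hg⟩⟩
      · exact ⟨B, Or.inr ⟨hx, hg⟩⟩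
      · refine ⟨B, Or.inl ⟨by rw [← neg_neg y]; exact hx, ?_⟩⟩
        rw [show (⟨y, by rw [← neg_neg y]; exact hx⟩ : {z // z ∈ B.1})
          = ⟨-(-y), hx⟩ from Subtype.ext (neg_neg y).symm]
        exact hg
    · rintro ⟨B, ⟨hx, hg⟩ | ⟨hx, hg⟩⟩
      · refine ⟨B, Or.inr ⟨by rw [neg_neg]; exact hx, ?_⟩⟩
        rw [show (⟨-(-y), by rw [neg_neg]; exact hx⟩ : {z // z ∈ B.1})
          = ⟨y, hx⟩ from Subtype.ext (neg_neg y)]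
        exact hg
      · exact ⟨B, Or.inl ⟨hx, hg⟩⟩
  · have : sblock (bwdM g) (s, true) = bwdM g s := rfl
    rw [this, mem_bwdM]
    rfl

lemma posP_block_unique (hπ : IsBnPartition n π) {B B' : {B // B ∈ posP π}} {y : ℤ}
    (h1 : y ∈ B.1) (h2 : y ∈ B'.1) : B = B' :=
  Subtype.ext (block_eq_of_mem hπ (posP_subset B.2) (posP_subset B'.2) h1 h2)

lemma posP_not_both (hπ : IsBnPartition n π) {B B' : {B // B ∈ posP π}} {y : ℤ}
    (h1 : y ∈ B.1) (h2 : -y ∈ B'.1) : False := by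
  have h3 : y ∈ negBlock B'.1 := mem_negBlock.2 h2
  have h4 : B.1 = negBlock B'.1 :=
    block_eq_of_mem hπ (posP_subset B.2) (hπ.2.2.2.1 B'.1 (posP_subset B'.2)) h1 h3
  exact posRep_ne_neg B.2 B'.2 h4

lemma sblock_bwdM_unique (hπ : IsBnPartition n π) {j : ℕ}
    {g : ∀ B : {B // B ∈ posP π}, {x // x ∈ B.1} → Fin j × Bool}
    {y : ℤ} {p q : Fin j × Bool}
    (hp : y ∈ sblock (bwdM g) p) (hq : y ∈ sblock (bwdM g) q) : p = q := by
  obtain ⟨B, hB⟩ := mem_sblock_bwdM.1 hp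
  obtain ⟨B', hB'⟩ := mem_sblock_bwdM.1 hq
  rcases hB with ⟨hx, hg⟩ | ⟨hx, hg⟩ <;> rcases hB' with ⟨hx', hg'⟩ | ⟨hx', hg'⟩
  · cases posP_block_unique hπ hx hx'
    rw [← hg, ← hg']
  · exact absurd (posP_not_both hπ hx hx') (fun h => h)
  · exact absurd (posP_not_both hπ hx' hx) (fun h => h)
  · cases posP_block_unique hπ hx hx'
    apply flipP_inj
    rw [← hg, ← hg']

lemma cond_bwdM (hπ : IsBnPartition n π) (hz : NoZeroBlock π) {j : ℕ}
    {g : ∀ B : {B // B ∈ posP π}, {x // x ∈ B.1} → Fin j × Bool}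
    (hg : ∀ B, Function.Injective (g B)) : Cond n π (bwdM g) := by
  refine ⟨?_, ?_, ?_⟩
  · intro s y hy
    obtain ⟨B, ⟨hx, -⟩ | ⟨hx, -⟩⟩ := mem_bwdM.1 hy
    · exact hπ.2.1 B.1 (posP_subset B.2) hx
    · simpa using neg_mem_pmSet (hπ.2.1 B.1 (posP_subset B.2) hx)
  · intro y hy
    obtain ⟨C, ⟨hC, hyC⟩, -⟩ := hπ.2.2.1 y hy
    obtain ⟨B₀, hB₀, hrep⟩ := exists_posRep hπ hz hC
    have hex : ∃ p : Fin j × Bool, y ∈ sblock (bwdM g) p := by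
      rcases hrep with rfl | rfl
      · exact ⟨g ⟨C, hB₀⟩ ⟨y, hyC⟩, mem_sblock_bwdM.2 ⟨⟨C, hB₀⟩, Or.inl ⟨hyC, rfl⟩⟩⟩
      · have hyB : -y ∈ B₀ := mem_negBlock.1 hyC
        refine ⟨flipP (g ⟨B₀, hB₀⟩ ⟨-y, hyB⟩),
          mem_sblock_bwdM.2 ⟨⟨B₀, hB₀⟩, Or.inr ⟨hyB, ?_⟩⟩⟩
        rw [flipP_flipP]
    obtain ⟨p, hp⟩ := hex
    exact ⟨p, hp, fun q hq => sblock_bwdM_unique hπ hq hp⟩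
  · intro B hB p
    rw [Finset.card_le_one]
    intro x hx y hy
    rw [Finset.mem_inter] at hx hy
    obtain ⟨B₀, hB₀, hrep⟩ := exists_posRep hπ hz hB
    obtain ⟨Bx, hBx⟩ := mem_sblock_bwdM.1 hx.2
    obtain ⟨By, hBy⟩ := mem_sblock_bwdM.1 hy.2
    rcases hrep with hrep | hrep
    · have hxB : x ∈ (⟨B₀, hB₀⟩ : {B // B ∈ posP π}).1 := hrep ▸ hx.1
      have hyB : y ∈ (⟨B₀, hB₀⟩ : {B // B ∈ posP π}).1 := hrep ▸ hy.1
      rcases hBx with ⟨hx', hg'⟩ | ⟨hx', hg'⟩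
      swap
      · exact absurd (posP_not_both hπ hxB hx') id
      rcases hBy with ⟨hy', hg''⟩ | ⟨hy', hg''⟩
      swap
      · exact absurd (posP_not_both hπ hyB hy') id
      cases posP_block_unique hπ hx' hxB
      cases posP_block_unique hπ hy' hyB
      exact congrArg Subtype.val (hg _ (hg'.trans hg''.symm))
    · have hxB : -x ∈ (⟨B₀, hB₀⟩ : {B // B ∈ posP π}).1 := mem_negBlock.1 (hrep ▸ hx.1)
      have hyB : -y ∈ (⟨B₀, hB₀⟩ : {B // B ∈ posP π}).1 := mem_negBlock.1 (hrep ▸ hy.1)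
      rcases hBx with ⟨hx', hg'⟩ | ⟨hx', hg'⟩
      · exact absurd (posP_not_both hπ hx' hxB) id
      rcases hBy with ⟨hy', hg''⟩ | ⟨hy', hg''⟩
      · exact absurd (posP_not_both hπ hy' hyB) id
      cases posP_block_unique hπ hx' hxB
      cases posP_block_unique hπ hy' hyB
      have h5 : -x = -y := congrArg Subtype.val (hg _ (hg'.trans hg''.symm))
      omega


lemma mem_TFam {j : ℕ} {g : ∀ B : {B // B ∈ posP π}, {x // x ∈ B.1} → Fin j × Bool} :
    g ∈ TFam π j ↔ ∀ B, Function.Injective (g B) := by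
  classical
  unfold TFam
  constructor
  · intro h; exact (Finset.mem_filter.1 h).2
  · intro h; exact Finset.mem_filter.2 ⟨Finset.mem_univ _, h⟩

lemma fwdM_mem_TFam (hπ : IsBnPartition n π) {j : ℕ} {v : Fin j → Finset ℤ}
    (hv : Cond n π v) : fwdM hπ v hv ∈ TFam π j := by
  rw [mem_TFam]
  intro B x y hxy
  set p := fwdM hπ v hv B x with hp
  have h1 : x.1 ∈ sblock v p := chi_spec _
  have h2 : y.1 ∈ sblock v p := hxy ▸ chi_spec _
  have hB : B.1 ∈ π := posP_subset B.2
  have hle := hv.2.2 B.1 hB p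
  rw [Finset.card_le_one] at hle
  exact Subtype.ext (hle x.1 (Finset.mem_inter.2 ⟨x.2, h1⟩) y.1 (Finset.mem_inter.2 ⟨y.2, h2⟩))

lemma bwdM_fwdM (hπ : IsBnPartition n π) (hz : NoZeroBlock π) {j : ℕ}
    {v : Fin j → Finset ℤ} (hv : Cond n π v) : bwdM (fwdM hπ v hv) = v := by
  funext s
  ext y
  have hblock : sblock (bwdM (fwdM hπ v hv)) (s, true) = bwdM (fwdM hπ v hv) s := rfl
  rw [← hblock, mem_sblock_bwdM]
  constructor
  · rintro ⟨B, ⟨hx, hg⟩ | ⟨hx, hg⟩⟩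
    · have := chi_spec (v := v) (x := y)
        (hv.2.1 y (hπ.2.1 B.1 (posP_subset B.2) hx)).exists
      rw [show chi v y _ = (s, true) from hg] at this
      exact this
    · have := chi_spec (v := v) (x := -y)
        (hv.2.1 (-y) (hπ.2.1 B.1 (posP_subset B.2) hx)).exists
      rw [show chi v (-y) _ = flipP (s, true) from hg] at this
      have h2 : -y ∈ negBlock (v s) := this
      rw [mem_negBlock, neg_neg] at h2
      exact h2
  · intro hy
    have hyp : y ∈ pmSet n := hv.1 s hy
    obtain ⟨C, ⟨hC, hyC⟩, -⟩ := hπ.2.2.1 y hyp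
    obtain ⟨B₀, hB₀, hrep⟩ := exists_posRep hπ hz hC
    rcases hrep with hrep | hrep
    · have hyB : y ∈ (⟨B₀, hB₀⟩ : {B // B ∈ posP π}).1 := hrep ▸ hyC
      refine ⟨⟨B₀, hB₀⟩, Or.inl ⟨hyB, ?_⟩⟩
      exact chi_eq hv hyp (p := (s, true)) hy _
    · have hyB : -y ∈ (⟨B₀, hB₀⟩ : {B // B ∈ posP π}).1 := mem_negBlock.1 (hrep ▸ hyC)
      refine ⟨⟨B₀, hB₀⟩, Or.inr ⟨hyB, ?_⟩⟩
      have hny : -y ∈ sblock v (s, false) := by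
        show -y ∈ negBlock (v s)
        rw [mem_negBlock, neg_neg]
        exact hy
      have hnyp : -y ∈ pmSet n := neg_mem_pmSet hyp
      exact chi_eq hv hnyp (p := (s, false)) hny _

lemma fwdM_bwdM (hπ : IsBnPartition n π) (hz : NoZeroBlock π) {j : ℕ}
    {g : ∀ B : {B // B ∈ posP π}, {x // x ∈ B.1} → Fin j × Bool}
    (hg : ∀ B, Function.Injective (g B)) (hv : Cond n π (bwdM g)) :
    fwdM hπ (bwdM g) hv = g := by
  funext B x
  have hmem : x.1 ∈ sblock (bwdM g) (g B x) :=
    mem_sblock_bwdM.2 ⟨B, Or.inl ⟨x.2, rfl⟩⟩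
  exact chi_eq hv (hπ.2.1 B.1 (posP_subset B.2) x.2) hmem _

lemma card_Mset_eq_card_TFam (hπ : IsBnPartition n π) (hz : NoZeroBlock π) (j : ℕ) :
    (Mset n π j).card = (TFam π j).card := by
  refine Finset.card_bij' (fun v hv => fwdM hπ v (mem_Mset.1 hv))
    (fun g hg => bwdM g) (fun v hv => fwdM_mem_TFam hπ (mem_Mset.1 hv))
    (fun g hg => mem_Mset.2 (cond_bwdM hπ hz (mem_TFam.1 hg))) ?_ ?_
  · intro v hv
    exact bwdM_fwdM hπ hz (mem_Mset.1 hv)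
  · intro g hg
    exact fwdM_bwdM hπ hz (mem_TFam.1 hg) _

lemma card_TFam (j : ℕ) :
    (TFam π j).card = ∏ B ∈ posP π, (2 * j).descFactorial B.card := by
  classical
  have h1 : (TFam π j).card
      = Fintype.card {g : ∀ B : {B // B ∈ posP π}, {x // x ∈ B.1} → Fin j × Bool //
          ∀ B, Function.Injective (g B)} := by
    rw [Fintype.card_subtype]
    unfold TFam
    congr 1
  rw [h1]
  have e1 : {g : ∀ B : {B // B ∈ posP π}, {x // x ∈ B.1} → Fin j × Bool //
        ∀ B, Function.Injective (g B)}
      ≃ ∀ B : {B // B ∈ posP π}, ({x // x ∈ B.1} ↪ Fin j × Bool) :=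
    Equiv.subtypePiEquivPi.trans
      (Equiv.piCongrRight (fun B => Equiv.subtypeInjectiveEquivEmbedding _ _))
  rw [Fintype.card_congr e1, Fintype.card_pi]
  have h2 : ∀ B : {B // B ∈ posP π},
      Fintype.card ({x // x ∈ B.1} ↪ Fin j × Bool) = (2 * j).descFactorial B.1.card := by
    intro B
    rw [Fintype.card_embedding_eq, Fintype.card_prod, Fintype.card_fin, Fintype.card_bool,
      Fintype.card_coe, mul_comm]
  calc ∏ B : {B // B ∈ posP π}, Fintype.card ({x // x ∈ B.1} ↪ Fin j × Bool)
      = ∏ B : {B // B ∈ posP π}, (2 * j).descFactorial B.1.card :=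
        Finset.prod_congr rfl (fun B _ => h2 B)
    _ = ∏ B ∈ posP π, (2 * j).descFactorial B.card :=
        Finset.prod_coe_sort (posP π) (fun B => (2 * j).descFactorial B.card)

lemma card_Mset (hπ : IsBnPartition n π) (hz : NoZeroBlock π) {k : ℕ} {i : Fin k → ℕ}
    (hbp : blockPairSizes π i) (j : ℕ) :
    (Mset n π j).card = ∏ α : Fin k, (2 * j).descFactorial (i α) := by
  rw [card_Mset_eq_card_TFam hπ hz, card_TFam,
    prod_posP (fun m => (2 * j).descFactorial m) (posP_cards hπ hz hbp)]


/-! ### Counting fibers -/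

open Classical in
noncomputable def TFib (π' : Finset (Finset ℤ)) (j : ℕ) :
    Finset ({B // B ∈ posP π'} → Fin j × Bool) :=
  Finset.univ.filter (fun g => Function.Injective (fun B => (g B).1))

lemma mem_TFib {π' : Finset (Finset ℤ)} {j : ℕ} {g : {B // B ∈ posP π'} → Fin j × Bool} :
    g ∈ TFib π' j ↔ Function.Injective (fun B => (g B).1) := by
  classical
  unfold TFib
  constructor
  · intro h; exact (Finset.mem_filter.1 h).2
  · intro h; exact Finset.mem_filter.2 ⟨Finset.mem_univ _, h⟩

open Classical in
noncomputable def bwdF {j : ℕ} (π' : Finset (Finset ℤ))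
    (g : {B // B ∈ posP π'} → Fin j × Bool) : Fin j → Finset ℤ :=
  fun s => (posP π').attach.biUnion (fun B =>
    if g B = (s, true) then B.1 else if g B = (s, false) then negBlock B.1 else ∅)

lemma negBlock_biUnion {α : Type*} (s : Finset α) (t : α → Finset ℤ) :
    negBlock (s.biUnion t) = s.biUnion (fun a => negBlock (t a)) := by
  classical
  ext y
  simp [mem_negBlock, Finset.mem_biUnion]

lemma sblock_bwdF {j : ℕ} {g : {B // B ∈ posP π'} → Fin j × Bool} (p : Fin j × Bool) :
    sblock (bwdF π' g) p = (posP π').attach.biUnion (fun B =>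
      if g B = p then B.1 else if g B = flipP p then negBlock B.1 else ∅) := by
  classical
  rcases p with ⟨s, b⟩
  cases b
  · show negBlock (bwdF π' g s) = _
    unfold bwdF
    rw [negBlock_biUnion]
    refine Finset.biUnion_congr rfl (fun B _ => ?_)
    by_cases h1 : g B = (s, true)
    · simp [h1, flipP]
    · by_cases h2 : g B = (s, false)
      · simp [h1, h2, flipP, negBlock_negBlock]
      · simp [h1, h2, flipP, negBlock_empty]
  · show bwdF π' g s = _
    unfold bwdF
    refine Finset.biUnion_congr rfl (fun B _ => ?_)
    rfl

lemma mem_sblock_bwdF {j : ℕ} {g : {B // B ∈ posP π'} → Fin j × Bool}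
    {p : Fin j × Bool} {y : ℤ} :
    y ∈ sblock (bwdF π' g) p ↔ ∃ B : {B // B ∈ posP π'},
      (g B = p ∧ y ∈ B.1) ∨ (g B = flipP p ∧ y ∈ negBlock B.1) := by
  classical
  rw [sblock_bwdF]
  simp only [Finset.mem_biUnion, Finset.mem_attach, true_and]
  constructor
  · rintro ⟨B, hB⟩
    refine ⟨B, ?_⟩
    by_cases h1 : g B = p
    · rw [if_pos h1] at hB; exact Or.inl ⟨h1, hB⟩
    · by_cases h2 : g B = flipP p
      · rw [if_neg h1, if_pos h2] at hB; exact Or.inr ⟨h2, hB⟩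
      · rw [if_neg h1, if_neg h2] at hB; exact absurd hB (Finset.notMem_empty y)
  · rintro ⟨B, ⟨h1, hy⟩ | ⟨h2, hy⟩⟩
    · refine ⟨B, ?_⟩; rw [if_pos h1]; exact hy
    · refine ⟨B, ?_⟩
      have h1 : g B ≠ p := by
        rw [h2]; exact flipP_ne p
      rw [if_neg h1, if_pos h2]; exact hy

lemma sblock_bwdF_eq_of {j : ℕ} {g : {B // B ∈ posP π'} → Fin j × Bool}
    (hg : Function.Injective (fun B => (g B).1)) {B : {B // B ∈ posP π'}}
    {p : Fin j × Bool} (h : g B = p) : sblock (bwdF π' g) p = B.1 := by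
  ext y
  rw [mem_sblock_bwdF]
  constructor
  · rintro ⟨B', ⟨h1, hy⟩ | ⟨h2, hy⟩⟩
    · have : B' = B := hg (by show (g B').1 = (g B).1; rw [h1, h])
      exact this ▸ hy
    · have hBB : B' = B := hg (by show (g B').1 = (g B).1; rw [h2, h]; rfl)
      rw [hBB] at h2
      rw [h] at h2
      exact absurd h2.symm (flipP_ne p)
  · intro hy
    exact ⟨B, Or.inl ⟨h, hy⟩⟩

lemma sblock_bwdF_eq_neg {j : ℕ} {g : {B // B ∈ posP π'} → Fin j × Bool}
    (hg : Function.Injective (fun B => (g B).1)) {B : {B // B ∈ posP π'}}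
    {p : Fin j × Bool} (h : g B = flipP p) : sblock (bwdF π' g) p = negBlock B.1 := by
  have h1 : sblock (bwdF π' g) (flipP p) = B.1 := sblock_bwdF_eq_of hg h
  have h2 : sblock (bwdF π' g) (flipP (flipP p)) = negBlock (sblock (bwdF π' g) (flipP p)) :=
    sblock_flipP _ _
  rw [flipP_flipP] at h2
  rw [h2, h1]

lemma sblock_bwdF_eq_empty {j : ℕ} {g : {B // B ∈ posP π'} → Fin j × Bool}
    {p : Fin j × Bool} (h : ∀ B, (g B).1 ≠ p.1) : sblock (bwdF π' g) p = ∅ := by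
  rw [Finset.eq_empty_iff_forall_notMem]
  intro y hy
  obtain ⟨B, ⟨h1, -⟩ | ⟨h2, -⟩⟩ := mem_sblock_bwdF.1 hy
  · exact h B (by rw [h1])
  · exact h B (by rw [h2]; rfl)


lemma eq_or_flip {j : ℕ} {q p : Fin j × Bool} (h : q.1 = p.1) : q = p ∨ q = flipP p := by
  rcases q with ⟨s, b⟩
  rcases p with ⟨s', b'⟩
  simp only at h
  subst h
  cases b <;> cases b' <;> simp [flipP]

lemma sblock_bwdF_unique (hπ' : IsBnPartition n π') {j : ℕ}
    {g : {B // B ∈ posP π'} → Fin j × Bool} {y : ℤ} {p q : Fin j × Bool}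
    (hp : y ∈ sblock (bwdF π' g) p) (hq : y ∈ sblock (bwdF π' g) q) : p = q := by
  obtain ⟨B, hB⟩ := mem_sblock_bwdF.1 hp
  obtain ⟨B', hB'⟩ := mem_sblock_bwdF.1 hq
  rcases hB with ⟨h1, hy⟩ | ⟨h1, hy⟩ <;> rcases hB' with ⟨h2, hy'⟩ | ⟨h2, hy'⟩
  · cases posP_block_unique hπ' hy hy'
    rw [← h1, ← h2]
  · exact absurd (posP_not_both hπ' hy (mem_negBlock.1 hy')) id
  · exact absurd (posP_not_both hπ' hy' (mem_negBlock.1 hy)) id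
  · cases posP_block_unique hπ' (mem_negBlock.1 hy) (mem_negBlock.1 hy')
    exact flipP_inj (h1.symm.trans h2)

lemma cond_bwdF (hπ : IsBnPartition n π) (hπ' : IsBnPartition n π')
    (hz' : NoZeroBlock π') (hmin : MinInt n π π') {j : ℕ}
    {g : {B // B ∈ posP π'} → Fin j × Bool}
    (hg : Function.Injective (fun B => (g B).1)) : Cond n π (bwdF π' g) := by
  refine ⟨?_, ?_, ?_⟩
  · intro s y hy
    have h0 : y ∈ sblock (bwdF π' g) (s, true) := hy
    obtain ⟨B, ⟨-, hy'⟩ | ⟨-, hy'⟩⟩ := mem_sblock_bwdF.1 h0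
    · exact hπ'.2.1 B.1 (posP_subset B.2) hy'
    · exact negBlock_subset_pmSet (hπ'.2.1 B.1 (posP_subset B.2)) hy'
  · intro y hy
    obtain ⟨C, ⟨hC, hyC⟩, -⟩ := hπ'.2.2.1 y hy
    obtain ⟨B₀, hB₀, hrep⟩ := exists_posRep hπ' hz' hC
    have hex : ∃ p, y ∈ sblock (bwdF π' g) p := by
      rcases hrep with hrep | hrep
      · exact ⟨g ⟨B₀, hB₀⟩, mem_sblock_bwdF.2 ⟨⟨B₀, hB₀⟩, Or.inl ⟨rfl, hrep ▸ hyC⟩⟩⟩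
      · exact ⟨flipP (g ⟨B₀, hB₀⟩), mem_sblock_bwdF.2 ⟨⟨B₀, hB₀⟩,
          Or.inr ⟨(flipP_flipP _).symm, hrep ▸ hyC⟩⟩⟩
    obtain ⟨p, hp⟩ := hex
    exact ⟨p, hp, fun q hq => sblock_bwdF_unique hπ' hq hp⟩
  · intro B hB p
    by_cases hex : ∃ B', (g B').1 = p.1
    · obtain ⟨B', hB'⟩ := hex
      rcases eq_or_flip hB' with h | h
      · rw [sblock_bwdF_eq_of hg h]
        exact (minInt_iff hπ hπ').1 hmin B hB B'.1 (posP_subset B'.2)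
      · rw [sblock_bwdF_eq_neg hg h]
        exact (minInt_iff hπ hπ').1 hmin B hB (negBlock B'.1)
          (hπ'.2.2.2.1 B'.1 (posP_subset B'.2))
    · push_neg at hex
      rw [sblock_bwdF_eq_empty hex]
      simp

lemma indP_bwdF (hπ' : IsBnPartition n π') (hz' : NoZeroBlock π') {j : ℕ}
    {g : {B // B ∈ posP π'} → Fin j × Bool}
    (hg : Function.Injective (fun B => (g B).1)) : indP (bwdF π' g) = π' := by
  ext C
  rw [mem_indP]
  constructor
  · rintro ⟨⟨p, hp⟩, hne⟩
    by_cases hex : ∃ B', (g B').1 = p.1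
    · obtain ⟨B', hB'⟩ := hex
      rcases eq_or_flip hB' with h | h
      · rw [← hp, sblock_bwdF_eq_of hg h]; exact posP_subset B'.2
      · rw [← hp, sblock_bwdF_eq_neg hg h]
        exact hπ'.2.2.2.1 B'.1 (posP_subset B'.2)
    · push_neg at hex
      rw [sblock_bwdF_eq_empty hex] at hp
      exact absurd hp.symm hne
  · intro hC
    obtain ⟨B₀, hB₀, hrep⟩ := exists_posRep hπ' hz' hC
    have hne : C ≠ ∅ := hπ'.1 C hC
    rcases hrep with hrep | hrep
    · refine ⟨⟨g ⟨B₀, hB₀⟩, ?_⟩, hne⟩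
      rw [sblock_bwdF_eq_of hg rfl, hrep]
    · refine ⟨⟨flipP (g ⟨B₀, hB₀⟩), ?_⟩, hne⟩
      rw [sblock_bwdF_eq_neg hg (flipP_flipP _).symm, hrep]

noncomputable def fwdF {j : ℕ} (π' : Finset (Finset ℤ)) (v : Fin j → Finset ℤ)
    (hind : indP v = π') : {B // B ∈ posP π'} → Fin j × Bool :=
  fun B => (mem_indP.1 (show B.1 ∈ indP v by rw [hind]; exact posP_subset B.2)).1.choose

lemma fwdF_spec {j : ℕ} {π' : Finset (Finset ℤ)} {v : Fin j → Finset ℤ}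
    (hind : indP v = π') (B : {B // B ∈ posP π'}) :
    sblock v (fwdF π' v hind B) = B.1 :=
  (mem_indP.1 (show B.1 ∈ indP v by rw [hind]; exact posP_subset B.2)).1.choose_spec

lemma fwdF_eq {j : ℕ} {v : Fin j → Finset ℤ} (hv : Cond n π v)
    (hπ' : IsBnPartition n π') (hind : indP v = π') {B : {B // B ∈ posP π'}}
    {p : Fin j × Bool} (hp : sblock v p = B.1) : fwdF π' v hind B = p := by
  have h1 := fwdF_spec hind B
  have hne : sblock v (fwdF π' v hind B) ≠ ∅ := by
    rw [h1]; exact hπ'.1 B.1 (posP_subset B.2)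
  exact sblock_unique hv (h1.trans hp.symm) hne

lemma fwdF_mem_TFib {j : ℕ} {v : Fin j → Finset ℤ} (hv : Cond n π v)
    (hπ' : IsBnPartition n π') (hind : indP v = π') : fwdF π' v hind ∈ TFib π' j := by
  rw [mem_TFib]
  intro B B' h
  have h1 := fwdF_spec hind B
  have h2 := fwdF_spec hind B'
  rcases eq_or_flip (h : (fwdF π' v hind B).1 = (fwdF π' v hind B').1) with he | he
  · apply Subtype.ext
    rw [← h1, ← h2, he]
  · exfalso
    have hB : B.1 = negBlock B'.1 := by
      rw [← h1, he, sblock_flipP, h2]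
    exact posRep_ne_neg B.2 B'.2 hB

lemma fwdF_bwdF (hπ : IsBnPartition n π) (hπ' : IsBnPartition n π')
    (hz' : NoZeroBlock π') (hmin : MinInt n π π') {j : ℕ}
    {g : {B // B ∈ posP π'} → Fin j × Bool}
    (hg : Function.Injective (fun B => (g B).1)) (hind : indP (bwdF π' g) = π') :
    fwdF π' (bwdF π' g) hind = g := by
  funext B
  exact fwdF_eq (cond_bwdF hπ hπ' hz' hmin hg) hπ' hind (sblock_bwdF_eq_of hg rfl)

lemma bwdF_fwdF (hπ' : IsBnPartition n π') (hz' : NoZeroBlock π') {j : ℕ}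
    {v : Fin j → Finset ℤ} (hv : Cond n π v) (hind : indP v = π') :
    bwdF π' (fwdF π' v hind) = v := by
  funext s
  set g := fwdF π' v hind with hgdef
  have hg : Function.Injective (fun B => (g B).1) := mem_TFib.1 (fwdF_mem_TFib hv hπ' hind)
  show bwdF π' g s = v s
  have hb : bwdF π' g s = sblock (bwdF π' g) (s, true) := rfl
  by_cases hne : v s = ∅
  · rw [hb, sblock_bwdF_eq_empty ?_, hne]
    intro B hBs
    rcases eq_or_flip (hBs : (g B).1 = ((s, true) : Fin j × Bool).1) with h | h
    · have h1 := fwdF_spec hind B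
      rw [hgdef] at h
      rw [h] at h1
      exact hπ'.1 B.1 (posP_subset B.2) (by rw [← h1]; exact hne)
    · have h1 := fwdF_spec hind B
      rw [hgdef] at h
      rw [h] at h1
      have : negBlock (v s) = B.1 := h1
      rw [hne, negBlock_empty] at this
      exact hπ'.1 B.1 (posP_subset B.2) this.symm
  · have hvs : v s ∈ π' := by
      rw [← hind]
      exact mem_indP.2 ⟨⟨(s, true), rfl⟩, hne⟩
    obtain ⟨B₀, hB₀, hrep⟩ := exists_posRep hπ' hz' hvs
    rcases hrep with hrep | hrep
    · have hsp : sblock v (s, true) = (⟨B₀, hB₀⟩ : {B // B ∈ posP π'}).1 := by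
        show v s = B₀
        exact hrep
      have hgB : g ⟨B₀, hB₀⟩ = (s, true) := fwdF_eq hv hπ' hind hsp
      rw [hb, sblock_bwdF_eq_of hg hgB]
      exact hrep.symm
    · have hsp : sblock v (s, false) = (⟨B₀, hB₀⟩ : {B // B ∈ posP π'}).1 := by
        show negBlock (v s) = B₀
        rw [hrep, negBlock_negBlock]
      have hgB : g ⟨B₀, hB₀⟩ = (s, false) := fwdF_eq hv hπ' hind hsp
      rw [hb, sblock_bwdF_eq_neg hg (by rw [hgB]; rfl)]
      exact hrep.symm

lemma card_fiber_eq_card_TFib (hπ : IsBnPartition n π) {π' : Finset (Finset ℤ)}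
    (h' : π' ∈ PF n π) (j : ℕ) :
    ((Mset n π j).filter (fun v => indP v = π')).card = (TFib π' j).card := by
  classical
  obtain ⟨hπ', hz', hmin⟩ := mem_PF.1 h'
  refine Finset.card_bij' (fun v hv => fwdF π' v (Finset.mem_filter.1 hv).2)
    (fun g hg => bwdF π' g) ?_ ?_ ?_ ?_
  · intro v hv
    exact fwdF_mem_TFib (mem_Mset.1 (Finset.mem_filter.1 hv).1) hπ' _
  · intro g hg
    exact Finset.mem_filter.2 ⟨mem_Mset.2 (cond_bwdF hπ hπ' hz' hmin (mem_TFib.1 hg)),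
      indP_bwdF hπ' hz' (mem_TFib.1 hg)⟩
  · intro v hv
    exact bwdF_fwdF hπ' hz' (mem_Mset.1 (Finset.mem_filter.1 hv).1) _
  · intro g hg
    exact fwdF_bwdF hπ hπ' hz' hmin (mem_TFib.1 hg) _

lemma card_TFib (π' : Finset (Finset ℤ)) (j : ℕ) :
    (TFib π' j).card = 2 ^ (posP π').card * j.descFactorial (posP π').card := by
  classical
  have h1 : (TFib π' j).card = Fintype.card {g : {B // B ∈ posP π'} → Fin j × Bool //
      Function.Injective (fun B => (g B).1)} := by
    rw [Fintype.card_subtype]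
    unfold TFib
    congr 1
  rw [h1]
  have e : {g : {B // B ∈ posP π'} → Fin j × Bool //
        Function.Injective (fun B => (g B).1)}
      ≃ ({B // B ∈ posP π'} ↪ Fin j) × ({B // B ∈ posP π'} → Bool) :=
    ⟨fun g => (⟨fun B => (g.1 B).1, g.2⟩, fun B => (g.1 B).2),
     fun x => ⟨fun B => (x.1 B, x.2 B), fun B B' h => x.1.injective h⟩,
     fun g => rfl, fun x => rfl⟩
  rw [Fintype.card_congr e, Fintype.card_prod, Fintype.card_embedding_eq,
    Fintype.card_fun, Fintype.card_coe, Fintype.card_fin, Fintype.card_bool, mul_comm]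

lemma count_identity (hπ : IsBnPartition n π) (hz : NoZeroBlock π) {k : ℕ}
    {i : Fin k → ℕ} (hbp : blockPairSizes π i) (j : ℕ) :
    (∏ α : Fin k, (2 * j).descFactorial (i α))
      = ∑ π' ∈ PF n π, 2 ^ (posP π').card * j.descFactorial (posP π').card := by
  classical
  rw [← card_Mset hπ hz hbp j]
  rw [Finset.card_eq_sum_card_fiberwise
    (f := fun v => indP v) (t := PF n π)
    (fun v hv => indP_mem_PF hπ (mem_Mset.1 hv))]
  exact Finset.sum_congr rfl
    (fun π' h' => by rw [card_fiber_eq_card_TFib hπ h' j, card_TFib])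


/-! ### Coefficient extraction -/

lemma coeff_prod_pow {k : ℕ} (m : ℕ) (s : Finset (Fin k)) (d : Fin k →₀ ℕ) :
    MvPolynomial.coeff d ((∏ α ∈ s, (1 + MvPolynomial.X α) ^ m) : MvPolynomial (Fin k) ℝ)
      = if ∀ α, α ∉ s → d α = 0 then ∏ α ∈ s, (m.choose (d α) : ℝ) else 0 := by
  classical
  induction s using Finset.induction generalizing d with
  | empty =>
    simp only [Finset.prod_empty, MvPolynomial.coeff_one]
    have hiff : (0 = d) ↔ (∀ α, α ∉ (∅ : Finset (Fin k)) → d α = 0) := by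
      constructor
      · rintro rfl
        intro α _
        rfl
      · intro h
        exact (Finsupp.ext (fun α => (h α (Finset.notMem_empty α)).symm))
    rw [if_congr hiff rfl rfl]
  | insert a s ha ih =>
    rw [Finset.prod_insert ha]
    have hexp : ((1 + MvPolynomial.X a) ^ m : MvPolynomial (Fin k) ℝ)
        = ∑ t ∈ Finset.range (m + 1),
            MvPolynomial.monomial (Finsupp.single a t) ((m.choose t : ℝ)) := by
      rw [add_comm, add_pow]
      refine Finset.sum_congr rfl (fun t ht => ?_)
      rw [one_pow, mul_one, ← MvPolynomial.C_mul_X_pow_eq_monomial, mul_comm]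
      congr 1
    rw [hexp, Finset.sum_mul, MvPolynomial.coeff_sum]
    have hterm : ∀ t ∈ Finset.range (m + 1),
        MvPolynomial.coeff d
          ((MvPolynomial.monomial (Finsupp.single a t) ((m.choose t : ℝ)))
            * ∏ α ∈ s, (1 + MvPolynomial.X α) ^ m)
        = if t = d a then
            (m.choose t : ℝ) *
              (if ∀ α, α ∉ insert a s → d α = 0 then ∏ α ∈ s, (m.choose (d α) : ℝ) else 0)
          else 0 := by
      intro t ht
      rw [MvPolynomial.coeff_monomial_mul', ih]
      by_cases hta : t = d a
      · subst hta
        rw [if_pos (Finsupp.single_le_iff.2 le_rfl), if_pos rfl]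
        · congr 1
          have hcond : (∀ α, α ∉ s → (d - Finsupp.single a (d a)) α = 0)
              ↔ (∀ α, α ∉ insert a s → d α = 0) := by
            constructor
            · intro h α hα
              have h1 : α ∉ s := fun hs => hα (Finset.mem_insert_of_mem hs)
              have h2 : α ≠ a := fun he => hα (he ▸ Finset.mem_insert_self a s)
              have := h α h1
              rwa [Finsupp.tsub_apply, Finsupp.single_apply, if_neg (fun he => h2 he.symm),
                Nat.sub_zero] at this
            · intro h α hα
              by_cases he : α = a
              · subst he
                rw [Finsupp.tsub_apply, Finsupp.single_apply, if_pos rfl]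
                omega
              · rw [Finsupp.tsub_apply, Finsupp.single_apply, if_neg (fun hh => he hh.symm),
                  Nat.sub_zero]
                exact h α (by simp [he, hα])
          rw [if_congr hcond rfl rfl]
          split_ifs with hc
          · refine Finset.prod_congr rfl (fun α hα => ?_)
            have h2 : α ≠ a := fun he => ha (he ▸ hα)
            rw [Finsupp.tsub_apply, Finsupp.single_apply, if_neg (fun hh => h2 hh.symm),
              Nat.sub_zero]
          · rfl
      · rw [if_neg hta]
        by_cases hle : Finsupp.single a t ≤ d
        · rw [if_pos hle]
          have hlt : t < d a := by
            have := Finsupp.single_le_iff.1 hle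
            omega
          have hcond : ¬ (∀ α, α ∉ s → (d - Finsupp.single a t) α = 0) := by
            intro h
            have := h a ha
            rw [Finsupp.tsub_apply, Finsupp.single_apply, if_pos rfl] at this
            omega
          rw [if_neg hcond, mul_zero]
        · rw [if_neg hle]
    rw [Finset.sum_congr rfl hterm]
    rw [Finset.sum_ite_eq' (Finset.range (m + 1)) (d a)
      (fun t => (m.choose t : ℝ) *
        (if ∀ α, α ∉ insert a s → d α = 0 then ∏ α ∈ s, (m.choose (d α) : ℝ) else 0))]
    by_cases hmem : d a ∈ Finset.range (m + 1)
    · rw [if_pos hmem]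
      split_ifs with hc
      · rw [Finset.prod_insert ha]
      · rw [mul_zero]
    · rw [if_neg hmem]
      have hgt : m < d a := by
        simp only [Finset.mem_range] at hmem
        omega
      split_ifs with hc
      · rw [Finset.prod_insert ha, Nat.choose_eq_zero_of_lt hgt]
        simp
      · rfl

lemma coeff_prod_pow_univ {k : ℕ} (m : ℕ) (i : Fin k → ℕ) :
    MvPolynomial.coeff (Finsupp.equivFunOnFinite.symm i)
      ((∏ α : Fin k, (1 + MvPolynomial.X α) ^ m) : MvPolynomial (Fin k) ℝ)
      = ∏ α : Fin k, (m.choose (i α) : ℝ) := by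
  rw [coeff_prod_pow m Finset.univ (Finsupp.equivFunOnFinite.symm i),
    if_pos (fun α hα => absurd (Finset.mem_univ α) hα)]
  rfl


/-! ### Analytic facts -/

lemma descFactorial_mul_factorial {j p : ℕ} (h : p ≤ j) :
    j.descFactorial p * (j - p).factorial = j.factorial := by
  rw [Nat.descFactorial_eq_factorial_mul_choose, ← Nat.choose_mul_factorial_mul_factorial h]
  ring

noncomputable def wseq (p : ℕ) (j : ℕ) : ℝ :=
  if p ≤ j then ((1:ℝ)/2) ^ (j - p) / (j - p).factorial else 0

lemma tseq_eq_wseq (p j : ℕ) :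
    ((2:ℝ) ^ p * (j.descFactorial p : ℝ)) / ((2:ℝ) ^ j * (j.factorial : ℝ)) = wseq p j := by
  unfold wseq
  by_cases h : p ≤ j
  · rw [if_pos h]
    have h1 : (j.descFactorial p : ℝ) * ((j - p).factorial : ℝ) = (j.factorial : ℝ) := by
      exact_mod_cast congrArg (Nat.cast (R := ℝ)) (descFactorial_mul_factorial h)
    have h2 : (2:ℝ) ^ p * 2 ^ (j - p) = 2 ^ j := by
      rw [← pow_add]
      congr 1
      omega
    have hb1 : ((2:ℝ) ^ j * (j.factorial : ℝ)) ≠ 0 := by positivity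
    have hb2 : ((j - p).factorial : ℝ) ≠ 0 := by positivity
    rw [div_pow, one_pow, div_div, div_eq_div_iff hb1 (by positivity), one_mul]
    calc (2:ℝ) ^ p * (j.descFactorial p : ℝ) * ((2:ℝ) ^ (j-p) * ((j-p).factorial : ℝ))
        = ((2:ℝ) ^ p * 2 ^ (j - p)) * ((j.descFactorial p : ℝ) * ((j - p).factorial : ℝ)) := by
          ring
      _ = (2:ℝ) ^ j * (j.factorial : ℝ) := by rw [h1, h2]
  · rw [if_neg h]
    have h0 : j.descFactorial p = 0 := Nat.descFactorial_eq_zero_iff_lt.2 (by omega)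
    rw [h0]
    simp

lemma wseq_shift (p : ℕ) : (fun j => wseq p (j + p)) = fun j => ((1:ℝ)/2) ^ j / j.factorial := by
  funext j
  unfold wseq
  rw [if_pos (by omega)]
  simp [Nat.add_sub_cancel]

lemma summable_wseq (p : ℕ) : Summable (wseq p) := by
  rw [← summable_nat_add_iff p]
  rw [wseq_shift]
  exact Real.summable_pow_div_factorial _

lemma tsum_wseq (p : ℕ) : ∑' j, wseq p j = Real.exp (1/2) := by
  have hs := summable_wseq p
  have h0 : ∑ j ∈ Finset.range p, wseq p j = 0 := by
    apply Finset.sum_eq_zero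
    intro j hj
    rw [Finset.mem_range] at hj
    unfold wseq
    rw [if_neg (by omega)]
  have h1 := Summable.sum_add_tsum_nat_add (f := wseq p) p hs
  rw [h0, zero_add] at h1
  rw [← h1, wseq_shift]
  rw [Real.exp_eq_exp_ℝ, NormedSpace.exp_eq_tsum_div]

end S7

open S7 in
/-- The total number of zero-block-free `Bₙ`-partitions minimally intersecting a given
zero-block-free `Bₙ`-partition `π` of type `(i₁,…,i_k)`:
`N^D(π) = (𝐢!/√e) [x^𝐢] exp(½∏(1+xα)²)`, the exponential read as the convergent series
`Σ_j (1/(2j)!!) ∏(1+xα)^{2j}`; equivalently `N^D(π) = (𝐢!/√e) Σ_j (1/(2j)!!) ∏ C(2j, i_α)`. -/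
theorem stmt7 (n : ℕ) (hn : 1 ≤ n) (k : ℕ) (hk : 1 ≤ k) (i : Fin k → ℕ)
    (π : Finset (Finset ℤ)) (hπ : IsBnPartition n π) (hz : NoZeroBlock π)
    (hbp : blockPairSizes π i) :
    Summable (fun j : ℕ =>
        (1 / ((2 : ℝ) ^ j * j.factorial)) *
          MvPolynomial.coeff (Finsupp.equivFunOnFinite.symm i)
            ((∏ α : Fin k, (1 + MvPolynomial.X α) ^ (2 * j)) : MvPolynomial (Fin k) ℝ)) ∧
    (Set.ncard {π' : Finset (Finset ℤ) |
        IsBnPartition n π' ∧ NoZeroBlock π' ∧ MinInt n π π'} : ℝ)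
      = ((∏ α : Fin k, (i α).factorial : ℕ) : ℝ) / Real.sqrt (Real.exp 1)
        * ∑' j : ℕ, (1 / ((2 : ℝ) ^ j * j.factorial)) *
            MvPolynomial.coeff (Finsupp.equivFunOnFinite.symm i)
              ((∏ α : Fin k, (1 + MvPolynomial.X α) ^ (2 * j)) : MvPolynomial (Fin k) ℝ) ∧
    (Set.ncard {π' : Finset (Finset ℤ) |
        IsBnPartition n π' ∧ NoZeroBlock π' ∧ MinInt n π π'} : ℝ)
      = ((∏ α : Fin k, (i α).factorial : ℕ) : ℝ) / Real.sqrt (Real.exp 1)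
        * ∑' j : ℕ, (1 / ((2 : ℝ) ^ j * j.factorial)) *
            ∏ α : Fin k, ((2 * j).choose (i α) : ℝ) := by
  classical
  have hco : ∀ j : ℕ,
      MvPolynomial.coeff (Finsupp.equivFunOnFinite.symm i)
        ((∏ α : Fin k, (1 + MvPolynomial.X α) ^ (2 * j)) : MvPolynomial (Fin k) ℝ)
      = ∏ α : Fin k, ((2 * j).choose (i α) : ℝ) := fun j => coeff_prod_pow_univ (2 * j) i
  have hsetPF : {π' : Finset (Finset ℤ) | IsBnPartition n π' ∧ NoZeroBlock π' ∧ MinInt n π π'}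
      = ↑(PF n π) := by
    ext π'
    rw [Set.mem_setOf_eq, Finset.mem_coe, mem_PF]
  have hN : ((Set.ncard {π' : Finset (Finset ℤ) |
        IsBnPartition n π' ∧ NoZeroBlock π' ∧ MinInt n π π'} : ℕ) : ℝ)
      = ((PF n π).card : ℝ) := by rw [hsetPF, Set.ncard_coe_finset]
  have key : ∀ j : ℕ,
      ((∏ α : Fin k, (i α).factorial : ℕ) : ℝ) *
        ((1 / ((2:ℝ) ^ j * j.factorial)) * ∏ α : Fin k, ((2 * j).choose (i α) : ℝ))
      = ∑ π' ∈ PF n π,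
          ((2:ℝ) ^ (posP π').card * (j.descFactorial (posP π').card : ℝ))
            / ((2:ℝ) ^ j * (j.factorial : ℝ)) := by
    intro j
    have hnat := count_identity hπ hz hbp j
    have hprod : ((∏ α : Fin k, (2 * j).descFactorial (i α) : ℕ) : ℝ)
        = ((∏ α : Fin k, (i α).factorial : ℕ) : ℝ)
            * ∏ α : Fin k, ((2 * j).choose (i α) : ℝ) := by
      push_cast
      rw [← Finset.prod_mul_distrib]
      refine Finset.prod_congr rfl (fun α _ => ?_)
      rw [Nat.descFactorial_eq_factorial_mul_choose]
      push_cast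
      ring
    rw [← Finset.sum_div]
    rw [show (∑ π' ∈ PF n π, (2:ℝ) ^ (posP π').card * (j.descFactorial (posP π').card : ℝ))
        = ((∑ π' ∈ PF n π, 2 ^ (posP π').card * j.descFactorial (posP π').card : ℕ) : ℝ) by
      push_cast; rfl]
    rw [← hnat, hprod]
    ring
  have hsummand : ∀ π' ∈ PF n π, Summable (fun j : ℕ =>
      ((2:ℝ) ^ (posP π').card * (j.descFactorial (posP π').card : ℝ))
        / ((2:ℝ) ^ j * (j.factorial : ℝ))) := by
    intro π' _
    have h := summable_wseq (posP π').card
    rwa [show wseq (posP π').card = fun j : ℕ =>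
      ((2:ℝ) ^ (posP π').card * (j.descFactorial (posP π').card : ℝ))
        / ((2:ℝ) ^ j * (j.factorial : ℝ)) from
      (funext fun j => (tseq_eq_wseq _ j).symm)] at h
  have hF : Summable (fun j : ℕ => ∑ π' ∈ PF n π,
      ((2:ℝ) ^ (posP π').card * (j.descFactorial (posP π').card : ℝ))
        / ((2:ℝ) ^ j * (j.factorial : ℝ))) := summable_sum hsummand
  have hc0 : ((∏ α : Fin k, (i α).factorial : ℕ) : ℝ) ≠ 0 := by
    rw [Nat.cast_ne_zero]
    exact Finset.prod_ne_zero_iff.2 (fun α _ => (i α).factorial_ne_zero)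
  have hsa : Summable (fun j : ℕ =>
      (1 / ((2:ℝ) ^ j * j.factorial)) * ∏ α : Fin k, ((2 * j).choose (i α) : ℝ)) := by
    have h1 : (fun j : ℕ =>
          (1 / ((2:ℝ) ^ j * j.factorial)) * ∏ α : Fin k, ((2 * j).choose (i α) : ℝ))
        = fun j => (((∏ α : Fin k, (i α).factorial : ℕ) : ℝ))⁻¹ *
            (∑ π' ∈ PF n π, ((2:ℝ) ^ (posP π').card * (j.descFactorial (posP π').card : ℝ))
              / ((2:ℝ) ^ j * (j.factorial : ℝ))) := by
      funext j
      rw [← key j]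
      field_simp
    rw [h1]
    exact hF.mul_left _
  have htsumF : ∑' j : ℕ, (∑ π' ∈ PF n π,
        ((2:ℝ) ^ (posP π').card * (j.descFactorial (posP π').card : ℝ))
          / ((2:ℝ) ^ j * (j.factorial : ℝ)))
      = ((PF n π).card : ℝ) * Real.exp (1/2) := by
    rw [Summable.tsum_finsetSum hsummand]
    have heach : ∀ π' ∈ PF n π, ∑' j : ℕ,
        ((2:ℝ) ^ (posP π').card * (j.descFactorial (posP π').card : ℝ))
          / ((2:ℝ) ^ j * (j.factorial : ℝ)) = Real.exp (1/2) := by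
      intro π' _
      rw [tsum_congr (fun j => tseq_eq_wseq (posP π').card j)]
      exact tsum_wseq _
    rw [Finset.sum_congr rfl heach, Finset.sum_const, nsmul_eq_mul]
  have hmain : ((∏ α : Fin k, (i α).factorial : ℕ) : ℝ) *
      (∑' j : ℕ, (1 / ((2:ℝ) ^ j * j.factorial)) * ∏ α : Fin k, ((2 * j).choose (i α) : ℝ))
      = ((PF n π).card : ℝ) * Real.exp (1/2) := by
    rw [← tsum_mul_left, tsum_congr key, htsumF]
  have hsqrt : Real.sqrt (Real.exp 1) = Real.exp (1/2) := by
    rw [← Real.exp_half]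
  have hexp0 : Real.exp ((1:ℝ)/2) ≠ 0 := Real.exp_ne_zero _
  refine ⟨?_, ?_, ?_⟩
  · simpa only [hco] using hsa
  · rw [hN, hsqrt, tsum_congr (fun j => by rw [hco j]), div_mul_eq_mul_div, hmain,
      mul_div_assoc, div_self hexp0, mul_one]
  · rw [hN, hsqrt, div_mul_eq_mul_div, hmain, mul_div_assoc, div_self hexp0, mul_one]
end

section
/- For every integer n ≥ 1, the number N_n of B_n-partitions without zero-block is given by the convergent series N_n = (1/√e) · Σ_{k≥0} (2k)^n / (2k)!!. -/
open scoped BigOperators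

namespace S8

lemma mem_pmSet {n : ℕ} {x : ℤ} : x ∈ pmSet n ↔ x ≠ 0 ∧ -(n:ℤ) ≤ x ∧ x ≤ n := by
  simp [pmSet, Finset.mem_erase, Finset.mem_Icc]

lemma neg_mem_pmSet {n : ℕ} {x : ℤ} (h : x ∈ pmSet n) : -x ∈ pmSet n := by
  rw [mem_pmSet] at h ⊢; omega

lemma natAbs_mem_pmSet {n : ℕ} {x : ℤ} (h : x ∈ pmSet n) :
    1 ≤ x.natAbs ∧ x.natAbs ≤ n := by
  rw [mem_pmSet] at h; omega

lemma mem_pmSet_of_natAbs {n : ℕ} {x : ℤ} (h1 : x ≠ 0) (h2 : x.natAbs ≤ n) : x ∈ pmSet n := by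
  rw [mem_pmSet]; omega

lemma mem_negBlock {B : Finset ℤ} {x : ℤ} : x ∈ negBlock B ↔ -x ∈ B := by
  simp only [negBlock, Finset.mem_image]
  constructor
  · rintro ⟨a, ha, rfl⟩; simpa using ha
  · intro h; exact ⟨-x, h, by ring⟩

lemma negBlock_negBlock (B : Finset ℤ) : negBlock (negBlock B) = B := by
  ext x; simp [mem_negBlock]

lemma negBlock_inj : Function.Injective negBlock := by
  intro A B h
  rw [← negBlock_negBlock A, h, negBlock_negBlock]

lemma negBlock_subset {n : ℕ} {B : Finset ℤ} (h : B ⊆ pmSet n) : negBlock B ⊆ pmSet n := by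
  intro x hx
  rw [mem_negBlock] at hx
  simpa using neg_mem_pmSet (h hx)

lemma card_negBlock (B : Finset ℤ) : (negBlock B).card = B.card :=
  Finset.card_image_of_injective _ neg_injective

lemma negBlock_nonempty {B : Finset ℤ} (h : B.Nonempty) : (negBlock B).Nonempty := by
  obtain ⟨x, hx⟩ := h; exact ⟨-x, mem_negBlock.2 (by simpa using hx)⟩

/-- `B` is the "positive" side of the pair `{B, -B}`. -/
def posB (B : Finset ℤ) : Prop :=
  ∃ a ∈ B \ negBlock B, 0 < a ∧
    ∀ b ∈ (B \ negBlock B) ∪ (negBlock B \ B), a.natAbs ≤ b.natAbs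

lemma mem_sdiff_negBlock {B : Finset ℤ} {x : ℤ} :
    x ∈ negBlock B \ B ↔ -x ∈ B \ negBlock B := by
  simp only [Finset.mem_sdiff, mem_negBlock, neg_neg]

lemma posB_xor {B : Finset ℤ} (h0 : (0:ℤ) ∉ B) (hne : negBlock B ≠ B) :
    posB B ↔ ¬ posB (negBlock B) := by
  have hD' : negBlock B \ negBlock (negBlock B) = negBlock B \ B := by
    rw [negBlock_negBlock]
  constructor
  · rintro ⟨a, haD, hapos, hamin⟩ ⟨a', ha'D, ha'pos, ha'min⟩
    rw [hD'] at ha'D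
    rw [negBlock_negBlock] at ha'min
    have h1 : a.natAbs ≤ a'.natAbs := hamin a' (Finset.mem_union_right _ ha'D)
    have h2 : a'.natAbs ≤ a.natAbs := ha'min a (by
      rw [Finset.union_comm]; exact Finset.mem_union_left _ haD)
    have : a = a' := by omega
    subst this
    rw [Finset.mem_sdiff] at haD ha'D
    exact ha'D.2 haD.1
  · intro hnot
    -- D nonempty
    have hDne : (B \ negBlock B).Nonempty := by
      rw [Finset.sdiff_nonempty]
      intro hsub
      exact hne (Finset.eq_of_subset_of_card_le
        (by intro x hx; exact hsub hx) (le_of_eq (card_negBlock B))).symm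
    set S := (B \ negBlock B) ∪ (negBlock B \ B) with hS
    have hSne : S.Nonempty := Finset.Nonempty.mono Finset.subset_union_left hDne
    have hSimg : (S.image Int.natAbs).Nonempty := hSne.image _
    set m := (S.image Int.natAbs).min' hSimg with hm
    obtain ⟨b, hbS, hbm⟩ := Finset.mem_image.1 ((S.image Int.natAbs).min'_mem hSimg)
    rw [← hm] at hbm
    have hmin : ∀ c ∈ S, m ≤ c.natAbs := fun c hc =>
      Finset.min'_le _ _ (Finset.mem_image_of_mem _ hc)
    have hSsymm : ∀ x ∈ S, -x ∈ S := by
      intro x hx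
      rcases Finset.mem_union.1 hx with h | h
      · exact Finset.mem_union_right _ (mem_sdiff_negBlock.2 (by simpa using h))
      · exact Finset.mem_union_left _ (mem_sdiff_negBlock.1 h)
    have hb0 : b ≠ 0 := by
      rintro rfl
      rcases Finset.mem_union.1 hbS with h | h
      · exact h0 (Finset.mem_sdiff.1 h).1
      · exact h0 (by simpa using mem_negBlock.1 (Finset.mem_sdiff.1 h).1)
    have haS : (m : ℤ) ∈ S := by
      rcases Int.natAbs_eq b with hb | hb
      · rw [← hbm, ← hb]; exact hbS
      · rw [← hbm]
        have := hSsymm b hbS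
        rw [hb, neg_neg] at this
        exact this
    have hapos : (0:ℤ) < (m:ℤ) := by
      have : m ≠ 0 := by rw [← hbm]; omega
      omega
    have hamin : ∀ c ∈ S, (m:ℤ).natAbs ≤ c.natAbs := by
      intro c hc; rw [Int.natAbs_natCast]; exact hmin c hc
    rcases Finset.mem_union.1 haS with h | h
    · exact ⟨(m:ℤ), h, hapos, hamin⟩
    · exfalso
      apply hnot
      refine ⟨m, ?_, hapos, ?_⟩
      · rwa [hD']
      · rw [negBlock_negBlock, Finset.union_comm]; exact hamin

/-! ### Partitions -/

noncomputable def Rset (π : Finset (Finset ℤ)) : Finset (Finset ℤ) := by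
  classical exact π.filter posB

lemma mem_Rset {π : Finset (Finset ℤ)} {B : Finset ℤ} :
    B ∈ Rset π ↔ B ∈ π ∧ posB B := by
  simp [Rset]

section Partition

variable {n : ℕ} {π : Finset (Finset ℤ)}

lemma block_nonempty (hπ : IsBnPartition n π) {B : Finset ℤ} (hB : B ∈ π) : B.Nonempty :=
  Finset.nonempty_of_ne_empty (hπ.1 B hB)

lemma zero_not_mem_block (hπ : IsBnPartition n π) {B : Finset ℤ} (hB : B ∈ π) :
    (0:ℤ) ∉ B := fun h => by
  have := mem_pmSet.1 (hπ.2.1 B hB h); exact this.1 rfl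

lemma negBlock_mem (hπ : IsBnPartition n π) {B : Finset ℤ} (hB : B ∈ π) :
    negBlock B ∈ π := hπ.2.2.2.1 B hB

lemma Rset_xor (hπ : IsBnPartition n π) (hz : NoZeroBlock π) {B : Finset ℤ} (hB : B ∈ π) :
    B ∈ Rset π ↔ negBlock B ∉ Rset π := by
  rw [mem_Rset, mem_Rset]
  have h := posB_xor (zero_not_mem_block hπ hB) (hz B hB)
  have hnB := negBlock_mem hπ hB
  simp [hB, hnB]
  exact h

noncomputable def blkOf (hπ : IsBnPartition n π) (x : ℤ) : Finset ℤ :=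
  if hx : x ∈ pmSet n then (hπ.2.2.1 x hx).exists.choose else ∅

lemma blkOf_mem (hπ : IsBnPartition n π) {x : ℤ} (hx : x ∈ pmSet n) :
    blkOf hπ x ∈ π ∧ x ∈ blkOf hπ x := by
  rw [blkOf, dif_pos hx]; exact (hπ.2.2.1 x hx).exists.choose_spec

lemma blkOf_eq (hπ : IsBnPartition n π) {x : ℤ} (hx : x ∈ pmSet n) {B : Finset ℤ}
    (hB : B ∈ π) (hxB : x ∈ B) : blkOf hπ x = B := by
  obtain ⟨C, _, hu⟩ := hπ.2.2.1 x hx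
  have h1 := hu _ ⟨(blkOf_mem hπ hx).1, (blkOf_mem hπ hx).2⟩
  have h2 := hu B ⟨hB, hxB⟩
  rw [h1, h2]

lemma blkOf_neg (hπ : IsBnPartition n π) {x : ℤ} (hx : x ∈ pmSet n) :
    blkOf hπ (-x) = negBlock (blkOf hπ x) :=
  blkOf_eq hπ (neg_mem_pmSet hx) (negBlock_mem hπ (blkOf_mem hπ hx).1)
    (mem_negBlock.2 (by simpa using (blkOf_mem hπ hx).2))

lemma blkOf_of_mem (hπ : IsBnPartition n π) {x y : ℤ} (hx : x ∈ pmSet n)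
    (hy : y ∈ pmSet n) (hyx : y ∈ blkOf hπ x) : blkOf hπ y = blkOf hπ x :=
  blkOf_eq hπ hy (blkOf_mem hπ hx).1 hyx

lemma mem_Rset_or (hπ : IsBnPartition n π) (hz : NoZeroBlock π) {B : Finset ℤ}
    (hB : B ∈ π) : B ∈ Rset π ∨ negBlock B ∈ Rset π := by
  by_cases h : B ∈ Rset π
  · exact Or.inl h
  · right
    have := Rset_xor hπ hz hB
    tauto

lemma Rset_subset {π : Finset (Finset ℤ)} : Rset π ⊆ π := fun B hB => (mem_Rset.1 hB).1

lemma pi_eq_union (hπ : IsBnPartition n π) (hz : NoZeroBlock π) :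
    π = Rset π ∪ (Rset π).image negBlock := by
  apply Finset.Subset.antisymm
  · intro B hB
    rcases mem_Rset_or hπ hz hB with h | h
    · exact Finset.mem_union_left _ h
    · refine Finset.mem_union_right _ (Finset.mem_image.2 ⟨negBlock B, h, negBlock_negBlock B⟩)
  · intro B hB
    rcases Finset.mem_union.1 hB with h | h
    · exact Rset_subset h
    · obtain ⟨C, hC, rfl⟩ := Finset.mem_image.1 h
      exact negBlock_mem hπ (Rset_subset hC)

lemma card_pi_eq (hπ : IsBnPartition n π) (hz : NoZeroBlock π) :
    π.card = 2 * (Rset π).card := by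
  conv_lhs => rw [pi_eq_union hπ hz]
  rw [Finset.card_union_of_disjoint, Finset.card_image_of_injective _ negBlock_inj]
  · ring
  · rw [Finset.disjoint_right]
    intro B hB1 hB2
    obtain ⟨C, hC, rfl⟩ := Finset.mem_image.1 hB1
    exact ((Rset_xor hπ hz (Rset_subset hC)).1 hC) hB2

lemma Rset_nonempty (hπ : IsBnPartition n π) (hz : NoZeroBlock π) (hn : 0 < n) :
    (Rset π).Nonempty := by
  have h1 : (1:ℤ) ∈ pmSet n := by rw [mem_pmSet]; omega
  rcases mem_Rset_or hπ hz (blkOf_mem hπ h1).1 with h | h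
  · exact ⟨_, h⟩
  · exact ⟨_, h⟩

end Partition

/-! ### Value encoding -/

def vEnc {k : ℕ} (p : Fin k × Bool) : ℤ := (if p.2 then 1 else -1) * ((p.1 : ℤ) + 1)

lemma natAbs_vEnc {k : ℕ} (p : Fin k × Bool) : (vEnc p).natAbs = (p.1 : ℕ) + 1 := by
  cases hp : p.2 <;> simp [vEnc] <;> omega

lemma vEnc_ne_zero {k : ℕ} (p : Fin k × Bool) : vEnc p ≠ 0 := by
  intro h
  have := natAbs_vEnc p
  rw [h] at this
  simp at this

lemma vEnc_mem_pmSet {k : ℕ} (p : Fin k × Bool) : vEnc p ∈ pmSet k :=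
  mem_pmSet_of_natAbs (vEnc_ne_zero p) (by rw [natAbs_vEnc]; have := p.1.isLt; omega)

lemma vEnc_pos_iff {k : ℕ} (p : Fin k × Bool) : 0 < vEnc p ↔ p.2 = true := by
  cases hp : p.2 <;> simp [vEnc, hp] <;> omega

noncomputable def dec {k : ℕ} (hk : 0 < k) (v : ℤ) : Fin k × Bool :=
  (⟨(v.natAbs - 1) % k, Nat.mod_lt _ hk⟩, decide (0 < v))

lemma dec_vEnc {k : ℕ} (hk : 0 < k) (p : Fin k × Bool) : dec hk (vEnc p) = p := by
  have h1 : (vEnc p).natAbs - 1 = (p.1 : ℕ) := by rw [natAbs_vEnc]; omega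
  ext
  · simp only [dec, h1]
    exact Nat.mod_eq_of_lt p.1.isLt
  · simp only [dec]
    rw [Bool.eq_iff_iff, decide_eq_true_iff, vEnc_pos_iff]

lemma vEnc_dec {k : ℕ} (hk : 0 < k) {v : ℤ} (hv : v ∈ pmSet k) : vEnc (dec hk v) = v := by
  rw [mem_pmSet] at hv
  have hlt : v.natAbs - 1 < k := by omega
  have hmod : (v.natAbs - 1) % k = v.natAbs - 1 := Nat.mod_eq_of_lt hlt
  by_cases hvp : 0 < v <;> simp [vEnc, dec, hvp, hmod] <;> omega

lemma vEnc_pair {k : ℕ} (q : Fin k × Bool) (c : Prop) [Decidable c] :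
    vEnc (q.1, q.2 == decide c) = (if c then 1 else -1) * vEnc q := by
  by_cases hc : c <;> cases hq : q.2 <;> simp [vEnc, hc, hq] <;> ring

/-! ### The kernel of a signed function -/

section Kernel

variable (n k : ℕ) (hn : 0 < n)

def idx (x : ℤ) : Fin n := ⟨(x.natAbs - 1) % n, Nat.mod_lt _ hn⟩

def Ffun (f : Fin n → Fin k × Bool) (x : ℤ) : ℤ :=
  (if 0 < x then 1 else -1) * vEnc (f (idx n hn x))

variable {n k hn}

lemma idx_val (i : Fin n) : idx n hn ((i:ℤ)+1) = i := by
  have h1 : ((i:ℤ)+1).natAbs = (i:ℕ) + 1 := by omega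
  ext
  simp only [idx, h1, Nat.add_sub_cancel]
  exact Nat.mod_eq_of_lt i.isLt

lemma idx_neg (x : ℤ) : idx n hn (-x) = idx n hn x := by
  simp [idx]

variable {f : Fin n → Fin k × Bool}

lemma Ffun_natAbs (x : ℤ) : (Ffun n k hn f x).natAbs = ((f (idx n hn x)).1 : ℕ) + 1 := by
  rw [Ffun]
  by_cases h : 0 < x <;> simp [h, natAbs_vEnc]

lemma Ffun_ne_zero (x : ℤ) : Ffun n k hn f x ≠ 0 := by
  intro h
  have := Ffun_natAbs (f := f) (hn := hn) x
  rw [h] at this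
  simp at this

lemma Ffun_mem_pmSet (x : ℤ) : Ffun n k hn f x ∈ pmSet k :=
  mem_pmSet_of_natAbs (Ffun_ne_zero x)
    (by rw [Ffun_natAbs]; have := (f (idx n hn x)).1.isLt; omega)

lemma Ffun_neg {x : ℤ} (hx : x ≠ 0) : Ffun n k hn f (-x) = - Ffun n k hn f x := by
  rw [Ffun, Ffun, idx_neg]
  rcases lt_trichotomy x 0 with h | h | h
  · rw [if_pos (by omega : (0:ℤ) < -x), if_neg (by omega : ¬ (0:ℤ) < x)]; ring
  · omega
  · rw [if_neg (by omega : ¬ (0:ℤ) < -x), if_pos h]; ring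

variable (n k hn)

noncomputable def filtF (f : Fin n → Fin k × Bool) (x : ℤ) : Finset ℤ :=
  (pmSet n).filter (fun y => Ffun n k hn f y = Ffun n k hn f x)

noncomputable def kerF (f : Fin n → Fin k × Bool) : Finset (Finset ℤ) :=
  (pmSet n).image (filtF n k hn f)

variable {n k hn}

lemma mem_filtF {x y : ℤ} :
    y ∈ filtF n k hn f x ↔ y ∈ pmSet n ∧ Ffun n k hn f y = Ffun n k hn f x := by
  simp [filtF]

lemma mem_kerF {B : Finset ℤ} :
    B ∈ kerF n k hn f ↔ ∃ x ∈ pmSet n, filtF n k hn f x = B := by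
  simp [kerF]

lemma filtF_eq_of_mem {x y : ℤ} (hyx : y ∈ filtF n k hn f x) :
    filtF n k hn f y = filtF n k hn f x := by
  have h := (mem_filtF.1 hyx).2
  ext z
  rw [mem_filtF, mem_filtF, h]

lemma negBlock_filtF {x : ℤ} (hx : x ∈ pmSet n) :
    negBlock (filtF n k hn f x) = filtF n k hn f (-x) := by
  ext y
  rw [mem_negBlock, mem_filtF, mem_filtF]
  constructor
  · rintro ⟨h1, h2⟩
    have hy : y ∈ pmSet n := by simpa using neg_mem_pmSet h1
    have hy0 : y ≠ 0 := (mem_pmSet.1 hy).1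
    refine ⟨hy, ?_⟩
    rw [Ffun_neg (mem_pmSet.1 hx).1, ← h2, Ffun_neg hy0, neg_neg]
  · rintro ⟨h1, h2⟩
    have hy0 : y ≠ 0 := (mem_pmSet.1 h1).1
    refine ⟨neg_mem_pmSet h1, ?_⟩
    rw [Ffun_neg hy0, h2, Ffun_neg (mem_pmSet.1 hx).1, neg_neg]

lemma kerF_isBn : IsBnPartition n (kerF n k hn f) ∧ NoZeroBlock (kerF n k hn f) := by
  have hnz : NoZeroBlock (kerF n k hn f) := by
    intro B hB hBneg
    obtain ⟨x, hx, rfl⟩ := mem_kerF.1 hB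
    rw [negBlock_filtF hx] at hBneg
    have hxmem : x ∈ filtF n k hn f x := mem_filtF.2 ⟨hx, rfl⟩
    rw [← hBneg] at hxmem
    have h2 := (mem_filtF.1 hxmem).2
    rw [Ffun_neg (mem_pmSet.1 hx).1] at h2
    exact Ffun_ne_zero x (by linarith)
  refine ⟨⟨?_, ?_, ?_, ?_, ?_⟩, hnz⟩
  · intro B hB
    obtain ⟨x, hx, rfl⟩ := mem_kerF.1 hB
    exact Finset.ne_empty_of_mem (mem_filtF.2 ⟨hx, rfl⟩)
  · intro B hB
    obtain ⟨x, hx, rfl⟩ := mem_kerF.1 hB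
    exact Finset.filter_subset _ _
  · intro x hx
    refine ⟨filtF n k hn f x, ⟨mem_kerF.2 ⟨x, hx, rfl⟩, mem_filtF.2 ⟨hx, rfl⟩⟩, ?_⟩
    rintro B ⟨hB, hxB⟩
    obtain ⟨x', hx', rfl⟩ := mem_kerF.1 hB
    exact (filtF_eq_of_mem hxB).symm
  · intro B hB
    obtain ⟨x, hx, rfl⟩ := mem_kerF.1 hB
    rw [negBlock_filtF hx]
    exact mem_kerF.2 ⟨-x, neg_mem_pmSet hx, rfl⟩
  · have : (kerF n k hn f).filter (fun B => negBlock B = B) = ∅ := by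
      rw [Finset.filter_eq_empty_iff]
      intro B hB
      exact hnz B hB
    rw [this]
    simp

end Kernel

/-! ### The bijection for a fixed partition -/

section Bij

variable {n k : ℕ} {π : Finset (Finset ℤ)}

noncomputable def blkRep (B : Finset ℤ) : ℤ := if h : B.Nonempty then B.min' h else 0

lemma blkRep_mem {B : Finset ℤ} (h : B.Nonempty) : blkRep B ∈ B := by
  rw [blkRep, dif_pos h]; exact Finset.min'_mem B h

noncomputable def Phi (hn : 0 < n) (f : Fin n → Fin k × Bool)
    (r : {B // B ∈ Rset π}) : Fin k × Bool :=
  ((f (idx n hn (blkRep r.1))).1, (f (idx n hn (blkRep r.1))).2 == decide (0 < blkRep r.1))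

lemma vEnc_Phi (hn : 0 < n) (f : Fin n → Fin k × Bool) (r : {B // B ∈ Rset π}) :
    vEnc (Phi hn f r) = Ffun n k hn f (blkRep r.1) := by
  rw [Phi, vEnc_pair, Ffun]

noncomputable def r0 (hn : 0 < n) (hπ : IsBnPartition n π) (hz : NoZeroBlock π) :
    {B // B ∈ Rset π} :=
  ⟨(Rset_nonempty hπ hz hn).choose, (Rset_nonempty hπ hz hn).choose_spec⟩

lemma kpos (hn : 0 < n) (hπ : IsBnPartition n π) (hz : NoZeroBlock π)
    (g : {B // B ∈ Rset π} → Fin k × Bool) : 0 < k :=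
  (g (r0 hn hπ hz)).1.pos

noncomputable def Fg (hπ : IsBnPartition n π) (g : {B // B ∈ Rset π} → Fin k × Bool)
    (x : ℤ) : ℤ :=
  if h : blkOf hπ x ∈ Rset π then vEnc (g ⟨blkOf hπ x, h⟩)
  else if h' : negBlock (blkOf hπ x) ∈ Rset π then -vEnc (g ⟨negBlock (blkOf hπ x), h'⟩)
  else 0

variable {hπ : IsBnPartition n π} {g : {B // B ∈ Rset π} → Fin k × Bool} {x y : ℤ}

lemma Fg_blk (hxy : blkOf hπ y = blkOf hπ x) : Fg hπ g y = Fg hπ g x := by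
  simp only [Fg, hxy]

lemma Fg_cases (hz : NoZeroBlock π) (hx : x ∈ pmSet n) :
    (∃ h : blkOf hπ x ∈ Rset π, Fg hπ g x = vEnc (g ⟨blkOf hπ x, h⟩)) ∨
    (∃ h' : negBlock (blkOf hπ x) ∈ Rset π, blkOf hπ x ∉ Rset π ∧
      Fg hπ g x = -vEnc (g ⟨negBlock (blkOf hπ x), h'⟩)) := by
  by_cases h : blkOf hπ x ∈ Rset π
  · exact Or.inl ⟨h, by rw [Fg, dif_pos h]⟩
  · have h' : negBlock (blkOf hπ x) ∈ Rset π :=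
      (mem_Rset_or hπ hz (blkOf_mem hπ hx).1).resolve_left h
    exact Or.inr ⟨h', h, by rw [Fg, dif_neg h, dif_pos h']⟩

lemma Fg_mem_pmSet (hz : NoZeroBlock π) (hx : x ∈ pmSet n) : Fg hπ g x ∈ pmSet k := by
  rcases Fg_cases (g := g) hz hx with ⟨h, he⟩ | ⟨h', _, he⟩
  · rw [he]; exact vEnc_mem_pmSet _
  · rw [he]; exact neg_mem_pmSet (vEnc_mem_pmSet _)

lemma Fg_neg (hz : NoZeroBlock π) (hx : x ∈ pmSet n) : Fg hπ g (-x) = - Fg hπ g x := by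
  have hblk : blkOf hπ (-x) = negBlock (blkOf hπ x) := blkOf_neg hπ hx
  by_cases h : blkOf hπ x ∈ Rset π
  · have hnot : negBlock (blkOf hπ x) ∉ Rset π := (Rset_xor hπ hz (blkOf_mem hπ hx).1).1 h
    have h2 : negBlock (blkOf hπ (-x)) ∈ Rset π := by
      rw [hblk, negBlock_negBlock]; exact h
    rw [Fg, dif_neg (by rw [hblk]; exact hnot), dif_pos h2, Fg, dif_pos h]
    have hv : (⟨negBlock (blkOf hπ (-x)), h2⟩ : {B // B ∈ Rset π}) = ⟨blkOf hπ x, h⟩ :=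
      Subtype.ext (show negBlock (blkOf hπ (-x)) = blkOf hπ x by rw [hblk, negBlock_negBlock])
    rw [hv]
  · have h' : negBlock (blkOf hπ x) ∈ Rset π :=
      (mem_Rset_or hπ hz (blkOf_mem hπ hx).1).resolve_left h
    rw [Fg, dif_pos (show blkOf hπ (-x) ∈ Rset π by rw [hblk]; exact h'), Fg,
      dif_neg h, dif_pos h', neg_neg]
    have hv : (⟨blkOf hπ (-x), by rw [hblk]; exact h'⟩ : {B // B ∈ Rset π})
        = ⟨negBlock (blkOf hπ x), h'⟩ :=
      Subtype.ext (show blkOf hπ (-x) = negBlock (blkOf hπ x) from hblk)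
    rw [hv]

lemma vEnc_g_inj (hg : Function.Injective (fun r => (g r).1))
    {r r' : {B // B ∈ Rset π}} (h : (vEnc (g r)).natAbs = (vEnc (g r')).natAbs) : r = r' := by
  rw [natAbs_vEnc, natAbs_vEnc] at h
  have h2 : (g r).1 = (g r').1 := Fin.ext (by omega)
  exact hg h2

lemma Fg_inj (hz : NoZeroBlock π) (hg : Function.Injective (fun r => (g r).1))
    (hx : x ∈ pmSet n) (hy : y ∈ pmSet n) (heq : Fg hπ g y = Fg hπ g x) :
    blkOf hπ y = blkOf hπ x := by
  have hnatAbs : ∀ a b : ℤ, a = b → a.natAbs = b.natAbs := fun a b h => by rw [h]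
  rcases Fg_cases (g := g) hz hx with ⟨h1, he1⟩ | ⟨h1, hn1, he1⟩ <;>
    rcases Fg_cases (g := g) hz hy with ⟨h2, he2⟩ | ⟨h2, hn2, he2⟩
  · rw [he1, he2] at heq
    have := vEnc_g_inj hg (hnatAbs _ _ heq)
    simpa using congrArg Subtype.val this
  · rw [he1, he2] at heq
    have hab := hnatAbs _ _ heq
    rw [Int.natAbs_neg] at hab
    have := vEnc_g_inj hg hab
    rw [this] at heq
    exfalso
    exact vEnc_ne_zero (g ⟨blkOf hπ x, h1⟩) (by linarith)
  · rw [he1, he2] at heq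
    have hab := hnatAbs _ _ heq
    rw [Int.natAbs_neg] at hab
    have := vEnc_g_inj hg hab
    rw [← this] at heq
    exfalso
    exact vEnc_ne_zero (g ⟨blkOf hπ y, h2⟩) (by linarith)
  · rw [he1, he2] at heq
    have hab := hnatAbs _ _ heq
    rw [Int.natAbs_neg, Int.natAbs_neg] at hab
    have h3 := vEnc_g_inj hg hab
    have h4 : negBlock (blkOf hπ y) = negBlock (blkOf hπ x) := by
      simpa using congrArg Subtype.val h3
    exact negBlock_inj h4

noncomputable def Psi (hn : 0 < n) (hπ : IsBnPartition n π) (hz : NoZeroBlock π)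
    (g : {B // B ∈ Rset π} → Fin k × Bool) : Fin n → Fin k × Bool :=
  fun i => dec (kpos hn hπ hz g) (Fg hπ g ((i:ℤ)+1))

lemma natAbs_coe_pmSet (hx : x ∈ pmSet n) : ((x.natAbs : ℤ)) ∈ pmSet n := by
  rw [mem_pmSet] at hx ⊢; omega

lemma idx_coe_succ (hn : 0 < n) (hx : x ∈ pmSet n) :
    ((idx n hn x : ℕ) : ℤ) + 1 = (x.natAbs : ℤ) := by
  have hna := natAbs_mem_pmSet hx
  have hidx : ((idx n hn x : ℕ)) = x.natAbs - 1 := Nat.mod_eq_of_lt (by omega)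
  rw [hidx]; omega

lemma Fg_natAbs_coe (hz : NoZeroBlock π) (hx : x ∈ pmSet n) :
    Fg hπ g ((x.natAbs : ℤ)) = (if 0 < x then 1 else -1) * Fg hπ g x := by
  have hx0 : x ≠ 0 := (mem_pmSet.1 hx).1
  rcases lt_trichotomy x 0 with h | h | h
  · have hxx : ((x.natAbs : ℤ)) = -x := by omega
    rw [if_neg (by omega), hxx, Fg_neg hz hx]
    ring
  · exact absurd h hx0
  · have hxx : ((x.natAbs : ℤ)) = x := by omega
    rw [if_pos h, hxx, one_mul]

lemma Ffun_Psi (hn : 0 < n) (hz : NoZeroBlock π) (hx : x ∈ pmSet n) :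
    Ffun n k hn (Psi hn hπ hz g) x = Fg hπ g x := by
  have hcoe := idx_coe_succ hn hx
  rw [Ffun]
  show (if 0 < x then 1 else -1) * vEnc (dec _ (Fg hπ g ((((idx n hn x) : ℕ) : ℤ)+1))) = _
  rw [hcoe, vEnc_dec _ (Fg_mem_pmSet hz (natAbs_coe_pmSet hx)), Fg_natAbs_coe hz hx]
  by_cases h : 0 < x
  · rw [if_pos h]; ring
  · rw [if_neg h]; ring

end Bij


/-! ### Completing the bijection -/

section Bij2

variable {n k : ℕ} {π : Finset (Finset ℤ)} {hπ : IsBnPartition n π}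
variable {g : {B // B ∈ Rset π} → Fin k × Bool} {f : Fin n → Fin k × Bool} {x y : ℤ}

lemma filtF_Psi (hn : 0 < n) (hz : NoZeroBlock π)
    (hg : Function.Injective (fun r => (g r).1)) (hx : x ∈ pmSet n) :
    filtF n k hn (Psi hn hπ hz g) x = blkOf hπ x := by
  ext y
  rw [mem_filtF]
  constructor
  · rintro ⟨hy, hval⟩
    rw [Ffun_Psi hn hz hy, Ffun_Psi hn hz hx] at hval
    have := Fg_inj hz hg hx hy hval
    rw [← this]
    exact (blkOf_mem hπ hy).2
  · intro hyB
    have hBmem := (blkOf_mem hπ hx).1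
    have hy : y ∈ pmSet n := hπ.2.1 _ hBmem hyB
    refine ⟨hy, ?_⟩
    rw [Ffun_Psi hn hz hy, Ffun_Psi hn hz hx]
    exact Fg_blk (blkOf_of_mem hπ hx hy hyB)

lemma kerF_Psi (hn : 0 < n) (hz : NoZeroBlock π)
    (hg : Function.Injective (fun r => (g r).1)) :
    kerF n k hn (Psi hn hπ hz g) = π := by
  ext B
  rw [mem_kerF]
  constructor
  · rintro ⟨x, hx, rfl⟩
    rw [filtF_Psi hn hz hg hx]
    exact (blkOf_mem hπ hx).1
  · intro hB
    obtain ⟨x, hxB⟩ := block_nonempty hπ hB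
    have hx : x ∈ pmSet n := hπ.2.1 _ hB hxB
    exact ⟨x, hx, by rw [filtF_Psi hn hz hg hx, blkOf_eq hπ hx hB hxB]⟩

lemma blk_eq_filt (hn : 0 < n) (hf : kerF n k hn f = π) {B : Finset ℤ} (hB : B ∈ π)
    (hBne : B.Nonempty) : B = filtF n k hn f (blkRep B) := by
  rw [← hf] at hB
  obtain ⟨x0, hx0, hfilt⟩ := mem_kerF.1 hB
  have hrep : blkRep B ∈ B := blkRep_mem hBne
  rw [← hfilt] at hrep ⊢
  exact (filtF_eq_of_mem hrep).symm

lemma filtF_congr (hn : 0 < n) {a b : ℤ} (hval : Ffun n k hn f a = Ffun n k hn f b) :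
    filtF n k hn f a = filtF n k hn f b := by
  ext z
  rw [mem_filtF, mem_filtF, hval]

lemma Phi_fst_inj (hn : 0 < n) (hπ : IsBnPartition n π) (hz : NoZeroBlock π)
    (hf : kerF n k hn f = π) :
    Function.Injective (fun r : {B // B ∈ Rset π} => (Phi hn f r).1) := by
  intro r r' h
  have hB : r.1 ∈ π := Rset_subset r.2
  have hB' : r'.1 ∈ π := Rset_subset r'.2
  have hne : (r.1 : Finset ℤ).Nonempty := block_nonempty hπ hB
  have hne' : (r'.1 : Finset ℤ).Nonempty := block_nonempty hπ hB'
  set a := blkRep r.1 with ha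
  set b := blkRep r'.1 with hb
  have hapm : a ∈ pmSet n := hπ.2.1 _ hB (blkRep_mem hne)
  have hbpm : b ∈ pmSet n := hπ.2.1 _ hB' (blkRep_mem hne')
  have heqr : r.1 = filtF n k hn f a := blk_eq_filt hn hf hB hne
  have heqr' : r'.1 = filtF n k hn f b := blk_eq_filt hn hf hB' hne'
  have hfst : (f (idx n hn a)).1 = (f (idx n hn b)).1 := h
  have habs : (Ffun n k hn f a).natAbs = (Ffun n k hn f b).natAbs := by
    rw [Ffun_natAbs, Ffun_natAbs, hfst]
  rcases Int.natAbs_eq_natAbs_iff.1 habs with hv | hv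
  · exact Subtype.ext (by rw [heqr, heqr', filtF_congr hn hv])
  · exfalso
    have hvb : Ffun n k hn f a = Ffun n k hn f (-b) := by
      rw [Ffun_neg (mem_pmSet.1 hbpm).1, hv]
    have : r.1 = negBlock r'.1 := by
      rw [heqr, heqr', filtF_congr hn hvb, negBlock_filtF hbpm]
    have hnotin : negBlock r'.1 ∉ Rset π := (Rset_xor hπ hz hB').1 r'.2
    rw [← this] at hnotin
    exact hnotin r.2

lemma Fg_Phi (hn : 0 < n) (hz : NoZeroBlock π) (hf : kerF n k hn f = π)
    (hx : x ∈ pmSet n) : Fg hπ (Phi hn f) x = Ffun n k hn f x := by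
  set B := blkOf hπ x with hBdef
  have hB : B ∈ π := (blkOf_mem hπ hx).1
  have hxB : x ∈ B := (blkOf_mem hπ hx).2
  have hBne : B.Nonempty := ⟨x, hxB⟩
  by_cases h : B ∈ Rset π
  · rw [Fg, dif_pos (show blkOf hπ x ∈ Rset π from h)]
    rw [vEnc_Phi]
    show Ffun n k hn f (blkRep B) = Ffun n k hn f x
    have h1 : B = filtF n k hn f (blkRep B) := blk_eq_filt hn hf hB hBne
    have h2 := hxB
    rw [h1] at h2
    exact ((mem_filtF.1 h2).2).symm
  · have h' : negBlock B ∈ Rset π := (mem_Rset_or hπ hz hB).resolve_left h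
    rw [Fg, dif_neg (show ¬ blkOf hπ x ∈ Rset π from h),
      dif_pos (show negBlock (blkOf hπ x) ∈ Rset π from h'), vEnc_Phi]
    show - Ffun n k hn f (blkRep (negBlock B)) = Ffun n k hn f x
    have hnB : negBlock B ∈ π := negBlock_mem hπ hB
    have hnBne : (negBlock B).Nonempty := negBlock_nonempty hBne
    have h1 : negBlock B = filtF n k hn f (blkRep (negBlock B)) := blk_eq_filt hn hf hnB hnBne
    have hmx : -x ∈ negBlock B := mem_negBlock.2 (by simpa using hxB)
    rw [h1] at hmx
    have h2 : Ffun n k hn f (-x) = Ffun n k hn f (blkRep (negBlock B)) := (mem_filtF.1 hmx).2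
    rw [← h2, Ffun_neg (mem_pmSet.1 hx).1]
    ring

lemma Psi_Phi (hn : 0 < n) (hπ : IsBnPartition n π) (hz : NoZeroBlock π)
    (hf : kerF n k hn f = π) : Psi hn hπ hz (Phi hn f) = f := by
  funext i
  have hx : ((i:ℤ)+1) ∈ pmSet n := by
    rw [mem_pmSet]
    have := i.isLt
    omega
  show dec _ (Fg hπ (Phi hn f) ((i:ℤ)+1)) = f i
  have hpos : (0:ℤ) < (i:ℤ)+1 := by positivity
  rw [Fg_Phi hn hz hf hx, Ffun, idx_val, if_pos hpos, one_mul, dec_vEnc]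

lemma vEnc_neg_snd {k : ℕ} (p : Fin k × Bool) : vEnc (p.1, !p.2) = -vEnc p := by
  cases hp : p.2 <;> simp [vEnc, hp] <;> ring

lemma dec_sign_mul {k : ℕ} (hk : 0 < k) (p : Fin k × Bool) (c : Prop) [Decidable c] :
    dec hk ((if c then 1 else -1) * vEnc p) = (p.1, p.2 == decide c) := by
  by_cases hc : c
  · rw [if_pos hc, one_mul, dec_vEnc]
    simp [hc]
  · rw [if_neg hc]
    have h1 : (-1 : ℤ) * vEnc p = vEnc (p.1, !p.2) := by rw [vEnc_neg_snd]; ring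
    rw [h1, dec_vEnc]
    simp [hc]

lemma Phi_Psi (hn : 0 < n) (hπ : IsBnPartition n π) (hz : NoZeroBlock π)
    (hg : Function.Injective (fun r => (g r).1)) : Phi hn (Psi hn hπ hz g) = g := by
  funext r
  have hB : r.1 ∈ π := Rset_subset r.2
  have hBne := block_nonempty hπ hB
  set xr := blkRep r.1 with hxr
  have hxrB : xr ∈ r.1 := blkRep_mem hBne
  have hxrpm : xr ∈ pmSet n := hπ.2.1 _ hB hxrB
  have hblk : blkOf hπ xr = r.1 := blkOf_eq hπ hxrpm hB hxrB
  have hFg : Fg hπ g xr = vEnc (g r) := by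
    rw [Fg, dif_pos (show blkOf hπ xr ∈ Rset π by rw [hblk]; exact r.2)]
    congr 1
    exact congrArg g (Subtype.ext hblk)
  have hPsi : Psi hn hπ hz g (idx n hn xr) = ((g r).1, (g r).2 == decide (0 < xr)) := by
    show dec _ (Fg hπ g (((idx n hn xr : ℕ) : ℤ)+1)) = _
    rw [idx_coe_succ hn hxrpm, Fg_natAbs_coe hz hxrpm, hFg, dec_sign_mul]
  show ((Psi hn hπ hz g (idx n hn xr)).1,
      (Psi hn hπ hz g (idx n hn xr)).2 == decide (0 < xr)) = g r
  rw [hPsi]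
  have hbb : ∀ (a b : Bool), ((a == b) == b) = a := by decide
  simp only [hbb]

lemma fiber_card (hn : 0 < n) (hπ : IsBnPartition n π) (hz : NoZeroBlock π) :
    ((Finset.univ : Finset (Fin n → Fin k × Bool)).filter
        (fun f => kerF n k hn f = π)).card
      = Nat.descFactorial k (Rset π).card * 2 ^ (Rset π).card := by
  classical
  have hbij : ((Finset.univ : Finset (Fin n → Fin k × Bool)).filter
        (fun f => kerF n k hn f = π)).card
      = ((Finset.univ : Finset ({B // B ∈ Rset π} → Fin k × Bool)).filter
        (fun g => Function.Injective (fun r => (g r).1))).card := by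
    apply Finset.card_nbij' (i := fun f => Phi hn f) (j := fun g => Psi hn hπ hz g)
    · intro f hf
      rw [Finset.mem_coe, Finset.mem_filter] at hf ⊢
      exact ⟨Finset.mem_univ _, Phi_fst_inj hn hπ hz hf.2⟩
    · intro g hg
      rw [Finset.mem_coe, Finset.mem_filter] at hg ⊢
      exact ⟨Finset.mem_univ _, kerF_Psi hn hz hg.2⟩
    · intro f hf
      rw [Finset.mem_coe, Finset.mem_filter] at hf
      exact Psi_Phi hn hπ hz hf.2
    · intro g hg
      rw [Finset.mem_coe, Finset.mem_filter] at hg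
      exact Phi_Psi hn hπ hz hg.2
  rw [hbij]
  rw [← Fintype.card_subtype]
  have e : {g : {B // B ∈ Rset π} → Fin k × Bool // Function.Injective (fun r => (g r).1)}
      ≃ ({B // B ∈ Rset π} ↪ Fin k) × ({B // B ∈ Rset π} → Bool) :=
    { toFun := fun s => (⟨fun r => (s.1 r).1, s.2⟩, fun r => (s.1 r).2)
      invFun := fun eb => ⟨fun r => (eb.1 r, eb.2 r), fun r r' h => eb.1.injective h⟩
      left_inv := fun s => Subtype.ext (funext fun r => by simp)
      right_inv := fun eb => by
        refine Prod.ext ?_ rfl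
        ext r
        rfl }
  rw [Fintype.card_congr e, Fintype.card_prod, Fintype.card_embedding_eq,
    Fintype.card_fun, Fintype.card_coe, Fintype.card_fin, Fintype.card_bool]

end Bij2

/-! ### The grand count -/

open Classical in
noncomputable def PFin (n : ℕ) : Finset (Finset (Finset ℤ)) :=
  ((pmSet n).powerset.powerset).filter (fun π => IsBnPartition n π ∧ NoZeroBlock π)

lemma mem_PFin {n : ℕ} {π : Finset (Finset ℤ)} :
    π ∈ PFin n ↔ IsBnPartition n π ∧ NoZeroBlock π := by
  simp only [PFin, Finset.mem_filter]
  constructor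
  · tauto
  · intro h
    refine ⟨?_, h⟩
    rw [Finset.mem_powerset]
    intro B hB
    rw [Finset.mem_powerset]
    exact h.1.2.1 B hB

lemma count_all (n k : ℕ) (hn : 0 < n) :
    (2*k)^n = ∑ π ∈ PFin n,
      Nat.descFactorial k (Rset π).card * 2 ^ (Rset π).card := by
  classical
  have h1 : Fintype.card (Fin n → Fin k × Bool) = (2*k)^n := by
    rw [Fintype.card_fun, Fintype.card_prod, Fintype.card_fin, Fintype.card_bool,
      Fintype.card_fin, mul_comm k 2]
  have h2 : (Finset.univ : Finset (Fin n → Fin k × Bool)).card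
      = ∑ π ∈ PFin n,
        ((Finset.univ : Finset (Fin n → Fin k × Bool)).filter
          (fun f => kerF n k hn f = π)).card :=
    Finset.card_eq_sum_card_fiberwise (fun f _ => mem_PFin.2 kerF_isBn)
  rw [Finset.card_univ, h1] at h2
  rw [h2]
  exact Finset.sum_congr rfl
    (fun π hmem => fiber_card hn (mem_PFin.1 hmem).1 (mem_PFin.1 hmem).2)

/-! ### Analytic part -/

noncomputable def Gfun (j k : ℕ) : ℝ := (Nat.descFactorial k j : ℝ) / (2^k * k.factorial)

lemma Gfun_zero {j x : ℕ} (hx : x ∉ Set.range (fun m : ℕ => m + j)) : Gfun j x = 0 := by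
  have hlt : x < j := by
    by_contra hge
    exact hx ⟨x - j, Nat.sub_add_cancel (by omega)⟩
  rw [Gfun, Nat.descFactorial_eq_zero_iff_lt.2 hlt]
  simp

lemma Gfun_shift (j m : ℕ) : Gfun j (m + j) = (1/2:ℝ)^j * ((1/2:ℝ)^m / m.factorial) := by
  have hd : (m.factorial : ℝ) * ((m+j).descFactorial j : ℝ) = ((m+j).factorial : ℝ) := by
    rw [← Nat.cast_mul]
    norm_cast
    have := Nat.factorial_mul_descFactorial (show j ≤ m + j by omega)
    simpa using this
  have hfact : ((m+j).factorial : ℝ) ≠ 0 := Nat.cast_ne_zero.2 (Nat.factorial_ne_zero _)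
  have hmfact : (m.factorial : ℝ) ≠ 0 := Nat.cast_ne_zero.2 (Nat.factorial_ne_zero _)
  have hdesc : ((m+j).descFactorial j : ℝ) = ((m+j).factorial : ℝ) / m.factorial := by
    field_simp [← hd]
    rw [mul_comm]; exact hd
  rw [Gfun, hdesc, pow_add]
  field_simp
  simp only [one_div, inv_pow]
  field_simp

lemma Gfun_summable (j : ℕ) : Summable (Gfun j) := by
  have hinj : Function.Injective (fun m : ℕ => m + j) := add_left_injective j
  rw [← Function.Injective.summable_iff hinj (fun x hx => Gfun_zero hx)]
  have : (Gfun j ∘ fun m : ℕ => m + j) = fun m => (1/2:ℝ)^j * ((1/2:ℝ)^m / m.factorial) := by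
    funext m
    exact Gfun_shift j m
  rw [this]
  exact (Real.summable_pow_div_factorial (1/2)).mul_left _

lemma Gfun_tsum (j : ℕ) : ∑' k : ℕ, Gfun j k = Real.exp (1/2) / 2^j := by
  have hinj : Function.Injective (fun m : ℕ => m + j) := add_left_injective j
  have hsupp : Function.support (Gfun j) ⊆ Set.range (fun m : ℕ => m + j) := by
    intro x hx
    by_contra h
    exact hx (Gfun_zero h)
  rw [← Function.Injective.tsum_eq hinj hsupp]
  have h1 : ∀ m : ℕ, Gfun j (m + j) = (1/2:ℝ)^j * ((1/2:ℝ)^m / m.factorial) := Gfun_shift j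
  rw [tsum_congr h1, tsum_mul_left]
  have hexp : ∑' m : ℕ, (1/2:ℝ)^m / m.factorial = Real.exp (1/2) := by
    rw [Real.exp_eq_exp_ℝ, NormedSpace.exp_eq_tsum_div]
  rw [hexp]
  have h2 : ((1:ℝ)/2)^j = 1/2^j := by rw [div_pow, one_pow]
  rw [h2]
  ring

end S8


/-- The number of `Bₙ`-partitions without zero-block:
`Nₙ = (1/√e) Σ_{k≥0} (2k)ⁿ/(2k)!!`. -/
theorem stmt8 (n : ℕ) (hn : 1 ≤ n) :
    Summable (fun k : ℕ => ((2 * k : ℕ) : ℝ) ^ n / ((2 : ℝ) ^ k * k.factorial)) ∧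
    (Set.ncard {π : Finset (Finset ℤ) | IsBnPartition n π ∧ NoZeroBlock π} : ℝ)
      = (1 / Real.sqrt (Real.exp 1))
        * ∑' k : ℕ, ((2 * k : ℕ) : ℝ) ^ n / ((2 : ℝ) ^ k * k.factorial) := by
  classical
  have hn0 : 0 < n := hn
  set T : ℕ → ℝ := fun k => ((2 * k : ℕ) : ℝ) ^ n / ((2 : ℝ) ^ k * k.factorial) with hT
  have hpoint : ∀ k : ℕ, T k = ∑ π ∈ S8.PFin n,
      (2:ℝ)^((S8.Rset π).card) * S8.Gfun ((S8.Rset π).card) k := by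
    intro k
    have hc := S8.count_all n k hn0
    have hcast : ((2 * k : ℕ) : ℝ) ^ n = ((((2*k)^n : ℕ)) : ℝ) := by push_cast; ring
    show ((2 * k : ℕ) : ℝ) ^ n / ((2 : ℝ) ^ k * k.factorial) = _
    rw [hcast, hc]
    push_cast
    rw [Finset.sum_div]
    refine Finset.sum_congr rfl fun π _ => ?_
    rw [S8.Gfun]
    ring
  have hsummand : ∀ π ∈ S8.PFin n,
      Summable (fun k => (2:ℝ)^((S8.Rset π).card) * S8.Gfun ((S8.Rset π).card) k) :=
    fun π _ => (S8.Gfun_summable _).mul_left _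
  have hsum : Summable T := by
    rw [funext hpoint]
    exact summable_sum hsummand
  refine ⟨hsum, ?_⟩
  have htsum : ∑' k, T k = (S8.PFin n).card * Real.exp (1/2) := by
    rw [tsum_congr hpoint, Summable.tsum_finsetSum hsummand]
    have hterm : ∀ π ∈ S8.PFin n,
        ∑' k, (2:ℝ)^((S8.Rset π).card) * S8.Gfun ((S8.Rset π).card) k = Real.exp (1/2) := by
      intro π _
      rw [tsum_mul_left, S8.Gfun_tsum]
      field_simp
    rw [Finset.sum_congr rfl hterm, Finset.sum_const, nsmul_eq_mul]
  have hncard : (Set.ncard {π : Finset (Finset ℤ) | IsBnPartition n π ∧ NoZeroBlock π})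
      = (S8.PFin n).card := by
    have hset : {π : Finset (Finset ℤ) | IsBnPartition n π ∧ NoZeroBlock π}
        = ↑(S8.PFin n) := by
      ext π
      simp [S8.mem_PFin]
    rw [hset, Set.ncard_coe_finset]
  have hsqrt : Real.sqrt (Real.exp 1) = Real.exp (1/2) := by
    rw [show Real.exp 1 = Real.exp (1/2) * Real.exp (1/2) by rw [← Real.exp_add]; norm_num]
    exact Real.sqrt_mul_self (Real.exp_nonneg _)
  rw [hncard, htsum, hsqrt]
  have hne := Real.exp_ne_zero (1/2)
  field_simp
end
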